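/- arXiv:2509.06909 — 7 statements merged into one kernel-verified Lean document; each statement's English description precedes it below -/
import Mathlib

section
/- Let (a_n) be an injective sequence of integers. Then for Lebesgue almost every x ∈ ℝ, the sequence (a_n x) is uniformly distributed modulo 1. -/
open Filter MeasureTheory Set
open scoped Topology

noncomputable def weylAvg (u : ℕ → ℝ) (N : ℕ) : ℂ :=
  (N : ℂ)⁻¹ * ∑ n ∈ Finset.Icc 1 N, Complex.exp (2 * Real.pi * Complex.I * (u n : ℂ))

/-- Weyl criterion: `(u n)` is uniformly distributed mod 1. -/
def UDmod1 (u : ℕ → ℝ) : Prop :=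
  ∀ k : ℤ, k ≠ 0 → Tendsto (fun N => weylAvg (fun n => (k : ℝ) * u n) N) atTop (nhds 0)

noncomputable def scatterSum (a : ℕ → ℝ) (δ : ℝ) (N : ℕ) : ℝ :=
  ((N : ℝ) ^ 2)⁻¹ * ∑ n ∈ Finset.Icc 1 N, ∑ m ∈ Finset.Ico 1 n,
    (if a n = a m then 1 else min (|a n - a m| ^ (-δ)) 1)

def IsDeltaScattered (a : ℕ → ℝ) (δ : ℝ) : Prop :=
  ∃ ε > 0, ∀ᶠ N : ℕ in atTop, scatterSum a δ N ≤ ((Real.log N) ^ ((1 : ℝ) + ε))⁻¹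

def IsScattered (a : ℕ → ℝ) : Prop := ∀ δ : ℝ, 0 < δ → δ ≤ 1 → IsDeltaScattered a δ

noncomputable def WSsum (b : ℕ → ℤ) (N : ℕ) (x : ℝ) : ℂ :=
  ∑ n ∈ Finset.Ioc 0 N, Complex.exp (2 * Real.pi * Complex.I * (b n) * x)

noncomputable def WS (b : ℕ → ℤ) (N : ℕ) (x : ℝ) : ℂ := (N : ℂ)⁻¹ * WSsum b N x

lemma integral_e_int (m : ℤ) (hm : m ≠ 0) :
    ∫ x in (0:ℝ)..1, Complex.exp (2 * Real.pi * Complex.I * m * x) = 0 := by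
  have hc : (2 * (Real.pi:ℂ) * Complex.I * m) ≠ 0 := by
    simp [Real.pi_ne_zero, Complex.I_ne_zero, hm]
  rw [show (fun x : ℝ => Complex.exp (2 * Real.pi * Complex.I * m * x)) =
      (fun x : ℝ => Complex.exp ((2 * Real.pi * Complex.I * m) * x)) from rfl,
    integral_exp_mul_complex hc]
  have : Complex.exp (2 * Real.pi * Complex.I * m * (1:ℝ)) = 1 := by
    rw [show (2 * (Real.pi:ℂ) * Complex.I * m * (1:ℝ)) = m * (2 * Real.pi * Complex.I) by
      push_cast; ring]
    exact Complex.exp_int_mul_two_pi_mul_I m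
  push_cast at this
  rw [mul_one] at this
  push_cast
  rw [mul_one, this]
  simp


lemma l2 (b : ℕ → ℤ) (hb : Function.Injective b) (N : ℕ) :
    ∫ x in (0:ℝ)..1, (‖WSsum b N x‖^2 : ℝ) = N := by
  simp only [WSsum]
  set S : ℝ → ℂ := fun x => ∑ n ∈ Finset.Ioc 0 N, Complex.exp (2 * Real.pi * Complex.I * (b n) * x) with hS
  have expand : ∀ x : ℝ, S x * (starRingEnd ℂ) (S x) =
      ∑ n ∈ Finset.Ioc 0 N, ∑ m ∈ Finset.Ioc 0 N,
        Complex.exp (2 * Real.pi * Complex.I * ((b n : ℂ) - (b m : ℂ)) * x) := by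
    intro x
    rw [hS]
    simp only [map_sum, Finset.sum_mul_sum]
    refine Finset.sum_congr rfl fun n _ => Finset.sum_congr rfl fun m _ => ?_
    rw [← Complex.exp_conj, ← Complex.exp_add]
    congr 1
    simp only [map_mul, Complex.conj_I, Complex.conj_ofReal, map_intCast, map_ofNat]
    ring
  have key : (∫ x in (0:ℝ)..1, S x * (starRingEnd ℂ) (S x)) = (N : ℂ) := by
    simp only [expand]
    rw [intervalIntegral.integral_finset_sum]
    · have : ∀ n ∈ Finset.Ioc 0 N,
          (∫ x in (0:ℝ)..1, ∑ m ∈ Finset.Ioc 0 N,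
            Complex.exp (2 * Real.pi * Complex.I * ((b n : ℂ) - (b m : ℂ)) * x)) = 1 := by
        intro n hn
        rw [intervalIntegral.integral_finset_sum]
        · have hterm : ∀ m ∈ Finset.Ioc 0 N,
              (∫ x in (0:ℝ)..1, Complex.exp (2 * Real.pi * Complex.I * ((b n : ℂ) - (b m : ℂ)) * x))
              = if m = n then 1 else 0 := by
            intro m _
            rcases eq_or_ne m n with h | h
            · simp [h]
            · rw [if_neg h]
              have hbm : b n - b m ≠ 0 := sub_ne_zero.mpr (fun hh => h (hb hh).symm)
              have := integral_e_int (b n - b m) hbm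
              push_cast at this
              exact this
          rw [Finset.sum_congr rfl hterm, Finset.sum_ite_eq']
          simp only [if_pos hn]
        · intro m _
          exact (Continuous.intervalIntegrable (by fun_prop) _ _)
      rw [Finset.sum_congr rfl this]
      simp
    · intro n _
      apply Continuous.intervalIntegrable
      apply continuous_finset_sum
      intro m _
      fun_prop
  have cast : ∀ x : ℝ, ((‖S x‖^2 : ℝ) : ℂ) = S x * (starRingEnd ℂ) (S x) := by
    intro x
    rw [Complex.mul_conj, Complex.normSq_eq_norm_sq]
  have h1 : (∫ x in (0:ℝ)..1, ((‖S x‖^2 : ℝ) : ℂ)) = ((N : ℝ) : ℂ) := by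
    simp only [cast]
    rw [key]; push_cast; ring
  rw [intervalIntegral.integral_ofReal] at h1
  exact Complex.ofReal_inj.mp h1


lemma WS_continuous (b : ℕ → ℤ) (N : ℕ) : Continuous (fun x => WS b N x) := by
  unfold WS WSsum; fun_prop

lemma l2' (b : ℕ → ℤ) (hb : Function.Injective b) (N : ℕ) (hN : 1 ≤ N) :
    ∫ x in Ioc (0:ℝ) 1, (‖WS b N x‖^2 : ℝ) = (N : ℝ)⁻¹ := by
  have hNR : (0:ℝ) < N := by exact_mod_cast hN
  have : ∀ x : ℝ, (‖WS b N x‖^2 : ℝ) = ((N:ℝ)^2)⁻¹ * ‖WSsum b N x‖^2 := by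
    intro x
    rw [WS, norm_mul, mul_pow, norm_inv, Complex.norm_natCast, inv_pow]
  simp only [this]
  rw [MeasureTheory.integral_const_mul,
    ← intervalIntegral.integral_of_le (by norm_num : (0:ℝ) ≤ 1), l2 b hb N]
  field_simp

lemma norm_term_one (b : ℕ → ℤ) (n : ℕ) (x : ℝ) :
    ‖Complex.exp (2 * Real.pi * Complex.I * (b n) * x)‖ = 1 := by
  rw [show (2 * (Real.pi:ℂ) * Complex.I * (b n) * x) = ((2 * Real.pi * (b n) * x : ℝ) : ℂ) * Complex.I
    by push_cast; ring]
  exact Complex.norm_exp_ofReal_mul_I _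

lemma sqrt_tendsto : Tendsto Nat.sqrt atTop atTop := by
  refine tendsto_atTop.mpr fun k => eventually_atTop.2 ⟨k^2, fun N hN => Nat.le_sqrt.mpr ?_⟩
  calc k * k = k^2 := by ring
  _ ≤ N := hN

/-- interpolation between squares -/
lemma interp (b : ℕ → ℤ) (x : ℝ)
    (h : Tendsto (fun M => ‖WS b (M^2) x‖) atTop (𝓝 0)) :
    Tendsto (fun N => WS b N x) atTop (𝓝 0) := by
  refine squeeze_zero_norm'
    (a := fun N => ‖WS b ((Nat.sqrt N)^2) x‖ + 2 / (Nat.sqrt N : ℝ)) ?_ ?_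
  · filter_upwards [eventually_ge_atTop 1] with N hN
    set M := Nat.sqrt N with hM
    have hM1 : 1 ≤ M := by
      rw [hM, Nat.one_le_iff_ne_zero, ← Nat.pos_iff_ne_zero, Nat.sqrt_pos]
      exact hN
    have hMN : M^2 ≤ N := by
      rw [hM]; exact Nat.sqrt_le' N
    have hNM : N ≤ M^2 + 2*M := by
      have h := Nat.lt_succ_sqrt' N
      rw [← hM] at h
      nlinarith [h]
    -- real versions
    have hM1R : (1:ℝ) ≤ M := by exact_mod_cast hM1
    have hMNR : ((M:ℝ))^2 ≤ N := by exact_mod_cast hMN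
    have hNMR : (N:ℝ) ≤ (M:ℝ)^2 + 2*M := by exact_mod_cast hNM
    have hNR : (0:ℝ) < N := lt_of_lt_of_le one_pos (by exact_mod_cast hN)
    have hMR : (0:ℝ) < M := lt_of_lt_of_le one_pos hM1R
    -- norm of tail
    have htail : ‖WSsum b N x - WSsum b (M^2) x‖ ≤ (N:ℝ) - (M:ℝ)^2 := by
      have hsplit : WSsum b (M^2) x + ∑ n ∈ Finset.Ioc (M^2) N,
          Complex.exp (2 * Real.pi * Complex.I * (b n) * x) = WSsum b N x := by
        rw [WSsum, WSsum]
        exact Finset.sum_Ioc_consecutive _ (Nat.zero_le _) hMN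
      rw [← hsplit]
      simp only [add_sub_cancel_left]
      calc ‖∑ n ∈ Finset.Ioc (M^2) N, Complex.exp (2 * Real.pi * Complex.I * (b n) * x)‖
          ≤ ∑ n ∈ Finset.Ioc (M^2) N, ‖Complex.exp (2 * Real.pi * Complex.I * (b n) * x)‖ :=
            norm_sum_le _ _
        _ = ∑ n ∈ Finset.Ioc (M^2) N, (1:ℝ) := by
            exact Finset.sum_congr rfl fun n _ => norm_term_one b n x
        _ = ((N - M^2 : ℕ) : ℝ) := by
            rw [Finset.sum_const, Nat.card_Ioc]; simp
        _ = (N:ℝ) - (M:ℝ)^2 := by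
            push_cast [Nat.cast_sub hMN]; ring
    have hT : ‖WSsum b N x‖ ≤ ‖WSsum b (M^2) x‖ + ((N:ℝ) - (M:ℝ)^2) := by
      calc ‖WSsum b N x‖ = ‖WSsum b (M^2) x + (WSsum b N x - WSsum b (M^2) x)‖ := by ring_nf
      _ ≤ ‖WSsum b (M^2) x‖ + ‖WSsum b N x - WSsum b (M^2) x‖ := norm_add_le _ _
      _ ≤ _ := by linarith
    have hWN : ‖WS b N x‖ = ‖WSsum b N x‖ / N := by
      rw [WS, norm_mul, norm_inv, Complex.norm_natCast, div_eq_inv_mul]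
    have hWM : ‖WSsum b (M^2) x‖ = (M:ℝ)^2 * ‖WS b (M^2) x‖ := by
      rw [WS, norm_mul, norm_inv, Complex.norm_natCast]
      push_cast
      field_simp
    rw [hWN, div_le_iff₀ hNR]
    have h2M : 2/(M:ℝ) * (M:ℝ)^2 = 2*(M:ℝ) := by field_simp
    rw [hWM] at hT
    nlinarith [hT, mul_nonneg (norm_nonneg (WS b (M^2) x)) (sub_nonneg.mpr hMNR),
      mul_nonneg (by positivity : (0:ℝ) ≤ 2/(M:ℝ)) (sub_nonneg.mpr hMNR)]
  · have h1 : Tendsto (fun N => ‖WS b ((Nat.sqrt N)^2) x‖) atTop (𝓝 0) :=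
      h.comp sqrt_tendsto
    have h2 : Tendsto (fun N => 2 / (Nat.sqrt N : ℝ)) atTop (𝓝 0) := by
      have := (tendsto_const_div_atTop_nhds_zero_nat (2:ℝ)).comp sqrt_tendsto
      exact this
    simpa using h1.add h2

lemma summable_inv_sq : Summable (fun M : ℕ => (((M:ℝ)+1)^2)⁻¹) := by
  have h := Real.summable_one_div_nat_pow.mpr (le_refl 2)
  have := (summable_nat_add_iff 1).mpr h
  simpa [one_div] using this

/-- a.e. convergence on (0,1] -/
lemma ae_Ioc (b : ℕ → ℤ) (hb : Function.Injective b) :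
    ∀ᵐ x ∂(volume.restrict (Ioc (0:ℝ) 1)),
      Tendsto (fun N => WS b N x) atTop (𝓝 0) := by
  set μ := volume.restrict (Ioc (0:ℝ) 1) with hμ
  have hmeas : ∀ M : ℕ, Measurable fun x => ENNReal.ofReal (‖WS b ((M+1)^2) x‖^2) :=
    fun M => (((WS_continuous b ((M+1)^2)).norm.pow 2).measurable).ennreal_ofReal
  have hint : ∀ M : ℕ, ∫⁻ x, ENNReal.ofReal (‖WS b ((M+1)^2) x‖^2) ∂μ
      = ENNReal.ofReal ((((M:ℝ)+1)^2)⁻¹) := by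
    intro M
    rw [← ofReal_integral_eq_lintegral_ofReal]
    · congr 1
      have := l2' b hb ((M+1)^2) (Nat.one_le_iff_ne_zero.mpr (by positivity))
      rw [hμ]
      rw [this]
      push_cast
      ring
    · exact ((WS_continuous b ((M+1)^2)).norm.pow 2).integrableOn_Ioc
    · exact Eventually.of_forall fun x => by positivity
  have hfin : ∫⁻ x, ∑' M, ENNReal.ofReal (‖WS b ((M+1)^2) x‖^2) ∂μ ≠ ⊤ := by
    rw [MeasureTheory.lintegral_tsum (fun M => (hmeas M).aemeasurable)]
    simp_rw [hint]
    rw [← ENNReal.ofReal_tsum_of_nonneg (fun M => by positivity) summable_inv_sq]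
    exact ENNReal.ofReal_ne_top
  have hae : ∀ᵐ x ∂μ, ∑' M, ENNReal.ofReal (‖WS b ((M+1)^2) x‖^2) ≠ ⊤ := by
    have := MeasureTheory.ae_lt_top (Measurable.ennreal_tsum hmeas) hfin
    filter_upwards [this] with x hx using hx.ne
  filter_upwards [hae] with x hx
  have h0 : Tendsto (fun M => ENNReal.ofReal (‖WS b ((M+1)^2) x‖^2)) atTop (𝓝 0) :=
    ENNReal.tendsto_atTop_zero_of_tsum_ne_top hx
  have h1 : Tendsto (fun M => (‖WS b ((M+1)^2) x‖^2 : ℝ)) atTop (𝓝 0) := by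
    have h := (ENNReal.tendsto_toReal (by simp)).comp h0
    have h' := h.congr fun M => ENNReal.toReal_ofReal
      (by positivity : (0:ℝ) ≤ ‖WS b ((M+1)^2) x‖^2)
    simpa using h'
  have h2 : Tendsto (fun M => ‖WS b ((M+1)^2) x‖) atTop (𝓝 0) := by
    have := (Real.continuous_sqrt.tendsto 0).comp h1
    simpa [Real.sqrt_sq (norm_nonneg _)] using
      this.congr fun M => Real.sqrt_sq (norm_nonneg _)
  have h3 : Tendsto (fun M => ‖WS b (M^2) x‖) atTop (𝓝 0) :=
    (tendsto_add_atTop_iff_nat 1).mp h2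
  exact interp b x h3

lemma WS_periodic (b : ℕ → ℤ) (N : ℕ) (x : ℝ) (m : ℤ) :
    WS b N (x + m) = WS b N x := by
  rw [WS, WS, WSsum, WSsum]
  congr 1
  refine Finset.sum_congr rfl fun n _ => ?_
  rw [show ((x + m : ℝ) : ℂ) = (x : ℂ) + (m : ℂ) by push_cast; ring]
  rw [mul_add, Complex.exp_add]
  rw [show (2 * (Real.pi:ℂ) * Complex.I * (b n) * m) = (b n * m : ℤ) * (2 * Real.pi * Complex.I)
    by push_cast; ring]
  rw [Complex.exp_int_mul_two_pi_mul_I, mul_one]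

/-- extend to all of ℝ -/
lemma ae_all (b : ℕ → ℤ) (hb : Function.Injective b) :
    ∀ᵐ x ∂(volume : Measure ℝ), Tendsto (fun N => WS b N x) atTop (𝓝 0) := by
  set B : Set ℝ := {x | ¬ Tendsto (fun N => WS b N x) atTop (𝓝 0)} with hB
  have h01 : volume (B ∩ Ioc (0:ℝ) 1) = 0 := by
    have := ae_Ioc b hb
    rw [ae_iff, Measure.restrict_apply' measurableSet_Ioc] at this
    exact this
  rw [ae_iff]
  have hsub : B ⊆ ⋃ m : ℤ, B ∩ Ioc (m : ℝ) (m + 1) := by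
    intro x hx
    refine mem_iUnion.mpr ⟨⌈x⌉ - 1, hx, ?_, ?_⟩
    · push_cast; linarith [Int.ceil_lt_add_one x, Int.sub_one_lt_iff.mpr (le_refl (⌈x⌉)),
        Int.le_ceil x]
    · push_cast; linarith [Int.le_ceil x]
  refine measure_mono_null hsub (measure_iUnion_null fun m => ?_)
  have hvol : ∀ (A : Set ℝ) (c : ℝ), volume ((fun x => x + c) ⁻¹' A) = volume A := by
    intro A c
    rw [← MeasurableEmbedding.map_apply (measurableEmbedding_addRight c),
      map_add_right_eq_self]
  have hpre : B ∩ Ioc (m : ℝ) (m + 1) = (fun x => x + (-(m:ℝ))) ⁻¹' (B ∩ Ioc 0 1) := by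
    ext x
    have hx : WS b ∘ id = WS b := rfl
    have hper : ∀ N, WS b N x = WS b N (x + (-(m:ℝ))) := by
      intro N
      have h := WS_periodic b N (x + (-(m:ℝ))) m
      rw [show (x + (-(m:ℝ))) + ((m:ℤ):ℝ) = x by push_cast; ring] at h
      exact h
    simp only [mem_inter_iff, mem_preimage, mem_Ioc, hB, mem_setOf_eq]
    constructor
    · rintro ⟨h1, h2, h3⟩
      exact ⟨fun hT => h1 ((tendsto_congr hper).mpr hT), by linarith, by linarith⟩
    · rintro ⟨h1, h2, h3⟩
      exact ⟨fun hT => h1 ((tendsto_congr hper).mp hT), by linarith, by linarith⟩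
  rw [hpre, hvol _ _, h01]



lemma Icc_one_eq_Ioc (N : ℕ) : Finset.Icc 1 N = Finset.Ioc 0 N := by
  ext n; simp [Finset.mem_Icc, Finset.mem_Ioc, Nat.succ_le_iff]

theorem stmt0 (a : ℕ → ℤ) (ha : Function.Injective a) :
    ∀ᵐ x ∂(volume : Measure ℝ), UDmod1 (fun n => (a n : ℝ) * x) := by
  have key : ∀ k : ℤ, ∀ᵐ x ∂(volume : Measure ℝ), k ≠ 0 →
      Tendsto (fun N => weylAvg (fun n => (k : ℝ) * ((a n : ℝ) * x)) N) atTop (𝓝 0) := by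
    intro k
    by_cases hk : k = 0
    · exact Eventually.of_forall fun x h => absurd hk h
    · have hb : Function.Injective (fun n => k * a n) := fun n m h =>
        ha (mul_left_cancel₀ hk h)
      filter_upwards [ae_all (fun n => k * a n) hb] with x hx _
      have heq : (fun N => weylAvg (fun n => (k:ℝ) * ((a n:ℝ) * x)) N)
          = fun N => WS (fun n => k * a n) N x := by
        funext N
        rw [weylAvg, WS, WSsum, Icc_one_eq_Ioc]
        congr 1
        refine Finset.sum_congr rfl fun n _ => ?_
        congr 1
        push_cast
        ring
      rw [heq]
      exact hx
  filter_upwards [ae_all_iff.mpr key] with x hx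
  exact fun k hk => hx k hk
end

section
/- Let (a_n) be a sequence of real numbers such that there exists g > 0 with |a_n − a_m| ≥ g for all n ≠ m. Then for Lebesgue almost every x ∈ ℝ, the sequence (a_n x) is uniformly distributed modulo 1. -/
open Filter MeasureTheory Set
open scoped Topology

lemma count_close (a : ℕ → ℝ) (g : ℝ) (hg : 0 < g)
    (hsep : ∀ n m : ℕ, n ≠ m → g ≤ |a n - a m|) (N n : ℕ) (R : ℝ) (hR : 0 < R) :
    (((Finset.Icc 1 N).filter (fun m => |a n - a m| < R)).card : ℝ) ≤ 2 * (R/g) + 3 := by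
  have key : ((Finset.Icc 1 N).filter (fun m => |a n - a m| < R)).card ≤ 2 * ⌈R/g⌉₊ + 1 := by
    have := Finset.card_le_card_of_injOn (f := fun m => ⌊(a m - a n)/g⌋)
      (s := (Finset.Icc 1 N).filter (fun m => |a n - a m| < R))
      (t := Finset.Icc (-(⌈R/g⌉₊ : ℤ)) (⌈R/g⌉₊ : ℤ)) ?_ ?_
    · refine this.trans_eq ?_
      rw [Int.card_Icc]
      omega
    · intro m hm
      simp only [Finset.coe_filter, Set.mem_setOf_eq] at hm
      have h1 : |(a m - a n)/g| < R/g := by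
        rw [abs_div, abs_of_pos hg]
        exact div_lt_div_of_pos_right (by rw [abs_sub_comm]; exact hm.2) hg
      have h2 : |(a m - a n)/g| ≤ (⌈R/g⌉₊ : ℝ) := h1.le.trans (Nat.le_ceil _)
      rw [abs_le] at h2
      simp only [Finset.coe_Icc, Set.mem_Icc]
      constructor
      · exact Int.le_floor.mpr (by push_cast; linarith [h2.1])
      · have := Int.floor_le_floor h2.2
        simpa using this
    · intro m hm m' hm' hf
      by_contra hne
      have h1 := Int.abs_sub_lt_one_of_floor_eq_floor hf
      have : |a m - a m'| < g := by
        have : |(a m - a n)/g - (a m' - a n)/g| = |a m - a m'| / g := by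
          rw [div_sub_div_same, abs_div, abs_of_pos hg]
          ring_nf
        rw [this] at h1
        calc |a m - a m'| = |a m - a m'|/g * g := by field_simp
        _ < 1 * g := by exact mul_lt_mul_of_pos_right h1 hg
        _ = g := one_mul g
      exact absurd (hsep m m' hne) (not_le.mpr this)
  calc (((Finset.Icc 1 N).filter (fun m => |a n - a m| < R)).card : ℝ)
      ≤ 2 * (⌈R/g⌉₊ : ℝ) + 1 := by exact_mod_cast key
    _ ≤ 2 * (R/g + 1) + 1 := by
        have : (⌈R/g⌉₊ : ℝ) ≤ R/g + 1 :=
          (Nat.ceil_lt_add_one (div_pos hR hg).le).le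
        linarith
    _ = 2 * (R/g) + 3 := by ring

lemma osc_bound (j θ : ℝ) (hθ : θ ≠ 0) :
    ‖∫ x in (-j)..j, Complex.exp ((θ : ℂ) * Complex.I * x)‖ ≤ 2/|θ| := by
  have hc : (θ : ℂ) * Complex.I ≠ 0 :=
    mul_ne_zero (Complex.ofReal_ne_zero.mpr hθ) Complex.I_ne_zero
  rw [integral_exp_mul_complex hc]
  rw [norm_div]
  have hnorm : ∀ t : ℝ, ‖Complex.exp ((θ : ℂ) * Complex.I * t)‖ = 1 := by
    intro t
    rw [Complex.norm_exp]
    simp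
  have h1 : ‖Complex.exp ((θ:ℂ) * Complex.I * (j:ℝ)) - Complex.exp ((θ:ℂ) * Complex.I * ((-j : ℝ):ℝ))‖ ≤ 2 := by
    calc _ ≤ ‖Complex.exp ((θ:ℂ) * Complex.I * (j:ℝ))‖ + ‖Complex.exp ((θ:ℂ) * Complex.I * ((-j:ℝ):ℝ))‖ := norm_sub_le _ _
    _ = 2 := by rw [hnorm, hnorm]; norm_num
  have h2 : ‖(θ:ℂ) * Complex.I‖ = |θ| := by
    rw [norm_mul, Complex.norm_I, Complex.norm_real]; simp
  rw [h2]
  gcongr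

lemma pair_prod (p q : ℝ) :
    Complex.exp (2 * Real.pi * Complex.I * (p:ℂ)) *
      (starRingEnd ℂ) (Complex.exp (2 * Real.pi * Complex.I * (q:ℂ))) =
    Complex.exp (2 * Real.pi * Complex.I * ((p - q : ℝ):ℂ)) := by
  rw [← Complex.exp_conj, ← Complex.exp_add]
  congr 1
  have h2 : (starRingEnd ℂ) 2 = 2 := by rw [show (2:ℂ) = ((2:ℝ):ℂ) by norm_num, Complex.conj_ofReal]
  simp [map_mul, Complex.conj_I, Complex.conj_ofReal, h2]
  push_cast
  ring

lemma l2_bound (a : ℕ → ℝ) (g : ℝ) (hg : 0 < g)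
    (hsep : ∀ n m : ℕ, n ≠ m → g ≤ |a n - a m|) (k : ℤ) (hk : k ≠ 0)
    (j : ℕ) (M : ℕ) (hM : 1 ≤ M) :
    ∫ x in (-(j:ℝ))..(j:ℝ), ‖weylAvg (fun n => (k:ℝ) * (a n * x)) (M^4)‖^2 ≤
      (4*(j:ℝ)/g + 6*(j:ℝ) + 1/(Real.pi*|(k:ℝ)|)) / (M:ℝ)^2 := by
  set N : ℕ := M^4 with hN
  set R : ℝ := (M:ℝ)^2 with hRdef
  have hm1 : (1:ℝ) ≤ (M:ℝ) := by exact_mod_cast hM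
  have hmpos : (0:ℝ) < (M:ℝ) := by linarith
  have hRpos : 0 < R := by positivity
  have hNR : ((N:ℝ)) = (M:ℝ)^4 := by rw [hN]; push_cast; ring
  have hNpos : (0:ℝ) < (N:ℝ) := by rw [hNR]; positivity
  have hπ : 0 < Real.pi := Real.pi_pos
  have hkpos : 0 < |(k:ℝ)| := abs_pos.mpr (Int.cast_ne_zero.mpr hk)
  have hjnn : (0:ℝ) ≤ (j:ℝ) := Nat.cast_nonneg j
  set E : ℕ → ℝ → ℂ := fun n x =>
    Complex.exp (2 * Real.pi * Complex.I * (((k:ℝ) * (a n * x) : ℝ) : ℂ)) with hE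
  set F : ℝ → ℂ := fun x => ∑ n ∈ Finset.Icc 1 N, E n x with hF
  have hEcont : ∀ n, Continuous (fun x => E n x) := by
    intro n
    apply Complex.continuous_exp.comp
    fun_prop
  have hP : ∀ n m : ℕ, ∀ x : ℝ, E n x * (starRingEnd ℂ) (E m x) =
      Complex.exp ((((2*Real.pi*(k:ℝ)*(a n - a m)) : ℝ) : ℂ) * Complex.I * (x:ℂ)) := by
    intro n m x
    simp only [hE]
    rw [pair_prod]
    push_cast
    ring_nf
  have hint : ∀ n m : ℕ,
      IntervalIntegrable (fun x => E n x * (starRingEnd ℂ) (E m x)) volume (-(j:ℝ)) (j:ℝ) := by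
    intro n m
    exact (((hEcont n).mul ((hEcont m).star))).intervalIntegrable _ _
  -- step 1: expand the square into a double sum of integrals
  have hFx : ∀ x : ℝ, ((‖F x‖^2 : ℝ) : ℂ)
      = ∑ n ∈ Finset.Icc 1 N, ∑ m ∈ Finset.Icc 1 N, E n x * (starRingEnd ℂ) (E m x) := by
    intro x
    have h1 : ((‖F x‖^2 : ℝ) : ℂ) = F x * (starRingEnd ℂ) (F x) := by
      rw [Complex.mul_conj]
      norm_cast
      rw [← Complex.sq_norm]
    rw [h1]
    simp only [hF]
    rw [map_sum, Finset.sum_mul_sum]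
  have key1 : ((∫ x in (-(j:ℝ))..(j:ℝ), ‖F x‖^2 : ℝ) : ℂ)
      = ∑ n ∈ Finset.Icc 1 N, ∑ m ∈ Finset.Icc 1 N,
          ∫ x in (-(j:ℝ))..(j:ℝ), E n x * (starRingEnd ℂ) (E m x) := by
    calc ((∫ x in (-(j:ℝ))..(j:ℝ), ‖F x‖^2 : ℝ) : ℂ)
        = ∫ x in (-(j:ℝ))..(j:ℝ), ((‖F x‖^2 : ℝ) : ℂ) :=
          (intervalIntegral.integral_ofReal).symm
      _ = ∫ x in (-(j:ℝ))..(j:ℝ), ∑ n ∈ Finset.Icc 1 N, ∑ m ∈ Finset.Icc 1 N,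
            E n x * (starRingEnd ℂ) (E m x) :=
          intervalIntegral.integral_congr fun x _ => hFx x
      _ = ∑ n ∈ Finset.Icc 1 N, ∑ m ∈ Finset.Icc 1 N,
            ∫ x in (-(j:ℝ))..(j:ℝ), E n x * (starRingEnd ℂ) (E m x) := by
          calc ∫ x in (-(j:ℝ))..(j:ℝ), ∑ n ∈ Finset.Icc 1 N, ∑ m ∈ Finset.Icc 1 N,
                E n x * (starRingEnd ℂ) (E m x)
              = ∑ n ∈ Finset.Icc 1 N, ∫ x in (-(j:ℝ))..(j:ℝ), ∑ m ∈ Finset.Icc 1 N,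
                E n x * (starRingEnd ℂ) (E m x) :=
                intervalIntegral.integral_finset_sum
                  (fun n _ => (continuous_finset_sum _ fun m _ =>
                    (hEcont n).mul ((hEcont m).star)).intervalIntegrable _ _)
            _ = ∑ n ∈ Finset.Icc 1 N, ∑ m ∈ Finset.Icc 1 N,
                ∫ x in (-(j:ℝ))..(j:ℝ), E n x * (starRingEnd ℂ) (E m x) :=
                Finset.sum_congr rfl fun n _ =>
                  intervalIntegral.integral_finset_sum (fun m _ => hint n m)
  have habs : (∫ x in (-(j:ℝ))..(j:ℝ), ‖F x‖^2)
      ≤ ∑ n ∈ Finset.Icc 1 N, ∑ m ∈ Finset.Icc 1 N,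
          ‖∫ x in (-(j:ℝ))..(j:ℝ), E n x * (starRingEnd ℂ) (E m x)‖ := by
    have h0 : 0 ≤ ∫ x in (-(j:ℝ))..(j:ℝ), ‖F x‖^2 :=
      intervalIntegral.integral_nonneg (by linarith) (fun x _ => sq_nonneg _)
    set Isq : ℝ := ∫ x in (-(j:ℝ))..(j:ℝ), ‖F x‖^2 with hIsq
    calc Isq = ‖(Isq : ℂ)‖ := by rw [Complex.norm_real, Real.norm_eq_abs, abs_of_nonneg h0]
      _ = ‖∑ n ∈ Finset.Icc 1 N, ∑ m ∈ Finset.Icc 1 N,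
            ∫ x in (-(j:ℝ))..(j:ℝ), E n x * (starRingEnd ℂ) (E m x)‖ := by
          rw [hIsq, key1]
      _ ≤ _ := (norm_sum_le _ _).trans (Finset.sum_le_sum fun n _ => norm_sum_le _ _)
  -- step 2: per-term bound
  have hterm : ∀ n m : ℕ,
      ‖∫ x in (-(j:ℝ))..(j:ℝ), E n x * (starRingEnd ℂ) (E m x)‖
        ≤ if |a n - a m| < R then 2*(j:ℝ) else 1/(Real.pi*|(k:ℝ)| * R) := by
    intro n m
    by_cases hcl : |a n - a m| < R
    · rw [if_pos hcl]
      have hb : ∀ x ∈ Set.uIoc (-(j:ℝ)) (j:ℝ), ‖E n x * (starRingEnd ℂ) (E m x)‖ ≤ 1 := by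
        intro x _
        rw [hP n m x, Complex.norm_exp]
        simp
      have := intervalIntegral.norm_integral_le_of_norm_le_const hb
      simpa [abs_of_nonneg, two_mul, hjnn] using this.trans_eq (by
        rw [sub_neg_eq_add, abs_of_nonneg (by linarith : (0:ℝ) ≤ (j:ℝ) + (j:ℝ))]
        ring)
    · rw [if_neg hcl]
      push_neg at hcl
      have hdpos : 0 < |a n - a m| := lt_of_lt_of_le hRpos hcl
      set θ : ℝ := 2*Real.pi*(k:ℝ)*(a n - a m) with hθdef
      have hθabs : |θ| = 2*Real.pi*|(k:ℝ)| * |a n - a m| := by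
        rw [hθdef, abs_mul, abs_mul, abs_mul]
        rw [abs_of_pos hπ, abs_two]
      have hθ : θ ≠ 0 := by
        intro h
        rw [h, abs_zero] at hθabs
        have hpos : 0 < 2*Real.pi*|(k:ℝ)| * |a n - a m| := by positivity
        linarith
      have heq : (∫ x in (-(j:ℝ))..(j:ℝ), E n x * (starRingEnd ℂ) (E m x))
          = ∫ x in (-(j:ℝ))..(j:ℝ), Complex.exp ((θ:ℂ) * Complex.I * x) :=
        intervalIntegral.integral_congr fun x _ => hP n m x
      rw [heq]
      refine (osc_bound (j:ℝ) θ hθ).trans ?_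
      rw [hθabs]
      have e1 : 2/(2*Real.pi*|(k:ℝ)| * |a n - a m|) = 1/(Real.pi*|(k:ℝ)| * |a n - a m|) := by
        field_simp
      rw [e1]
      gcongr
  -- step 3: sum things up
  have hcard : ((Finset.Icc 1 N).card : ℝ) = (N:ℝ) := by
    rw [Nat.card_Icc]; push_cast; ring
  have hsum : ∑ n ∈ Finset.Icc 1 N, ∑ m ∈ Finset.Icc 1 N,
      (if |a n - a m| < R then 2*(j:ℝ) else 1/(Real.pi*|(k:ℝ)| * R))
      ≤ (N:ℝ) * (2*(j:ℝ)*(2*(R/g)+3) + (N:ℝ)*(1/(Real.pi*|(k:ℝ)| * R))) := by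
    have hinner : ∀ n : ℕ, ∑ m ∈ Finset.Icc 1 N,
        (if |a n - a m| < R then 2*(j:ℝ) else 1/(Real.pi*|(k:ℝ)| * R))
        ≤ 2*(j:ℝ)*(2*(R/g)+3) + (N:ℝ)*(1/(Real.pi*|(k:ℝ)| * R)) := by
      intro n
      rw [Finset.sum_ite]
      rw [Finset.sum_const, Finset.sum_const, nsmul_eq_mul, nsmul_eq_mul]
      have h1 : (((Finset.Icc 1 N).filter (fun m => |a n - a m| < R)).card : ℝ)
          ≤ 2*(R/g)+3 := count_close a g hg hsep N n R hRpos
      have h2 : (((Finset.Icc 1 N).filter (fun m => ¬ |a n - a m| < R)).card : ℝ) ≤ (N:ℝ) := by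
        rw [← hcard]
        exact_mod_cast Finset.card_filter_le _ _
      have hc1 : (0:ℝ) ≤ 1/(Real.pi*|(k:ℝ)| * R) := by positivity
      nlinarith [(show (0:ℝ) ≤ (((Finset.Icc 1 N).filter (fun m => |a n - a m| < R)).card : ℝ) from Nat.cast_nonneg _)]
    calc _ ≤ ∑ _n ∈ Finset.Icc 1 N, (2*(j:ℝ)*(2*(R/g)+3) + (N:ℝ)*(1/(Real.pi*|(k:ℝ)| * R))) :=
          Finset.sum_le_sum fun n _ => hinner n
      _ = (N:ℝ) * (2*(j:ℝ)*(2*(R/g)+3) + (N:ℝ)*(1/(Real.pi*|(k:ℝ)| * R))) := by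
          rw [Finset.sum_const, nsmul_eq_mul, hcard]
  -- step 4: rescale
  have hT : (fun x => ‖weylAvg (fun n => (k:ℝ) * (a n * x)) N‖^2)
      = fun x => ((N:ℝ)^2)⁻¹ * ‖F x‖^2 := by
    funext x
    simp only [weylAvg]
    rw [norm_mul, norm_inv, Complex.norm_natCast, mul_pow, inv_pow]
  have hmain : ∫ x in (-(j:ℝ))..(j:ℝ), ‖weylAvg (fun n => (k:ℝ) * (a n * x)) N‖^2
      = ((N:ℝ)^2)⁻¹ * ∫ x in (-(j:ℝ))..(j:ℝ), ‖F x‖^2 := by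
    rw [hT, intervalIntegral.integral_const_mul]
  rw [hmain]
  have hF2 : (∫ x in (-(j:ℝ))..(j:ℝ), ‖F x‖^2)
      ≤ (N:ℝ) * (2*(j:ℝ)*(2*(R/g)+3) + (N:ℝ)*(1/(Real.pi*|(k:ℝ)| * R))) :=
    habs.trans ((Finset.sum_le_sum fun n _ => Finset.sum_le_sum fun m _ => hterm n m).trans hsum)
  calc ((N:ℝ)^2)⁻¹ * ∫ x in (-(j:ℝ))..(j:ℝ), ‖F x‖^2
      ≤ ((N:ℝ)^2)⁻¹ * ((N:ℝ) * (2*(j:ℝ)*(2*(R/g)+3) + (N:ℝ)*(1/(Real.pi*|(k:ℝ)| * R)))) := by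
        have : (0:ℝ) ≤ ((N:ℝ)^2)⁻¹ := by positivity
        exact mul_le_mul_of_nonneg_left hF2 this
    _ ≤ (4*(j:ℝ)/g + 6*(j:ℝ) + 1/(Real.pi*|(k:ℝ)|)) / (M:ℝ)^2 := by
        rw [hNR, hRdef]
        have hM24 : (M:ℝ)^2 ≤ (M:ℝ)^4 := pow_le_pow_right₀ hm1 (by norm_num)
        have e2 : (((M:ℝ)^4)^2)⁻¹ * ((M:ℝ)^4 * (2*(j:ℝ)*(2*((M:ℝ)^2/g)+3)
              + (M:ℝ)^4*(1/(Real.pi*|(k:ℝ)| * (M:ℝ)^2))))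
            = 4*(j:ℝ)/(g*(M:ℝ)^2) + 6*(j:ℝ)/(M:ℝ)^4 + 1/(Real.pi*|(k:ℝ)| * (M:ℝ)^2) := by
          field_simp
          ring
        rw [e2]
        have h6 : 6*(j:ℝ)/(M:ℝ)^4 ≤ 6*(j:ℝ)/(M:ℝ)^2 := by
          gcongr
        have e3 : 4*(j:ℝ)/(g*(M:ℝ)^2) = (4*(j:ℝ)/g)/(M:ℝ)^2 := by
          rw [div_div]
        have e4 : 1/(Real.pi*|(k:ℝ)| * (M:ℝ)^2) = (1/(Real.pi*|(k:ℝ)|))/(M:ℝ)^2 := by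
          rw [div_div]
        have e5 : (4*(j:ℝ)/g + 6*(j:ℝ) + 1/(Real.pi*|(k:ℝ)|)) / (M:ℝ)^2
            = (4*(j:ℝ)/g)/(M:ℝ)^2 + (6*(j:ℝ))/(M:ℝ)^2 + (1/(Real.pi*|(k:ℝ)|))/(M:ℝ)^2 := by
          field_simp
        rw [e3, e4, e5]
        have : 6*(j:ℝ)/(M:ℝ)^2 = (6*(j:ℝ))/(M:ℝ)^2 := rfl
        linarith

lemma sqrt_sqrt_tendsto : Tendsto (fun N : ℕ => Nat.sqrt (Nat.sqrt N)) atTop atTop := by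
  apply tendsto_atTop_atTop.mpr
  intro b
  refine ⟨(b*b)*(b*b), fun n hn => ?_⟩
  have h1 : b*b ≤ Nat.sqrt n := Nat.le_sqrt.mpr hn
  exact Nat.le_sqrt.mpr h1

lemma fill_lemma (u : ℕ → ℝ)
    (h : Tendsto (fun M => weylAvg u (M^4)) atTop (𝓝 0)) :
    Tendsto (fun N => weylAvg u N) atTop (𝓝 0) := by
  set E : ℕ → ℂ := fun n => Complex.exp (2 * Real.pi * Complex.I * (u n : ℂ)) with hE
  set S : ℕ → ℂ := fun N => ∑ n ∈ Finset.Icc 1 N, E n with hS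
  have hnorm1 : ∀ n, ‖E n‖ = 1 := by
    intro n
    rw [hE, Complex.norm_exp]
    simp
  have hWS : ∀ N : ℕ, ‖weylAvg u N‖ = ‖S N‖ / (N:ℝ) := by
    intro N
    rw [weylAvg, norm_mul, norm_inv, Complex.norm_natCast, inv_mul_eq_div]
  have hSd : ∀ q N : ℕ, q ≤ N → ‖S N‖ ≤ ‖S q‖ + ((N:ℝ) - (q:ℝ)) := by
    intro q N hqN
    have hsplit : S q + ∑ n ∈ Finset.Ioc q N, E n = S N := by
      simp only [hS]
      rw [show Finset.Icc 1 q = Finset.Ioc 0 q from Finset.Icc_add_one_left_eq_Ioc 0 q,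
        show Finset.Icc 1 N = Finset.Ioc 0 N from Finset.Icc_add_one_left_eq_Ioc 0 N]
      exact Finset.sum_Ioc_consecutive E (Nat.zero_le q) hqN
    have hcard : ((Finset.Ioc q N).card : ℝ) = (N:ℝ) - (q:ℝ) := by
      rw [Nat.card_Ioc]
      exact Nat.cast_sub hqN
    calc ‖S N‖ = ‖S q + ∑ n ∈ Finset.Ioc q N, E n‖ := by rw [hsplit]
      _ ≤ ‖S q‖ + ‖∑ n ∈ Finset.Ioc q N, E n‖ := norm_add_le _ _
      _ ≤ ‖S q‖ + ((N:ℝ) - (q:ℝ)) := by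
          have := norm_sum_le (Finset.Ioc q N) E
          rw [← hcard]
          gcongr
          calc ‖∑ n ∈ Finset.Ioc q N, E n‖ ≤ ∑ n ∈ Finset.Ioc q N, ‖E n‖ := this
            _ = ((Finset.Ioc q N).card : ℝ) := by simp [hnorm1]
  -- the main eventual bound
  have hbound : ∀ N : ℕ, 1 ≤ N →
      ‖weylAvg u N‖ ≤ ‖weylAvg u ((Nat.sqrt (Nat.sqrt N))^4)‖ + 15 / (Nat.sqrt (Nat.sqrt N) : ℝ) := by
    intro N hN
    set s : ℕ := Nat.sqrt (Nat.sqrt N) with hs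
    have hs1 : 1 ≤ s := Nat.le_sqrt.mpr (Nat.le_sqrt.mpr (by omega))
    set q : ℕ := s^4 with hq
    have hqN : q ≤ N := by
      have h1 : s^2 ≤ Nat.sqrt N := by
        have := Nat.sqrt_le' (Nat.sqrt N)
        simpa [hs] using this
      have h2 : (s^2)^2 ≤ (Nat.sqrt N)^2 := Nat.pow_le_pow_left h1 2
      have h3 : (Nat.sqrt N)^2 ≤ N := Nat.sqrt_le' N
      calc q = (s^2)^2 := by ring
        _ ≤ (Nat.sqrt N)^2 := h2
        _ ≤ N := h3
    have hNlt : N < (s+1)^4 := by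
      have h1 : Nat.sqrt N < (s+1)^2 := by
        have := Nat.lt_succ_sqrt (Nat.sqrt N)
        calc Nat.sqrt N < (Nat.sqrt (Nat.sqrt N)).succ * (Nat.sqrt (Nat.sqrt N)).succ := this
          _ = (s+1)^2 := by rw [hs]; simp [Nat.succ_eq_add_one]; ring
      have h2 : N < (Nat.sqrt N + 1)^2 := by
        have := Nat.lt_succ_sqrt N
        calc N < (Nat.sqrt N).succ * (Nat.sqrt N).succ := this
          _ = (Nat.sqrt N + 1)^2 := by simp [Nat.succ_eq_add_one]; ring
      calc N < (Nat.sqrt N + 1)^2 := h2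
        _ ≤ ((s+1)^2)^2 := Nat.pow_le_pow_left (by omega) 2
        _ = (s+1)^4 := by ring
    -- real versions
    have hsr : (1:ℝ) ≤ (s:ℝ) := by exact_mod_cast hs1
    have hspos : (0:ℝ) < (s:ℝ) := by linarith
    have hqr : ((q:ℝ)) = (s:ℝ)^4 := by rw [hq]; push_cast; ring
    have hqrpos : (0:ℝ) < (q:ℝ) := by rw [hqr]; positivity
    have hNr : (0:ℝ) < (N:ℝ) := by exact_mod_cast hN
    have hqNr : (q:ℝ) ≤ (N:ℝ) := by exact_mod_cast hqN
    have hNltr : (N:ℝ) < ((s:ℝ)+1)^4 := by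
      have : ((N:ℕ):ℝ) < (((s+1)^4 : ℕ):ℝ) := by exact_mod_cast hNlt
      push_cast at this
      linarith
    have hgap : (N:ℝ) - (q:ℝ) ≤ 15 * (s:ℝ)^3 := by
      have e1 : (s:ℝ)^2 ≤ (s:ℝ)^3 := by nlinarith
      have e2 : (s:ℝ) ≤ (s:ℝ)^3 := by nlinarith
      have e3 : (1:ℝ) ≤ (s:ℝ)^3 := by nlinarith
      have expand : ((s:ℝ)+1)^4 = (s:ℝ)^4 + 4*(s:ℝ)^3 + 6*(s:ℝ)^2 + 4*(s:ℝ) + 1 := by ring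
      linarith [hNltr, hqr.ge, hqr.le]
    calc ‖weylAvg u N‖ = ‖S N‖ / (N:ℝ) := hWS N
      _ ≤ (‖S q‖ + ((N:ℝ) - (q:ℝ))) / (N:ℝ) := by
          gcongr
          exact hSd q N hqN
      _ = ‖S q‖ / (N:ℝ) + ((N:ℝ) - (q:ℝ)) / (N:ℝ) := by ring
      _ ≤ ‖S q‖ / (q:ℝ) + (15 * (s:ℝ)^3) / (s:ℝ)^4 := by
          have t1 : ‖S q‖ / (N:ℝ) ≤ ‖S q‖ / (q:ℝ) :=
            div_le_div_of_nonneg_left (norm_nonneg _) hqrpos hqNr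
          have t2 : ((N:ℝ) - (q:ℝ))/(N:ℝ) ≤ 15*(s:ℝ)^3/(s:ℝ)^4 := by
            apply div_le_div₀ (by positivity) hgap (by positivity)
            rw [← hqr]; exact hqNr
          linarith
      _ = ‖weylAvg u q‖ + 15 / (s:ℝ) := by
          rw [hWS q]
          congr 1
          field_simp
  apply squeeze_zero_norm' (a := fun N => ‖weylAvg u ((Nat.sqrt (Nat.sqrt N))^4)‖ + 15 / (Nat.sqrt (Nat.sqrt N) : ℝ))
  · filter_upwards [eventually_ge_atTop 1] with N hN
    exact hbound N hN
  · have h1 : Tendsto (fun M : ℕ => ‖weylAvg u (M^4)‖) atTop (𝓝 0) := by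
      simpa using h.norm
    have h2 : Tendsto (fun N : ℕ => ‖weylAvg u ((Nat.sqrt (Nat.sqrt N))^4)‖) atTop (𝓝 0) :=
      h1.comp sqrt_sqrt_tendsto
    have h3 : Tendsto (fun N : ℕ => 15 / (Nat.sqrt (Nat.sqrt N) : ℝ)) atTop (𝓝 0) :=
      (tendsto_const_div_atTop_nhds_zero_nat 15).comp sqrt_sqrt_tendsto
    simpa using h2.add h3

lemma ae_j (a : ℕ → ℝ) (g : ℝ) (hg : 0 < g)
    (hsep : ∀ n m : ℕ, n ≠ m → g ≤ |a n - a m|) (k : ℤ) (hk : k ≠ 0) (j : ℕ) :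
    ∀ᵐ x ∂(volume : Measure ℝ), x ∈ Ioo (-(j:ℝ)) (j:ℝ) →
      Tendsto (fun N => weylAvg (fun n => (k:ℝ) * (a n * x)) N) atTop (𝓝 0) := by
  have hjnn : (0:ℝ) ≤ (j:ℝ) := Nat.cast_nonneg j
  set C : ℝ := 4*(j:ℝ)/g + 6*(j:ℝ) + 1/(Real.pi*|(k:ℝ)|) with hC
  have hC0 : 0 ≤ C := by positivity
  set W : ℕ → ℝ → ℂ := fun N x => weylAvg (fun n => (k:ℝ) * (a n * x)) N with hW
  have hWcont : ∀ N, Continuous (fun x => W N x) := by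
    intro N
    simp only [hW, weylAvg]
    apply Continuous.mul continuous_const
    apply continuous_finset_sum
    intro n _
    apply Complex.continuous_exp.comp
    fun_prop
  set f : ℕ → ℝ → ENNReal := fun M x => (‖W (M^4) x‖₊ : ENNReal)^2 with hf
  have hfeq : ∀ M x, f M x = ENNReal.ofReal (‖W (M^4) x‖^2) := by
    intro M x
    rw [hf, ENNReal.ofReal_pow (norm_nonneg _), ofReal_norm, enorm_eq_nnnorm]
  have hfm : ∀ M, AEMeasurable (f M) (volume.restrict (Ioo (-(j:ℝ)) (j:ℝ))) := by
    intro M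
    exact ((((hWcont (M^4)).measurable.nnnorm).coe_nnreal_ennreal).pow_const 2).aemeasurable
  have hbound : ∀ M : ℕ, ∫⁻ x in Ioo (-(j:ℝ)) (j:ℝ), f M x ≤ ENNReal.ofReal (C / (M:ℝ)^2) := by
    intro M
    rcases Nat.eq_zero_or_pos M with hM0 | hM1
    · subst hM0
      have : ∀ x : ℝ, f 0 x = 0 := by
        intro x
        simp [hf, hW, weylAvg]
      simp only [this]
      simp
    · have hle : (-(j:ℝ)) ≤ (j:ℝ) := by linarith
      have hcont2 : Continuous (fun x => ‖W (M^4) x‖^2) := ((hWcont (M^4)).norm).pow 2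
      have hInt : IntegrableOn (fun x => ‖W (M^4) x‖^2) (Ioc (-(j:ℝ)) (j:ℝ)) volume :=
        hcont2.integrableOn_Ioc
      calc ∫⁻ x in Ioo (-(j:ℝ)) (j:ℝ), f M x
          ≤ ∫⁻ x in Ioc (-(j:ℝ)) (j:ℝ), f M x := lintegral_mono_set Ioo_subset_Ioc_self
        _ = ∫⁻ x in Ioc (-(j:ℝ)) (j:ℝ), ENNReal.ofReal (‖W (M^4) x‖^2) := by
            apply lintegral_congr
            intro x
            exact hfeq M x
        _ = ENNReal.ofReal (∫ x in Ioc (-(j:ℝ)) (j:ℝ), ‖W (M^4) x‖^2) :=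
            (ofReal_integral_eq_lintegral_ofReal hInt
              (Eventually.of_forall fun x => sq_nonneg _)).symm
        _ ≤ ENNReal.ofReal (C / (M:ℝ)^2) := by
            apply ENNReal.ofReal_le_ofReal
            rw [← intervalIntegral.integral_of_le hle]
            exact l2_bound a g hg hsep k hk j M hM1
  have hsumm : Summable (fun M : ℕ => C / (M:ℝ)^2) := by
    have := (Real.summable_one_div_nat_pow.mpr (by norm_num : 1 < 2)).mul_left C
    simpa [mul_one_div, div_eq_mul_inv] using this
  have htsum : ∑' M : ℕ, ∫⁻ x in Ioo (-(j:ℝ)) (j:ℝ), f M x < ⊤ := by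
    calc ∑' M : ℕ, ∫⁻ x in Ioo (-(j:ℝ)) (j:ℝ), f M x
        ≤ ∑' M : ℕ, ENNReal.ofReal (C / (M:ℝ)^2) := ENNReal.tsum_le_tsum hbound
      _ = ENNReal.ofReal (∑' M : ℕ, C / (M:ℝ)^2) :=
          (ENNReal.ofReal_tsum_of_nonneg (fun M => div_nonneg hC0 (sq_nonneg _)) hsumm).symm
      _ < ⊤ := ENNReal.ofReal_lt_top
  have hae : ∀ᵐ x ∂(volume.restrict (Ioo (-(j:ℝ)) (j:ℝ))), ∑' M : ℕ, f M x < ⊤ := by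
    apply ae_lt_top' (AEMeasurable.ennreal_tsum hfm)
    rw [lintegral_tsum hfm]
    exact htsum.ne
  rw [← ae_restrict_iff' measurableSet_Ioo]
  filter_upwards [hae] with x hx
  have hsum2 : Summable (fun M : ℕ => ‖W (M^4) x‖^2) := by
    have h1 := ENNReal.summable_toReal hx.ne
    have h2 : (fun M : ℕ => (f M x).toReal) = fun M : ℕ => ‖W (M^4) x‖^2 := by
      funext M
      rw [hfeq M x, ENNReal.toReal_ofReal (sq_nonneg _)]
    rwa [h2] at h1
  have h1 : Tendsto (fun M : ℕ => ‖W (M^4) x‖^2) atTop (𝓝 0) := hsum2.tendsto_atTop_zero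
  have h2 : Tendsto (fun M : ℕ => ‖W (M^4) x‖) atTop (𝓝 0) := by
    have h3 := (Real.continuous_sqrt.tendsto 0).comp h1
    simp only [Function.comp_def, Real.sqrt_zero] at h3
    have h4 : (fun M : ℕ => Real.sqrt (‖W (M^4) x‖^2)) = fun M : ℕ => ‖W (M^4) x‖ := by
      funext M
      exact Real.sqrt_sq (norm_nonneg _)
    rwa [h4] at h3
  have h5 : Tendsto (fun M : ℕ => W (M^4) x) atTop (𝓝 0) :=
    tendsto_zero_iff_norm_tendsto_zero.mpr h2
  exact fill_lemma _ h5


theorem stmt1 (a : ℕ → ℝ) (g : ℝ) (hg : 0 < g)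
    (hsep : ∀ n m : ℕ, n ≠ m → g ≤ |a n - a m|) :
    ∀ᵐ x ∂(volume : Measure ℝ), UDmod1 (fun n => a n * x) := by
  have H : ∀ k : ℤ, ∀ᵐ x ∂(volume : Measure ℝ), k ≠ 0 →
      Tendsto (fun N => weylAvg (fun n => (k:ℝ) * (a n * x)) N) atTop (𝓝 0) := by
    intro k
    by_cases hk : k = 0
    · exact Eventually.of_forall fun x h => absurd hk h
    · have h2 : ∀ᵐ x ∂(volume : Measure ℝ), ∀ j : ℕ, x ∈ Ioo (-(j:ℝ)) (j:ℝ) →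
          Tendsto (fun N => weylAvg (fun n => (k:ℝ) * (a n * x)) N) atTop (𝓝 0) :=
        ae_all_iff.mpr fun j => ae_j a g hg hsep k hk j
      filter_upwards [h2] with x hx _
      obtain ⟨j, hj⟩ := exists_nat_gt |x|
      have habs := abs_lt.mp hj
      exact hx j ⟨habs.1, habs.2⟩
  have H2 : ∀ᵐ x ∂(volume : Measure ℝ), ∀ k : ℤ, k ≠ 0 →
      Tendsto (fun N => weylAvg (fun n => (k:ℝ) * (a n * x)) N) atTop (𝓝 0) :=
    ae_all_iff.mpr H
  filter_upwards [H2] with x hx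
  intro k hk
  exact hx k hk
end

section
/- Let a < b, and for each n ∈ ℕ let u_n ∈ C¹([a,b], ℝ). Assume there exists g > 0 such that for all n ≠ m, the function x ↦ |u_n'(x) − u_m'(x)| is monotone on [a,b] and bounded below by g. Then for Lebesgue almost every x ∈ [a,b], the sequence (u_n(x)) is uniformly distributed modulo 1. -/
open Filter MeasureTheory Set
open scoped Topology

section KoksmaAux
open Filter MeasureTheory Set intervalIntegral Complex
open scoped Topology



noncomputable section
namespace Koksma



lemma contF {a b : ℝ} {F F' : ℝ → ℝ}
    (hd : ∀ x ∈ Icc a b, HasDerivWithinAt F (F' x) (Icc a b) x) :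
    ContinuousOn F (Icc a b) := fun x hx => (hd x hx).continuousWithinAt

lemma ftc {a b : ℝ} (hab : a ≤ b) {F F' : ℝ → ℝ}
    (hd : ∀ x ∈ Icc a b, HasDerivWithinAt F (F' x) (Icc a b) x)
    (hc : ContinuousOn F' (Icc a b)) :
    ∫ x in a..b, F' x = F b - F a := by
  apply integral_eq_sub_of_hasDeriv_right_of_le hab (contF hd)
  · intro x hx
    exact ((hd x (Ioo_subset_Icc_self hx)).hasDerivAt
      (Icc_mem_nhds hx.1 hx.2)).hasDerivWithinAt
  · exact (by rwa [uIcc_of_le hab] : ContinuousOn F' (uIcc a b)).intervalIntegrable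

lemma ftcExp {a b : ℝ} (hab : a ≤ b) {F F' : ℝ → ℝ}
    (hd : ∀ x ∈ Icc a b, HasDerivWithinAt F (F' x) (Icc a b) x)
    (hc : ContinuousOn F' (Icc a b)) :
    ∫ x in a..b, (F' x : ℂ) * Complex.exp (F x * Complex.I)
      = (Complex.exp (F b * Complex.I) - Complex.exp (F a * Complex.I)) * (-Complex.I) := by
  have key : ∫ x in a..b, (F' x : ℂ) * Complex.exp (F x * Complex.I)
      = (Complex.exp (F b * Complex.I) * (-Complex.I)) -
        (Complex.exp (F a * Complex.I) * (-Complex.I)) := by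
    apply integral_eq_sub_of_hasDeriv_right_of_le hab
    · exact (Complex.continuous_exp.comp_continuousOn
        (((Complex.continuous_ofReal.comp_continuousOn (contF hd)).mul
          continuousOn_const))).mul continuousOn_const
    · intro x hx
      have hda : HasDerivAt F (F' x) x :=
        (hd x (Ioo_subset_Icc_self hx)).hasDerivAt (Icc_mem_nhds hx.1 hx.2)
      have : HasDerivAt (fun y => Complex.exp (F y * Complex.I) * (-Complex.I))
          ((F' x : ℂ) * Complex.exp (F x * Complex.I)) x := by
        have h2 := ((hda.ofReal_comp.mul_const Complex.I).cexp).mul_const (-Complex.I)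
        refine h2.congr_deriv ?_
        have : Complex.I * -Complex.I = 1 := by
          simp [Complex.I_mul_I]
        linear_combination ((F' x : ℂ) * Complex.exp (F x * Complex.I)) * this
      exact this.hasDerivWithinAt
    · apply ContinuousOn.intervalIntegrable
      rw [uIcc_of_le hab]
      exact (Complex.continuous_ofReal.comp_continuousOn hc).mul
        (Complex.continuous_exp.comp_continuousOn
          ((Complex.continuous_ofReal.comp_continuousOn (contF hd)).mul continuousOn_const))
  rw [key]; ring




lemma contExp {a b : ℝ} {F : ℝ → ℝ} (hF : ContinuousOn F (Icc a b)) :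
    ContinuousOn (fun x => Complex.exp (F x * Complex.I)) (Icc a b) :=
  Complex.continuous_exp.comp_continuousOn
    ((Complex.continuous_ofReal.comp_continuousOn hF).mul continuousOn_const)

lemma intInt {a b : ℝ} (hab : a ≤ b) {E : Type*} [NormedAddCommGroup E]
    {f : ℝ → E} (h : ContinuousOn f (Icc a b)) :
    IntervalIntegrable f volume a b :=
  (by rwa [uIcc_of_le hab] : ContinuousOn f (uIcc a b)).intervalIntegrable



/-- On a subinterval, F t - F s ≥ F' t * (t - s) when F' is antitone and ≥ min at t. -/
lemma ftc_lower {a b : ℝ} (hab : a ≤ b) {F F' : ℝ → ℝ}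
    (hd : ∀ x ∈ Icc a b, HasDerivWithinAt F (F' x) (Icc a b) x)
    (hc : ContinuousOn F' (Icc a b))
    (hanti : AntitoneOn F' (Icc a b)) :
    F' b * (b - a) ≤ F b - F a := by
  rw [← ftc hab hd hc]
  have h1 : ∫ x in a..b, F' b ≤ ∫ x in a..b, F' x := by
    apply integral_mono_on hab intervalIntegrable_const
      ((by rwa [uIcc_of_le hab] : ContinuousOn F' (uIcc a b)).intervalIntegrable)
    intro x hx
    exact hanti hx (right_mem_Icc.2 hab) hx.2
  simpa [mul_comm] using h1

lemma vdc_anti_aux {lam : ℝ} (hlam : 0 < lam) (F F' : ℝ → ℝ) :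
    ∀ n : ℕ, ∀ a b : ℝ, a ≤ b →
    (∀ x ∈ Icc a b, HasDerivWithinAt F (F' x) (Icc a b) x) →
    ContinuousOn F' (Icc a b) →
    (∀ x ∈ Icc a b, lam ≤ F' x) →
    AntitoneOn F' (Icc a b) →
    F b - F a ≤ 2 * Real.pi * n →
    ‖∫ x in a..b, Complex.exp (F x * Complex.I)‖ ≤
      2 * Real.pi * (2 / F' b - 1 / F' a) := by
  intro n
  induction n with
  | zero =>
    intro a b hab hd hc hlow hanti hn
    have hb : lam ≤ F' b := hlow b (right_mem_Icc.2 hab)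
    have hlow' : F' b * (b - a) ≤ F b - F a := ftc_lower hab hd hc hanti
    have hba : b = a := by
      push_cast at hn
      nlinarith [hlam.trans_le hb]
    subst hba
    rw [intervalIntegral.integral_same]
    have h1 : 0 < F' b := hlam.trans_le hb
    simp only [norm_zero]
    have : 2 / F' b - 1 / F' b = 1 / F' b := by ring
    rw [this]
    positivity
  | succ n ih =>
    intro a b hab hd hc hlow hanti hn
    have hFa : lam ≤ F' a := hlow a (left_mem_Icc.2 hab)
    have hFb : lam ≤ F' b := hlow b (right_mem_Icc.2 hab)
    have hFa0 : 0 < F' a := hlam.trans_le hFa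
    have hFb0 : 0 < F' b := hlam.trans_le hFb
    have hpi : (0:ℝ) < Real.pi := Real.pi_pos
    by_cases hsmall : F b - F a ≤ 2 * Real.pi
    · -- base-like case
      have h1 : ‖∫ x in a..b, Complex.exp (F x * Complex.I)‖ ≤ b - a := by
        have := intervalIntegral.norm_integral_le_of_norm_le_const
          (C := 1) (f := fun x => Complex.exp (F x * Complex.I)) (a := a) (b := b) ?_
        · simpa [_root_.abs_of_nonneg (sub_nonneg.2 hab)] using this
        · intro x hx
          rw [Complex.norm_exp_ofReal_mul_I]
      have h2 : F' b * (b - a) ≤ F b - F a := ftc_lower hab hd hc hanti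
      have h3 : b - a ≤ 2 * Real.pi / F' b := by
        rw [le_div_iff₀ hFb0]
        nlinarith
      have h4 : 1 / F' a ≤ 1 / F' b :=
        one_div_le_one_div_of_le hFb0 (hanti (left_mem_Icc.2 hab) (right_mem_Icc.2 hab) hab)
      calc ‖∫ x in a..b, Complex.exp (F x * Complex.I)‖ ≤ b - a := h1
        _ ≤ 2 * Real.pi / F' b := h3
        _ ≤ 2 * Real.pi * (2 / F' b - 1 / F' a) := by
            rw [div_eq_mul_one_div]
            have : (2:ℝ) / F' b - 1 / F' a ≥ 1 / F' b := by
              have : (2:ℝ) / F' b = 1 / F' b + 1 / F' b := by ring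
              linarith [this]
            nlinarith [this, hpi]
    · -- inductive case: split off one full period
      push_neg at hsmall
      obtain ⟨m, hm, hFm⟩ : ∃ m ∈ Icc a b, F m = F a + 2 * Real.pi := by
        have : F a + 2 * Real.pi ∈ Icc (F a) (F b) :=
          ⟨by linarith, by linarith⟩
        obtain ⟨m, hm, hFm⟩ := intermediate_value_Icc hab (contF hd) this
        exact ⟨m, hm, hFm⟩
      have ham : a ≤ m := hm.1
      have hmb : m ≤ b := hm.2
      have hsub1 : Icc a m ⊆ Icc a b := Icc_subset_Icc le_rfl hmb
      have hsub2 : Icc m b ⊆ Icc a b := Icc_subset_Icc ham le_rfl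
      have hd1 : ∀ x ∈ Icc a m, HasDerivWithinAt F (F' x) (Icc a m) x :=
        fun x hx => (hd x (hsub1 hx)).mono hsub1
      have hd2 : ∀ x ∈ Icc m b, HasDerivWithinAt F (F' x) (Icc m b) x :=
        fun x hx => (hd x (hsub2 hx)).mono hsub2
      have hc1 : ContinuousOn F' (Icc a m) := hc.mono hsub1
      have hc2 : ContinuousOn F' (Icc m b) := hc.mono hsub2
      have hFm' : lam ≤ F' m := hlow m hm
      have hFm0 : 0 < F' m := hlam.trans_le hFm'
      -- split the integral
      have hint1 : IntervalIntegrable (fun x => Complex.exp (F x * Complex.I)) volume a m :=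
        intInt ham (contExp (contF hd1))
      have hint2 : IntervalIntegrable (fun x => Complex.exp (F x * Complex.I)) volume m b :=
        intInt hmb (contExp (contF hd2))
      have hsplit : ∫ x in a..b, Complex.exp (F x * Complex.I)
          = (∫ x in a..m, Complex.exp (F x * Complex.I))
            + ∫ x in m..b, Complex.exp (F x * Complex.I) :=
        (integral_add_adjacent_intervals hint1 hint2).symm
      have hexp_eq : Complex.exp (F m * Complex.I) = Complex.exp (F a * Complex.I) := by
        rw [hFm]
        push_cast
        rw [add_mul, Complex.exp_add, Complex.exp_two_pi_mul_I, mul_one]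
      have hFa_ne : (F' a : ℂ) ≠ 0 := by exact_mod_cast hFa0.ne'
      -- decompose the integrand on [a, m]
      have heq : (fun x => Complex.exp (F x * Complex.I))
          = fun x => ((F' a)⁻¹ : ℂ) * ((F' x : ℂ) * Complex.exp (F x * Complex.I))
            + ((1 - F' x / F' a : ℝ) : ℂ) * Complex.exp (F x * Complex.I) := by
        funext x
        push_cast
        field_simp
        ring
      have hintA : IntervalIntegrable (fun x => (F' x : ℂ) * Complex.exp (F x * Complex.I))
          volume a m :=
        intInt ham ((Complex.continuous_ofReal.comp_continuousOn hc1).mul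
          (contExp (contF hd1)))
      have hintB : IntervalIntegrable
          (fun x => ((1 - F' x / F' a : ℝ) : ℂ) * Complex.exp (F x * Complex.I)) volume a m := by
        apply intInt ham
        apply ContinuousOn.mul _ (contExp (contF hd1))
        exact Complex.continuous_ofReal.comp_continuousOn
          (continuousOn_const.sub (hc1.div_const _))
      have hsplit1 : ∫ x in a..m, Complex.exp (F x * Complex.I)
          = ((F' a)⁻¹ : ℂ) * (∫ x in a..m, (F' x : ℂ) * Complex.exp (F x * Complex.I))
            + ∫ x in a..m, ((1 - F' x / F' a : ℝ) : ℂ) * Complex.exp (F x * Complex.I) := by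
        rw [heq, integral_add (hintA.const_mul _) hintB, intervalIntegral.integral_const_mul]
      have hA0 : ((F' a)⁻¹ : ℂ) * (∫ x in a..m, (F' x : ℂ) * Complex.exp (F x * Complex.I)) = 0 := by
        rw [ftcExp ham hd1 hc1, hexp_eq]
        ring
      -- bound the B piece
      have hFle : ∀ x ∈ Icc a m, F' x ≤ F' a :=
        fun x hx => hanti (left_mem_Icc.2 hab) (hsub1 hx) hx.1
      have hnormB : ‖∫ x in a..m, ((1 - F' x / F' a : ℝ) : ℂ) * Complex.exp (F x * Complex.I)‖
          ≤ ∫ x in a..m, (1 - F' x / F' a) := by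
        refine le_trans (intervalIntegral.norm_integral_le_integral_norm ham) ?_
        refine le_of_eq (intervalIntegral.integral_congr ?_)
        intro x hx
        rw [uIcc_of_le ham] at hx
        have h1 : 0 ≤ 1 - F' x / F' a := by
          rw [sub_nonneg, div_le_one hFa0]
          exact hFle x hx
        simp only [norm_mul, Complex.norm_exp_ofReal_mul_I, mul_one, Complex.norm_real,
          Real.norm_eq_abs]
        exact _root_.abs_of_nonneg h1
      have hFm2pi : F m - F a = 2 * Real.pi := by rw [hFm]; ring
      have hintF' : ∫ x in a..m, F' x = 2 * Real.pi := by
        rw [ftc ham hd1 hc1, hFm2pi]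
      have hBval : ∫ x in a..m, (1 - F' x / F' a) = (m - a) - 2 * Real.pi / F' a := by
        have : (fun x => 1 - F' x / F' a) = fun x => 1 - (F' a)⁻¹ * F' x := by
          funext x; field_simp
        rw [this, integral_sub intervalIntegrable_const
          ((intInt ham hc1).const_mul _), intervalIntegral.integral_const_mul, hintF']
        simp
        ring
      have hma : m - a ≤ 2 * Real.pi / F' m := by
        have h2 := ftc_lower ham hd1 hc1 (hanti.mono hsub1)
        rw [le_div_iff₀ hFm0]
        nlinarith
      have hkey1 : ‖∫ x in a..m, Complex.exp (F x * Complex.I)‖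
          ≤ 2 * Real.pi * (1 / F' m - 1 / F' a) := by
        rw [hsplit1, hA0, zero_add]
        refine hnormB.trans ?_
        rw [hBval]
        rw [div_eq_mul_one_div (2*Real.pi) (F' m), div_eq_mul_one_div (2*Real.pi) (F' a)] at *
        nlinarith [hma]
      have hkey2 : ‖∫ x in m..b, Complex.exp (F x * Complex.I)‖
          ≤ 2 * Real.pi * (2 / F' b - 1 / F' m) := by
        apply ih m b hmb hd2 hc2 (fun x hx => hlow x (hsub2 hx)) (hanti.mono hsub2)
        push_cast at hn ⊢
        linarith [hFm2pi]
      calc ‖∫ x in a..b, Complex.exp (F x * Complex.I)‖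
          ≤ ‖∫ x in a..m, Complex.exp (F x * Complex.I)‖
            + ‖∫ x in m..b, Complex.exp (F x * Complex.I)‖ := by
            rw [hsplit]; exact norm_add_le _ _
        _ ≤ 2 * Real.pi * (1 / F' m - 1 / F' a) + 2 * Real.pi * (2 / F' b - 1 / F' m) := by
            linarith [hkey1, hkey2]
        _ = 2 * Real.pi * (2 / F' b - 1 / F' a) := by ring

lemma integral_conj' {f : ℝ → ℂ} {a b : ℝ} :
    ∫ x in a..b, (starRingEnd ℂ) (f x) = (starRingEnd ℂ) (∫ x in a..b, f x) := by
  simp only [intervalIntegral, integral_conj, map_sub]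

lemma conj_exp_real (r : ℝ) :
    (starRingEnd ℂ) (Complex.exp (r * Complex.I)) = Complex.exp ((-r : ℝ) * Complex.I) := by
  rw [← Complex.exp_conj]
  push_cast
  rw [map_mul, Complex.conj_I, Complex.conj_ofReal]
  ring_nf

lemma vdc_anti {a b lam : ℝ} (hab : a ≤ b) (hlam : 0 < lam) {F F' : ℝ → ℝ}
    (hd : ∀ x ∈ Icc a b, HasDerivWithinAt F (F' x) (Icc a b) x)
    (hc : ContinuousOn F' (Icc a b))
    (hlow : ∀ x ∈ Icc a b, lam ≤ F' x)
    (hanti : AntitoneOn F' (Icc a b)) :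
    ‖∫ x in a..b, Complex.exp (F x * Complex.I)‖ ≤ 4 * Real.pi / lam := by
  have hpi := Real.pi_pos
  obtain ⟨n, hn⟩ := exists_nat_ge ((F b - F a) / (2 * Real.pi))
  have h := vdc_anti_aux hlam F F' n a b hab hd hc hlow hanti (by
    rw [div_le_iff₀ (by positivity)] at hn
    linarith)
  have hFa0 : 0 < F' a := hlam.trans_le (hlow a (left_mem_Icc.2 hab))
  have hFb : lam ≤ F' b := hlow b (right_mem_Icc.2 hab)
  have hFb0 : 0 < F' b := hlam.trans_le hFb
  refine h.trans ?_
  have t1 : 2 / F' b - 1 / F' a ≤ 2 / lam := by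
    have h3 : 2 / F' b ≤ 2 / lam := by gcongr
    have h4 : 0 < 1 / F' a := by positivity
    linarith
  calc 2 * Real.pi * (2 / F' b - 1 / F' a) ≤ 2 * Real.pi * (2 / lam) :=
        mul_le_mul_of_nonneg_left t1 (by positivity)
    _ = 4 * Real.pi / lam := by ring

lemma vdc_mono {a b lam : ℝ} (hab : a ≤ b) (hlam : 0 < lam) {F F' : ℝ → ℝ}
    (hd : ∀ x ∈ Icc a b, HasDerivWithinAt F (F' x) (Icc a b) x)
    (hc : ContinuousOn F' (Icc a b))
    (hlow : ∀ x ∈ Icc a b, lam ≤ F' x)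
    (hmono : MonotoneOn F' (Icc a b)) :
    ‖∫ x in a..b, Complex.exp (F x * Complex.I)‖ ≤ 4 * Real.pi / lam := by
  set G : ℝ → ℝ := fun x => -F (a + b - x) with hG
  set G' : ℝ → ℝ := fun x => F' (a + b - x) with hG'
  have hmaps : ∀ x ∈ Icc a b, a + b - x ∈ Icc a b := by
    intro x hx
    exact ⟨by linarith [hx.2], by linarith [hx.1]⟩
  have hdG : ∀ x ∈ Icc a b, HasDerivWithinAt G (G' x) (Icc a b) x := by
    intro x hx
    have hinner : HasDerivWithinAt (fun y => a + b - y) (-1) (Icc a b) x :=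
      ((hasDerivAt_id x).const_sub (a + b)).hasDerivWithinAt
    have houter := hd (a + b - x) (hmaps x hx)
    have hcomp := (houter.comp x hinner (fun y hy => hmaps y hy)).neg
    simp only [Function.comp_def] at hcomp
    refine hcomp.congr_deriv ?_
    simp only [hG']
    ring
  have hcontsub : ContinuousOn (fun y : ℝ => a + b - y) (Icc a b) :=
    (continuous_const.sub continuous_id).continuousOn
  have hcG' : ContinuousOn G' (Icc a b) :=
    hc.comp hcontsub (fun y hy => hmaps y hy)
  have hlowG : ∀ x ∈ Icc a b, lam ≤ G' x := fun x hx => hlow _ (hmaps x hx)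
  have hantiG : AntitoneOn G' (Icc a b) := by
    intro x hx y hy hxy
    exact hmono (hmaps y hy) (hmaps x hx) (by linarith)
  have hb := vdc_anti hab hlam hdG hcG' hlowG hantiG
  have hgint : ∫ x in a..b, Complex.exp (G x * Complex.I)
      = (starRingEnd ℂ) (∫ x in a..b, Complex.exp (F x * Complex.I)) := by
    have h1 : ∀ x : ℝ, Complex.exp (G x * Complex.I)
        = (starRingEnd ℂ) (Complex.exp (F (a + b - x) * Complex.I)) := by
      intro x
      rw [conj_exp_real]
    simp_rw [h1]
    rw [integral_conj']
    congr 1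
    have h2 := intervalIntegral.integral_comp_sub_left (a := a) (b := b)
      (fun y => Complex.exp (F y * Complex.I)) (a + b)
    simpa using h2
  calc ‖∫ x in a..b, Complex.exp (F x * Complex.I)‖
      = ‖(starRingEnd ℂ) (∫ x in a..b, Complex.exp (F x * Complex.I))‖ :=
        (RCLike.norm_conj _).symm
    _ = ‖∫ x in a..b, Complex.exp (G x * Complex.I)‖ := by rw [hgint]
    _ ≤ 4 * Real.pi / lam := hb

lemma vdc_signed {a b lam : ℝ} (hab : a ≤ b) (hlam : 0 < lam) {F F' : ℝ → ℝ}
    (hd : ∀ x ∈ Icc a b, HasDerivWithinAt F (F' x) (Icc a b) x)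
    (hc : ContinuousOn F' (Icc a b))
    (hlow : ∀ x ∈ Icc a b, lam ≤ F' x)
    (hm : MonotoneOn F' (Icc a b) ∨ AntitoneOn F' (Icc a b)) :
    ‖∫ x in a..b, Complex.exp (F x * Complex.I)‖ ≤ 4 * Real.pi / lam := by
  rcases hm with h | h
  · exact vdc_mono hab hlam hd hc hlow h
  · exact vdc_anti hab hlam hd hc hlow h

lemma vdc_abs {a b lam : ℝ} (hab : a ≤ b) (hlam : 0 < lam) {F F' : ℝ → ℝ}
    (hd : ∀ x ∈ Icc a b, HasDerivWithinAt F (F' x) (Icc a b) x)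
    (hc : ContinuousOn F' (Icc a b))
    (hlow : ∀ x ∈ Icc a b, lam ≤ |F' x|)
    (hm : MonotoneOn (fun x => |F' x|) (Icc a b) ∨ AntitoneOn (fun x => |F' x|) (Icc a b)) :
    ‖∫ x in a..b, Complex.exp (F x * Complex.I)‖ ≤ 4 * Real.pi / lam := by
  have hsign : (∀ x ∈ Icc a b, 0 < F' x) ∨ (∀ x ∈ Icc a b, F' x < 0) := by
    by_contra hcon
    push_neg at hcon
    obtain ⟨⟨x, hx, hx0⟩, ⟨y, hy, hy0⟩⟩ := hcon
    have hsub : uIcc x y ⊆ Icc a b := uIcc_subset_Icc hx hy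
    have h0 : (0:ℝ) ∈ uIcc (F' x) (F' y) := mem_uIcc.2 (Or.inl ⟨hx0, hy0⟩)
    obtain ⟨z, hz, hz0⟩ := intermediate_value_uIcc (hc.mono hsub) h0
    have hzl := hlow z (hsub hz)
    rw [hz0] at hzl
    simp at hzl
    linarith
  rcases hsign with hpos | hneg
  · have habs : ∀ x ∈ Icc a b, |F' x| = F' x := fun x hx => abs_of_pos (hpos x hx)
    have hlow' : ∀ x ∈ Icc a b, lam ≤ F' x := fun x hx => (habs x hx) ▸ hlow x hx
    have hm' : MonotoneOn F' (Icc a b) ∨ AntitoneOn F' (Icc a b) := by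
      rcases hm with h | h
      · left; intro x hx y hy hxy
        have := h hx hy hxy
        simp only at this
        rwa [habs x hx, habs y hy] at this
      · right; intro x hx y hy hxy
        have := h hx hy hxy
        simp only at this
        rwa [habs x hx, habs y hy] at this
    exact vdc_signed hab hlam hd hc hlow' hm'
  · have habs : ∀ x ∈ Icc a b, |F' x| = -F' x := fun x hx => abs_of_neg (hneg x hx)
    have hd' : ∀ x ∈ Icc a b, HasDerivWithinAt (fun y => -F y) (-F' x) (Icc a b) x :=
      fun x hx => (hd x hx).neg
    have hc' : ContinuousOn (fun x => -F' x) (Icc a b) := hc.neg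
    have hlow' : ∀ x ∈ Icc a b, lam ≤ -F' x := fun x hx => (habs x hx) ▸ hlow x hx
    have hm' : MonotoneOn (fun x => -F' x) (Icc a b) ∨ AntitoneOn (fun x => -F' x) (Icc a b) := by
      rcases hm with h | h
      · left; intro x hx y hy hxy
        have := h hx hy hxy
        simp only at this
        rwa [habs x hx, habs y hy] at this
      · right; intro x hx y hy hxy
        have := h hx hy hxy
        simp only at this
        rwa [habs x hx, habs y hy] at this
    have hb := vdc_signed hab hlam hd' hc' hlow' hm'
    have hgint : ∫ x in a..b, Complex.exp ((-F x : ℝ) * Complex.I)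
        = (starRingEnd ℂ) (∫ x in a..b, Complex.exp (F x * Complex.I)) := by
      rw [← integral_conj']
      congr 1
      funext x
      rw [conj_exp_real]
    calc ‖∫ x in a..b, Complex.exp (F x * Complex.I)‖
        = ‖(starRingEnd ℂ) (∫ x in a..b, Complex.exp (F x * Complex.I))‖ :=
          (RCLike.norm_conj _).symm
      _ = ‖∫ x in a..b, Complex.exp ((-F x : ℝ) * Complex.I)‖ := by rw [hgint]
      _ ≤ 4 * Real.pi / lam := hb



lemma sqrt_harmonic (K : ℕ) : ∑ j ∈ Finset.Icc 1 K, (j:ℝ)⁻¹ ≤ 2 * Real.sqrt K := by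
  induction K with
  | zero => simp
  | succ K ih =>
    rw [Finset.sum_Icc_succ_top (by omega : 1 ≤ K + 1)]
    have hs := Real.sqrt_nonneg (K:ℝ)
    have ht0 : (0:ℝ) < Real.sqrt (K+1) := Real.sqrt_pos.2 (by positivity)
    have hsq : Real.sqrt (K:ℝ) ^ 2 = K := Real.sq_sqrt (by positivity)
    have htq : Real.sqrt ((K:ℝ)+1) ^ 2 = (K:ℝ)+1 := Real.sq_sqrt (by positivity)
    have h2st : 2 * (Real.sqrt (K:ℝ) * Real.sqrt ((K:ℝ)+1)) ≤ 2*(K:ℝ)+1 := by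
      nlinarith [sq_nonneg (Real.sqrt (K:ℝ) - Real.sqrt ((K:ℝ)+1))]
    have htle : Real.sqrt ((K:ℝ)+1) ≤ (K:ℝ)+1 := by
      nlinarith
    have h1t : (1:ℝ)/((K:ℕ)+1) ≤ 1/Real.sqrt ((K:ℝ)+1) := by
      apply one_div_le_one_div_of_le ht0
      push_cast
      exact htle
    have h2 : 1/Real.sqrt ((K:ℝ)+1) ≤ 2*(Real.sqrt ((K:ℝ)+1) - Real.sqrt (K:ℝ)) := by
      rw [div_le_iff₀ ht0]
      nlinarith
    have hcast : ((K+1:ℕ):ℝ) = (K:ℝ)+1 := by push_cast; ring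
    rw [hcast]
    have : ((K:ℝ)+1)⁻¹ = 1/((K:ℕ)+1) := by push_cast; ring
    rw [this]
    linarith

lemma sep_sum {g : ℝ} (hg : 0 < g) (t : ℝ) (v : ℕ → ℝ) (S : Finset ℕ)
    (hsep : ∀ m ∈ S, ∀ m' ∈ S, m ≠ m' → g ≤ |v m - v m'|)
    (ht : ∀ m ∈ S, g ≤ |t - v m|) :
    ∑ m ∈ S, |t - v m|⁻¹ ≤ (1 + 4 * Real.sqrt S.card) / g := by
  classical
  set K := S.card with hK
  set f : ℕ → ℕ := fun m => ⌊|t - v m| / g⌋₊ with hf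
  have hf1 : ∀ m ∈ S, 1 ≤ f m := by
    intro m hm
    apply Nat.le_floor
    rw [Nat.cast_one, le_div_iff₀ hg, one_mul]
    exact ht m hm
  have hfb : ∀ m ∈ S, (f m : ℝ) * g ≤ |t - v m| := by
    intro m hm
    have := Nat.floor_le (by positivity : (0:ℝ) ≤ |t - v m| / g)
    calc (f m : ℝ) * g ≤ (|t - v m| / g) * g := by
          apply mul_le_mul_of_nonneg_right this hg.le
      _ = |t - v m| := by field_simp
  have hfub : ∀ m ∈ S, |t - v m| < ((f m : ℝ) + 1) * g := by
    intro m hm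
    have h1 : |t - v m| / g < (f m : ℝ) + 1 := Nat.lt_floor_add_one _
    calc |t - v m| = (|t - v m| / g) * g := by field_simp
      _ < ((f m : ℝ) + 1) * g := by
          apply mul_lt_mul_of_pos_right h1 hg
  -- key inequality per term
  have hterm : ∀ m ∈ S, |t - v m|⁻¹ ≤ ((f m : ℝ) * g)⁻¹ := by
    intro m hm
    have h1 : 0 < (f m : ℝ) * g := by
      have := hf1 m hm
      have : (1:ℝ) ≤ (f m : ℝ) := by exact_mod_cast this
      nlinarith
    exact inv_anti₀ h1 (hfb m hm)
  -- injectivity of m ↦ (f m, t < v m)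
  have hinj : Set.InjOn (fun m => (f m, decide (t < v m))) S := by
    intro m hm m' hm' heq
    by_contra hne
    have hff : f m = f m' := (Prod.mk.injEq _ _ _ _ ▸ heq).1
    have hss : decide (t < v m) = decide (t < v m') := (Prod.mk.injEq _ _ _ _ ▸ heq).2
    have hgap := hsep m hm m' hm' hne
    have hlb := hfb m hm
    have hub := hfub m hm
    have hlb' := hfb m' hm'
    have hub' := hfub m' hm'
    rw [← hff] at hlb' hub'
    have habs : |v m - v m'| < g := by
      by_cases hcase : t < v m
      · have hcase' : t < v m' := by
          by_contra hc
          simp [hcase, hc] at hss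
        rw [abs_of_neg (by linarith : t - v m < 0)] at hlb hub
        rw [abs_of_neg (by linarith : t - v m' < 0)] at hlb' hub'
        rw [abs_lt]
        constructor <;> nlinarith
      · have hcase' : ¬ t < v m' := by
          by_contra hc
          simp [hcase, hc] at hss
        push_neg at hcase hcase'
        rw [_root_.abs_of_nonneg (by linarith : 0 ≤ t - v m)] at hlb hub
        rw [_root_.abs_of_nonneg (by linarith : 0 ≤ t - v m')] at hlb' hub'
        rw [abs_lt]
        constructor <;> nlinarith
    linarith
  have hKpos : (0:ℝ) ≤ (K:ℝ) := by positivity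
  set S1 := S.filter (fun m => f m ≤ K) with hS1
  set S2 := S.filter (fun m => ¬ f m ≤ K) with hS2
  have hsum_split : ∑ m ∈ S, ((f m : ℝ) * g)⁻¹
      = ∑ m ∈ S1, ((f m : ℝ) * g)⁻¹ + ∑ m ∈ S2, ((f m : ℝ) * g)⁻¹ :=
    (Finset.sum_filter_add_sum_filter_not S _ _).symm
  -- S2 bound
  have hS2bound : ∑ m ∈ S2, ((f m : ℝ) * g)⁻¹ ≤ g⁻¹ := by
    have hterm2 : ∀ m ∈ S2, ((f m : ℝ) * g)⁻¹ ≤ (((K:ℝ)+1) * g)⁻¹ := by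
      intro m hm
      rw [Finset.mem_filter] at hm
      have h1 : K + 1 ≤ f m := by omega
      have h2 : ((K:ℝ)+1) ≤ (f m : ℝ) := by exact_mod_cast h1
      apply inv_anti₀ (by positivity)
      nlinarith
    calc ∑ m ∈ S2, ((f m : ℝ) * g)⁻¹ ≤ S2.card • (((K:ℝ)+1) * g)⁻¹ :=
          Finset.sum_le_card_nsmul _ _ _ hterm2
      _ = (S2.card : ℝ) * (((K:ℝ)+1) * g)⁻¹ := by rw [nsmul_eq_mul]
      _ ≤ (K:ℝ) * (((K:ℝ)+1) * g)⁻¹ := by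
          apply mul_le_mul_of_nonneg_right _ (by positivity)
          have : S2.card ≤ K := by
            rw [hK]
            exact Finset.card_le_card (Finset.filter_subset _ _)
          exact_mod_cast this
      _ ≤ g⁻¹ := by
          rw [mul_inv, ← mul_assoc]
          have h3 : (K:ℝ) * ((K:ℝ)+1)⁻¹ ≤ 1 := by
            rw [← div_eq_mul_inv, div_le_one (by positivity)]
            linarith
          nlinarith [inv_nonneg.2 hg.le, h3]
  -- S1 bound
  have hS1bound : ∑ m ∈ S1, ((f m : ℝ) * g)⁻¹ ≤ 4 * Real.sqrt K * g⁻¹ := by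
    have hrw : ∀ m, ((f m : ℝ) * g)⁻¹ = ((f m : ℝ))⁻¹ * g⁻¹ := fun m => by
      rw [mul_inv]
    simp_rw [hrw, ← Finset.sum_mul]
    apply mul_le_mul_of_nonneg_right _ (by positivity)
    have hinj1 : ∀ m ∈ S1, ∀ m' ∈ S1, (fun m => (f m, decide (t < v m))) m
        = (fun m => (f m, decide (t < v m))) m' → m = m' := by
      intro m hm m' hm' heq
      exact hinj (Finset.mem_coe.2 ((Finset.mem_filter.1 hm).1))
        (Finset.mem_coe.2 ((Finset.mem_filter.1 hm').1)) heq
    have himg : ∑ m ∈ S1, ((f m : ℝ))⁻¹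
        = ∑ p ∈ S1.image (fun m => (f m, decide (t < v m))), ((p.1 : ℝ))⁻¹ :=
      (Finset.sum_image (f := fun p : ℕ × Bool => ((p.1 : ℝ))⁻¹) hinj1).symm
    rw [himg]
    have hsub : S1.image (fun m => (f m, decide (t < v m)))
        ⊆ (Finset.Icc 1 K) ×ˢ (Finset.univ : Finset Bool) := by
      intro p hp
      rw [Finset.mem_image] at hp
      obtain ⟨m, hm, hpm⟩ := hp
      rw [Finset.mem_filter] at hm
      rw [← hpm, Finset.mem_product]
      exact ⟨Finset.mem_Icc.2 ⟨hf1 m hm.1, hm.2⟩, Finset.mem_univ _⟩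
    calc ∑ p ∈ S1.image (fun m => (f m, decide (t < v m))), ((p.1 : ℝ))⁻¹
        ≤ ∑ p ∈ (Finset.Icc 1 K) ×ˢ (Finset.univ : Finset Bool), ((p.1 : ℝ))⁻¹ :=
          Finset.sum_le_sum_of_subset_of_nonneg hsub (fun p _ _ => by positivity)
      _ = ∑ j ∈ Finset.Icc 1 K, ∑ _s ∈ (Finset.univ : Finset Bool), ((j : ℝ))⁻¹ := by
          rw [Finset.sum_product]
      _ = 2 * ∑ j ∈ Finset.Icc 1 K, ((j : ℝ))⁻¹ := by
          simp [Finset.sum_const]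
          rw [Finset.mul_sum]
      _ ≤ 2 * (2 * Real.sqrt K) := by
          have := sqrt_harmonic K
          linarith
      _ = 4 * Real.sqrt K := by ring
  calc ∑ m ∈ S, |t - v m|⁻¹ ≤ ∑ m ∈ S, ((f m : ℝ) * g)⁻¹ := Finset.sum_le_sum hterm
    _ = ∑ m ∈ S1, ((f m : ℝ) * g)⁻¹ + ∑ m ∈ S2, ((f m : ℝ) * g)⁻¹ := hsum_split
    _ ≤ 4 * Real.sqrt K * g⁻¹ + g⁻¹ := by linarith
    _ = (1 + 4 * Real.sqrt K) / g := by field_simp; ring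



noncomputable def weylAvg' (u : ℕ → ℝ) (N : ℕ) : ℂ :=
  (N : ℂ)⁻¹ * ∑ n ∈ Finset.Icc 1 N, Complex.exp (2 * Real.pi * Complex.I * (u n : ℂ))

section L2

/-- Off-diagonal oscillatory integral bound. -/
lemma offdiag_bound {a b : ℝ} (hab : a < b) {u u' : ℕ → ℝ → ℝ}
    (hderiv : ∀ n, ∀ x ∈ Set.Icc a b, HasDerivWithinAt (u n) (u' n x) (Set.Icc a b) x)
    (hcont : ∀ n, ContinuousOn (u' n) (Set.Icc a b))
    {g : ℝ} (hg : 0 < g)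
    (hmono : ∀ n m : ℕ, n ≠ m →
      MonotoneOn (fun x => |u' n x - u' m x|) (Set.Icc a b) ∨
      AntitoneOn (fun x => |u' n x - u' m x|) (Set.Icc a b))
    (hgap : ∀ n m : ℕ, n ≠ m → ∀ x ∈ Set.Icc a b, g ≤ |u' n x - u' m x|)
    (k : ℤ) (hk : k ≠ 0) (n m : ℕ) (hnm : n ≠ m) :
    ‖∫ x in a..b, Complex.exp
        ((2 * Real.pi * ((k:ℝ) * u n x - (k:ℝ) * u m x) : ℝ) * Complex.I)‖
      ≤ 2 * (min |u' n a - u' m a| |u' n b - u' m b|)⁻¹ := by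
  set D : ℝ → ℝ := fun x => u' n x - u' m x with hD
  set gm : ℝ := min |D a| |D b| with hgm
  have hmem_a : a ∈ Icc a b := left_mem_Icc.2 hab.le
  have hmem_b : b ∈ Icc a b := right_mem_Icc.2 hab.le
  have hgm_pos : 0 < gm := lt_min (hg.trans_le (hgap n m hnm a hmem_a))
    (hg.trans_le (hgap n m hnm b hmem_b))
  have hk1 : (1:ℝ) ≤ |(k:ℝ)| := by
    have := Int.one_le_abs hk
    exact_mod_cast this
  have hkpos : (0:ℝ) < |(k:ℝ)| := lt_of_lt_of_le one_pos hk1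
  have hpi := Real.pi_pos
  set lam : ℝ := 2 * Real.pi * |(k:ℝ)| * gm with hlam
  have hlam_pos : 0 < lam := by positivity
  set F : ℝ → ℝ := fun x => 2 * Real.pi * ((k:ℝ) * u n x - (k:ℝ) * u m x) with hF
  set F' : ℝ → ℝ := fun x => 2 * Real.pi * ((k:ℝ) * u' n x - (k:ℝ) * u' m x) with hF'
  have hd : ∀ x ∈ Icc a b, HasDerivWithinAt F (F' x) (Icc a b) x := by
    intro x hx
    exact (((hderiv n x hx).const_mul ((k:ℝ))).sub
      ((hderiv m x hx).const_mul ((k:ℝ)))).const_mul (2 * Real.pi)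
  have hc : ContinuousOn F' (Icc a b) :=
    (continuousOn_const.mul (((continuousOn_const.mul (hcont n))).sub
      (continuousOn_const.mul (hcont m))))
  have habsF' : ∀ x, |F' x| = 2 * Real.pi * |(k:ℝ)| * |D x| := by
    intro x
    have : F' x = 2 * Real.pi * ((k:ℝ) * D x) := by rw [hF', hD]; ring
    rw [this, abs_mul, abs_of_pos (by positivity : (0:ℝ) < 2 * Real.pi), abs_mul]
    ring
  have hDlow : ∀ x ∈ Icc a b, gm ≤ |D x| := by
    intro x hx
    rcases hmono n m hnm with h | h
    · have := h hmem_a hx hx.1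
      simp only at this
      exact le_trans (min_le_left _ _) this
    · have := h hx hmem_b hx.2
      simp only at this
      exact le_trans (min_le_right _ _) this
  have hlow : ∀ x ∈ Icc a b, lam ≤ |F' x| := by
    intro x hx
    rw [habsF' x, hlam]
    have := hDlow x hx
    nlinarith
  have hm : MonotoneOn (fun x => |F' x|) (Icc a b) ∨
      AntitoneOn (fun x => |F' x|) (Icc a b) := by
    rcases hmono n m hnm with h | h
    · left; intro x hx y hy hxy
      simp only [habsF']
      have := h hx hy hxy
      simp only at this
      nlinarith
    · right; intro x hx y hy hxy
      simp only [habsF']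
      have := h hx hy hxy
      simp only at this
      nlinarith
  have hvdc := vdc_abs hab.le hlam_pos hd hc hlow hm
  refine le_trans hvdc ?_
  rw [hlam]
  rw [div_le_iff₀ (by positivity)]
  have h1 : (1:ℝ) * gm ≤ |(k:ℝ)| * gm := by nlinarith
  have h2 : 0 < gm⁻¹ := by positivity
  have h3 : gm * gm⁻¹ = 1 := mul_inv_cancel₀ hgm_pos.ne'
  nlinarith [hpi]

end L2



lemma l2_bound {a b : ℝ} (hab : a < b) {u u' : ℕ → ℝ → ℝ}
    (hderiv : ∀ n, ∀ x ∈ Set.Icc a b, HasDerivWithinAt (u n) (u' n x) (Set.Icc a b) x)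
    (hcont : ∀ n, ContinuousOn (u' n) (Set.Icc a b))
    {g : ℝ} (hg : 0 < g)
    (hmono : ∀ n m : ℕ, n ≠ m →
      MonotoneOn (fun x => |u' n x - u' m x|) (Set.Icc a b) ∨
      AntitoneOn (fun x => |u' n x - u' m x|) (Set.Icc a b))
    (hgap : ∀ n m : ℕ, n ≠ m → ∀ x ∈ Set.Icc a b, g ≤ |u' n x - u' m x|)
    (k : ℤ) (hk : k ≠ 0) (N : ℕ) (hN : 1 ≤ N) :
    ∫ x in Icc a b, ‖weylAvg' (fun n => (k:ℝ) * u n x) N‖^2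
      ≤ ((b - a) + 20 / g) / Real.sqrt N := by
  classical
  have hab' := hab.le
  set P : ℕ → ℕ → ℝ → ℝ := fun n m x => 2 * Real.pi * ((k:ℝ) * u n x - (k:ℝ) * u m x)
    with hP
  set E : ℕ → ℝ → ℂ := fun n x => Complex.exp (2 * Real.pi * Complex.I
    * (((k:ℝ) * u n x : ℝ) : ℂ)) with hE
  have hucont : ∀ n, ContinuousOn (u n) (Icc a b) :=
    fun n x hx => (hderiv n x hx).continuousWithinAt
  have hPcont : ∀ n m, ContinuousOn (P n m) (Icc a b) := fun n m =>
    continuousOn_const.mul ((continuousOn_const.mul (hucont n)).sub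
      (continuousOn_const.mul (hucont m)))
  have hEEcont : ∀ n m, ContinuousOn (fun x => Complex.exp ((P n m x : ℝ) * Complex.I))
      (Icc a b) := fun n m => Complex.continuous_exp.comp_continuousOn
    ((Complex.continuous_ofReal.comp_continuousOn (hPcont n m)).mul continuousOn_const)
  have hint : ∀ n m, IntegrableOn (fun x => Complex.exp ((P n m x : ℝ) * Complex.I))
      (Icc a b) volume := fun n m => (hEEcont n m).integrableOn_compact isCompact_Icc
  -- pointwise product formula
  have hprod : ∀ n m x, E n x * (starRingEnd ℂ) (E m x)
      = Complex.exp ((P n m x : ℝ) * Complex.I) := by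
    intro n m x
    rw [hE]
    simp only
    rw [← Complex.exp_conj, ← Complex.exp_add]
    congr 1
    simp only [map_mul, Complex.conj_I, Complex.conj_ofReal, map_ofNat]
    rw [hP]
    push_cast
    ring
  -- pointwise norm-squared formula
  have hnormsq : ∀ x, ‖weylAvg' (fun n => (k:ℝ) * u n x) N‖^2
      = ((N:ℝ)⁻¹)^2 * (∑ n ∈ Finset.Icc 1 N, ∑ m ∈ Finset.Icc 1 N,
          Complex.exp ((P n m x : ℝ) * Complex.I)).re := by
    intro x
    rw [weylAvg']
    rw [norm_mul, mul_pow, norm_inv, Complex.norm_natCast]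
    congr 1
    have hz : (∑ n ∈ Finset.Icc 1 N, E n x) * (starRingEnd ℂ) (∑ m ∈ Finset.Icc 1 N, E m x)
        = ∑ n ∈ Finset.Icc 1 N, ∑ m ∈ Finset.Icc 1 N,
            Complex.exp ((P n m x : ℝ) * Complex.I) := by
      rw [map_sum, Finset.sum_mul_sum]
      exact Finset.sum_congr rfl fun n _ => Finset.sum_congr rfl fun m _ => hprod n m x
    show ‖∑ n ∈ Finset.Icc 1 N, E n x‖^2 = _
    rw [← hz, Complex.mul_conj, Complex.ofReal_re, Complex.sq_norm]
  -- integral = re of sum of integrals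
  set J : ℕ → ℕ → ℂ := fun n m => ∫ x in Icc a b, Complex.exp ((P n m x : ℝ) * Complex.I)
    with hJ
  have hstep : ∫ x in Icc a b, ‖weylAvg' (fun n => (k:ℝ) * u n x) N‖^2
      = ((N:ℝ)⁻¹)^2 * (∑ n ∈ Finset.Icc 1 N, ∑ m ∈ Finset.Icc 1 N, J n m).re := by
    simp_rw [hnormsq]
    rw [MeasureTheory.integral_const_mul]
    congr 1
    have hWint : Integrable (fun x => ∑ n ∈ Finset.Icc 1 N, ∑ m ∈ Finset.Icc 1 N,
        Complex.exp ((P n m x : ℝ) * Complex.I)) (volume.restrict (Icc a b)) := by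
      apply integrable_finset_sum
      intro n _
      apply integrable_finset_sum
      intro m _
      exact hint n m
    have hre := _root_.integral_re hWint
    simp only [RCLike.re_to_complex] at hre
    rw [hre]
    congr 1
    rw [MeasureTheory.integral_finset_sum _ (fun n _ => integrable_finset_sum _
      (fun m _ => hint n m))]
    exact Finset.sum_congr rfl fun n _ =>
      MeasureTheory.integral_finset_sum _ (fun m _ => hint n m)
  rw [hstep]
  -- diagonal value
  have hdiag : ∀ n, J n n = ((b - a : ℝ) : ℂ) := by
    intro n
    rw [hJ]
    simp only
    have : ∀ x : ℝ, Complex.exp ((P n n x : ℝ) * Complex.I) = 1 := by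
      intro x
      have : P n n x = 0 := by rw [hP]; simp
      rw [this]
      simp
    simp_rw [this]
    rw [MeasureTheory.setIntegral_const]
    rw [Real.volume_real_Icc_of_le hab']
    simp
  -- off-diagonal bound
  have hoff : ∀ n m, n ≠ m → ‖J n m‖
      ≤ 2 * (min |u' n a - u' m a| |u' n b - u' m b|)⁻¹ := by
    intro n m hnm
    have heq : J n m = ∫ x in a..b, Complex.exp ((P n m x : ℝ) * Complex.I) := by
      rw [hJ]
      simp only
      rw [intervalIntegral.integral_of_le hab', MeasureTheory.integral_Icc_eq_integral_Ioc]
    rw [heq]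
    exact offdiag_bound hab hderiv hcont hg hmono hgap k hk n m hnm
  -- separated endpoint sums
  have hmem_a : a ∈ Icc a b := left_mem_Icc.2 hab'
  have hmem_b : b ∈ Icc a b := right_mem_Icc.2 hab'
  have hNR : (0:ℝ) < N := by exact_mod_cast hN
  set s : ℝ := Real.sqrt N with hs
  have hs0 : 0 < s := Real.sqrt_pos.2 hNR
  have hss : s * s = (N:ℝ) := Real.mul_self_sqrt hNR.le
  have hs1 : 1 ≤ s := by
    rw [hs, show (1:ℝ) = Real.sqrt 1 by simp]
    exact Real.sqrt_le_sqrt (by exact_mod_cast hN)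
  have hsN : s ≤ (N:ℝ) := by nlinarith
  have hsep_pt : ∀ c ∈ Icc a b, ∀ n : ℕ, ∑ m ∈ (Finset.Icc 1 N).erase n,
      |u' n c - u' m c|⁻¹ ≤ (1 + 4 * s) / g := by
    intro c hc n
    have hcard : (((Finset.Icc 1 N).erase n).card : ℝ) ≤ (N:ℝ) := by
      have h1 := Finset.card_erase_le (s := Finset.Icc 1 N) (a := n)
      have h2 : (Finset.Icc 1 N).card = N := by rw [Nat.card_Icc]; omega
      rw [h2] at h1
      exact_mod_cast h1
    have h := sep_sum hg (u' n c) (fun m => u' m c) ((Finset.Icc 1 N).erase n)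
      (fun m _ m' _ hne => hgap m m' hne c hc)
      (fun m hm => hgap n m (Finset.ne_of_mem_erase hm).symm c hc)
    refine h.trans ?_
    gcongr
    exact Real.sqrt_le_sqrt hcard
  -- inner sum bound
  have hJnn : ∀ n : ℕ, ‖J n n‖ = b - a := by
    intro n
    rw [hdiag n, Complex.norm_real, Real.norm_eq_abs, _root_.abs_of_nonneg (by linarith)]
  have hinner : ∀ n ∈ Finset.Icc 1 N, ∑ m ∈ Finset.Icc 1 N, ‖J n m‖
      ≤ (b - a) + (4 + 16 * s) / g := by
    intro n hn
    rw [← Finset.sum_erase_add _ _ hn, hJnn n]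
    have h1 : ∑ m ∈ (Finset.Icc 1 N).erase n, ‖J n m‖
        ≤ ∑ m ∈ (Finset.Icc 1 N).erase n,
            2 * (|u' n a - u' m a|⁻¹ + |u' n b - u' m b|⁻¹) := by
      apply Finset.sum_le_sum
      intro m hm
      have hnm : n ≠ m := (Finset.ne_of_mem_erase hm).symm
      refine (hoff n m hnm).trans ?_
      have hA : 0 < |u' n a - u' m a| := hg.trans_le (hgap n m hnm a hmem_a)
      have hB : 0 < |u' n b - u' m b| := hg.trans_le (hgap n m hnm b hmem_b)
      have hmin : (min |u' n a - u' m a| |u' n b - u' m b|)⁻¹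
          ≤ |u' n a - u' m a|⁻¹ + |u' n b - u' m b|⁻¹ := by
        rcases min_choice |u' n a - u' m a| |u' n b - u' m b| with h | h <;> rw [h]
        · have : (0:ℝ) ≤ |u' n b - u' m b|⁻¹ := by positivity
          linarith
        · have : (0:ℝ) ≤ |u' n a - u' m a|⁻¹ := by positivity
          linarith
      linarith
    have h2 : ∑ m ∈ (Finset.Icc 1 N).erase n,
        2 * (|u' n a - u' m a|⁻¹ + |u' n b - u' m b|⁻¹)
        = 2 * ((∑ m ∈ (Finset.Icc 1 N).erase n, |u' n a - u' m a|⁻¹)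
            + ∑ m ∈ (Finset.Icc 1 N).erase n, |u' n b - u' m b|⁻¹) := by
      rw [← Finset.mul_sum, Finset.sum_add_distrib]
    have h3 := hsep_pt a hmem_a n
    have h4 := hsep_pt b hmem_b n
    have h5 : (4 + 16 * s) / g = 2 * ((1 + 4*s)/g + (1 + 4*s)/g) := by
      field_simp
      ring
    rw [h5]
    linarith
  -- total bound
  have htotal : (∑ n ∈ Finset.Icc 1 N, ∑ m ∈ Finset.Icc 1 N, J n m).re
      ≤ (N:ℝ) * ((b - a) + (4 + 16 * s) / g) := by
    have h1 : (∑ n ∈ Finset.Icc 1 N, ∑ m ∈ Finset.Icc 1 N, J n m).re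
        ≤ ‖∑ n ∈ Finset.Icc 1 N, ∑ m ∈ Finset.Icc 1 N, J n m‖ := by
      exact Complex.re_le_norm _
    refine h1.trans ?_
    have h2 : ‖∑ n ∈ Finset.Icc 1 N, ∑ m ∈ Finset.Icc 1 N, J n m‖
        ≤ ∑ n ∈ Finset.Icc 1 N, ∑ m ∈ Finset.Icc 1 N, ‖J n m‖ := by
      refine (norm_sum_le _ _).trans ?_
      exact Finset.sum_le_sum fun n _ => norm_sum_le _ _
    refine h2.trans ?_
    have h3 : ∑ n ∈ Finset.Icc 1 N, ∑ m ∈ Finset.Icc 1 N, ‖J n m‖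
        ≤ (Finset.Icc 1 N).card • ((b - a) + (4 + 16 * s) / g) :=
      Finset.sum_le_card_nsmul _ _ _ hinner
    rw [Nat.card_Icc] at h3
    have : (N + 1 - 1) = N := by omega
    rw [this, nsmul_eq_mul] at h3
    exact h3
  -- conclude
  have hfinal : ((N:ℝ)⁻¹)^2 * (∑ n ∈ Finset.Icc 1 N, ∑ m ∈ Finset.Icc 1 N, J n m).re
      ≤ ((N:ℝ)⁻¹)^2 * ((N:ℝ) * ((b - a) + (4 + 16 * s) / g)) :=
    mul_le_mul_of_nonneg_left htotal (by positivity)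
  refine hfinal.trans ?_
  have heq1 : ((N:ℝ)⁻¹)^2 * ((N:ℝ) * ((b - a) + (4 + 16 * s) / g))
      = (b - a)/(N:ℝ) + 4/(g*(N:ℝ)) + 16*s/(g*(N:ℝ)) := by
    field_simp
    ring
  rw [heq1]
  have h16 : 16*s/(g*(N:ℝ)) = 16/(g*s) := by
    rw [← hss]
    field_simp
  rw [h16]
  have e1 : (b - a)/(N:ℝ) ≤ (b - a)/s :=
    div_le_div_of_nonneg_left (by linarith) hs0 hsN
  have e2 : 4/(g*(N:ℝ)) ≤ 4/(g*s) := by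
    apply div_le_div_of_nonneg_left (by norm_num) (by positivity)
    nlinarith
  have e3 : ((b - a) + 20/g)/s = (b - a)/s + 4/(g*s) + 16/(g*s) := by
    field_simp
    ring
  rw [e3]
  linarith



lemma weylAvg'_zero (v : ℕ → ℝ) : weylAvg' v 0 = 0 := by
  rw [weylAvg']
  simp

lemma norm_term (r : ℝ) : ‖Complex.exp (2 * Real.pi * Complex.I * (r:ℂ))‖ = 1 := by
  rw [Complex.norm_exp]
  have : (2 * (Real.pi:ℂ) * Complex.I * (r:ℂ)).re = 0 := by
    simp [Complex.mul_re, Complex.mul_im]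
  rw [this, Real.exp_zero]

lemma weyl_diff (v : ℕ → ℝ) {K N : ℕ} (hK : K ≤ N) (hN : 0 < N) :
    ‖weylAvg' v N‖ ≤ ‖weylAvg' v K‖ + ((N:ℝ) - K) / N := by
  have hNR : (0:ℝ) < N := by exact_mod_cast hN
  set e : ℕ → ℂ := fun n => Complex.exp (2 * Real.pi * Complex.I * (v n : ℂ)) with he
  have hsplit : ∑ n ∈ Finset.Icc 1 N, e n
      = (∑ n ∈ Finset.Icc 1 K, e n) + ∑ n ∈ Finset.Ioc K N, e n := by
    have hIcc : ∀ M : ℕ, Finset.Icc 1 M = Finset.Ioc 0 M := by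
      intro M; ext x; simp [Finset.mem_Icc, Finset.mem_Ioc]; omega
    rw [hIcc, hIcc]
    exact (Finset.sum_Ioc_consecutive _ (Nat.zero_le K) hK).symm
  have htail : ‖∑ n ∈ Finset.Ioc K N, e n‖ ≤ (N:ℝ) - K := by
    refine (norm_sum_le _ _).trans ?_
    have : ∀ n ∈ Finset.Ioc K N, ‖e n‖ = 1 := fun n _ => norm_term (v n)
    rw [Finset.sum_congr rfl this]
    rw [Finset.sum_const, Nat.card_Ioc, nsmul_eq_mul, mul_one]
    rw [Nat.cast_sub hK]
  have hhead : ‖∑ n ∈ Finset.Icc 1 K, e n‖ = (K:ℝ) * ‖weylAvg' v K‖ := by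
    rcases Nat.eq_zero_or_pos K with hK0 | hK0
    · subst hK0
      simp [weylAvg'_zero]
    · have hKR : (0:ℝ) < K := by exact_mod_cast hK0
      rw [weylAvg']
      rw [norm_mul, norm_inv, Complex.norm_natCast]
      field_simp
      rfl
  have : weylAvg' v N = (N:ℂ)⁻¹ * (∑ n ∈ Finset.Icc 1 K, e n)
      + (N:ℂ)⁻¹ * ∑ n ∈ Finset.Ioc K N, e n := by
    rw [weylAvg', hsplit]
    ring
  rw [this]
  refine (norm_add_le _ _).trans ?_
  have h1 : ‖(N:ℂ)⁻¹ * ∑ n ∈ Finset.Icc 1 K, e n‖ ≤ ‖weylAvg' v K‖ := by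
    rw [norm_mul, norm_inv, Complex.norm_natCast, hhead]
    rw [← mul_assoc]
    have hfrac : (N:ℝ)⁻¹ * K ≤ 1 := by
      rw [← div_eq_inv_mul, div_le_one hNR]
      exact_mod_cast hK
    nlinarith [norm_nonneg (weylAvg' v K), hfrac, inv_nonneg.2 hNR.le,
      mul_nonneg (inv_nonneg.2 hNR.le) (Nat.cast_nonneg K : (0:ℝ) ≤ K)]
  have h2 : ‖(N:ℂ)⁻¹ * ∑ n ∈ Finset.Ioc K N, e n‖ ≤ ((N:ℝ) - K) / N := by
    rw [norm_mul, norm_inv, Complex.norm_natCast]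
    rw [div_eq_inv_mul]
    have hsub : (0:ℝ) ≤ (N:ℝ) - K := by
      have : (K:ℝ) ≤ N := by exact_mod_cast hK
      linarith
    calc (N:ℝ)⁻¹ * ‖∑ n ∈ Finset.Ioc K N, e n‖
        ≤ (N:ℝ)⁻¹ * ((N:ℝ) - K) :=
          mul_le_mul_of_nonneg_left htail (inv_nonneg.2 hNR.le)
      _ = (N:ℝ)⁻¹ * ((N:ℝ) - K) := rfl
  linarith

lemma msqrt_le {N : ℕ} : (Nat.sqrt (Nat.sqrt N))^4 ≤ N := by
  set m := Nat.sqrt (Nat.sqrt N)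
  have h1 : m * m ≤ Nat.sqrt N := Nat.sqrt_le (Nat.sqrt N)
  have h2 : Nat.sqrt N * Nat.sqrt N ≤ N := Nat.sqrt_le N
  calc m^4 = (m*m)*(m*m) := by ring
    _ ≤ Nat.sqrt N * Nat.sqrt N := Nat.mul_le_mul h1 h1
    _ ≤ N := h2

lemma lt_msqrt_succ {N : ℕ} : N < (Nat.sqrt (Nat.sqrt N) + 1)^4 := by
  set m := Nat.sqrt (Nat.sqrt N)
  have h1 : Nat.sqrt N < (m+1)*(m+1) := Nat.lt_succ_sqrt (Nat.sqrt N)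
  have h2 : N < (Nat.sqrt N + 1)*(Nat.sqrt N + 1) := Nat.lt_succ_sqrt N
  have h3 : Nat.sqrt N + 1 ≤ (m+1)*(m+1) := h1
  calc N < (Nat.sqrt N + 1)*(Nat.sqrt N + 1) := h2
    _ ≤ ((m+1)*(m+1)) * ((m+1)*(m+1)) := Nat.mul_le_mul h3 h3
    _ = (m+1)^4 := by ring

lemma msqrt_tendsto : Tendsto (fun N => Nat.sqrt (Nat.sqrt N)) atTop atTop := by
  apply tendsto_atTop_atTop.2
  intro B
  refine ⟨B^4, fun N hN => ?_⟩
  have h1 : Nat.sqrt (B^4) = B^2 := by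
    have : B^4 = (B^2) * (B^2) := by ring
    rw [this, Nat.sqrt_eq]
  have h2 : Nat.sqrt (B^2) = B := by
    have : B^2 = B * B := by ring
    rw [this, Nat.sqrt_eq]
  calc B = Nat.sqrt (Nat.sqrt (B^4)) := by rw [h1, h2]
    _ ≤ Nat.sqrt (Nat.sqrt N) := Nat.sqrt_le_sqrt (Nat.sqrt_le_sqrt hN)

lemma fill (v : ℕ → ℝ)
    (h : Tendsto (fun M : ℕ => weylAvg' v (M^4)) atTop (𝓝 0)) :
    Tendsto (fun N => weylAvg' v N) atTop (𝓝 0) := by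
  set m : ℕ → ℕ := fun N => Nat.sqrt (Nat.sqrt N) with hm
  rw [tendsto_zero_iff_norm_tendsto_zero]
  apply squeeze_zero' (Eventually.of_forall (fun N => norm_nonneg _))
    (g := fun N => ‖weylAvg' v ((m N)^4)‖ + 15 / (m N : ℝ))
  · -- eventual bound
    have hev : ∀ᶠ N : ℕ in atTop, 1 ≤ m N := msqrt_tendsto.eventually_ge_atTop 1
    filter_upwards [hev, eventually_ge_atTop 1] with N hmN hN1
    have hmle : (m N)^4 ≤ N := msqrt_le
    have hNpos : 0 < N := hN1
    have hd := weyl_diff v hmle hNpos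
    refine hd.trans ?_
    have hfrac : ((N:ℝ) - ((m N)^4 : ℕ)) / N ≤ 15 / (m N : ℝ) := by
      have hmR : (1:ℝ) ≤ (m N : ℝ) := by exact_mod_cast hmN
      have hm0 : (0:ℝ) < (m N : ℝ) := by linarith
      have hNR : (0:ℝ) < (N:ℝ) := by exact_mod_cast hNpos
      have hup : (N:ℝ) < (((m N) + 1 : ℕ)^4 : ℕ) := by
        exact_mod_cast lt_msqrt_succ
      have hlo : (((m N)^4 : ℕ) : ℝ) ≤ (N:ℝ) := by exact_mod_cast hmle
      push_cast at hup hlo ⊢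
      rw [div_le_div_iff₀ hNR hm0]
      have hm4pos : (0:ℝ) < (m N : ℝ)^4 := by positivity
      -- N - m^4 ≤ 4m^3+6m^2+4m+1 ≤ 15 m^3 and N ≥ m^4
      nlinarith [hm4pos, hmR, sq_nonneg ((m N : ℝ))]
    linarith
  · -- tendsto 0
    have h1 : Tendsto (fun N => ‖weylAvg' v ((m N)^4)‖) atTop (𝓝 0) := by
      have := (h.norm).comp msqrt_tendsto
      rw [norm_zero] at this
      exact this
    have h2 : Tendsto (fun N => 15 / (m N : ℝ)) atTop (𝓝 0) := by
      have hbase : Tendsto (fun M : ℕ => 15 / (M : ℝ)) atTop (𝓝 0) :=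
        tendsto_const_div_atTop_nhds_zero_nat 15
      have := hbase.comp msqrt_tendsto
      exact this
    simpa using h1.add h2



lemma ae_subseq {a b : ℝ} (hab : a < b) {u u' : ℕ → ℝ → ℝ}
    (hderiv : ∀ n, ∀ x ∈ Set.Icc a b, HasDerivWithinAt (u n) (u' n x) (Set.Icc a b) x)
    (hcont : ∀ n, ContinuousOn (u' n) (Set.Icc a b))
    {g : ℝ} (hg : 0 < g)
    (hmono : ∀ n m : ℕ, n ≠ m →
      MonotoneOn (fun x => |u' n x - u' m x|) (Set.Icc a b) ∨
      AntitoneOn (fun x => |u' n x - u' m x|) (Set.Icc a b))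
    (hgap : ∀ n m : ℕ, n ≠ m → ∀ x ∈ Set.Icc a b, g ≤ |u' n x - u' m x|)
    (k : ℤ) (hk : k ≠ 0) :
    ∀ᵐ x ∂(volume.restrict (Icc a b)),
      Tendsto (fun M : ℕ => weylAvg' (fun n => (k:ℝ) * u n x) (M^4)) atTop (𝓝 0) := by
  set μ := volume.restrict (Icc a b) with hμ
  set f : ℕ → ℝ → ℝ := fun M x => ‖weylAvg' (fun n => (k:ℝ) * u n x) (M^4)‖^2 with hf
  set C : ℝ := (b - a) + 20 / g with hC
  have hba : (0:ℝ) < b - a := sub_pos.2 hab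
  have hC0 : 0 < C := by rw [hC]; positivity
  have hucont : ∀ n, ContinuousOn (u n) (Icc a b) :=
    fun n x hx => (hderiv n x hx).continuousWithinAt
  have hWcont : ∀ N : ℕ, ContinuousOn (fun x => weylAvg' (fun n => (k:ℝ)*u n x) N)
      (Icc a b) := by
    intro N
    unfold weylAvg'
    apply ContinuousOn.mul continuousOn_const
    apply continuousOn_finset_sum
    intro n _
    exact Complex.continuous_exp.comp_continuousOn
      (continuousOn_const.mul (Complex.continuous_ofReal.comp_continuousOn
        (continuousOn_const.mul (hucont n))))
  have hfcont : ∀ M, ContinuousOn (f M) (Icc a b) :=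
    fun M => ((hWcont (M^4)).norm).pow 2
  have hfmeas : ∀ M, AEMeasurable (f M) μ :=
    fun M => (hfcont M).aemeasurable measurableSet_Icc
  have hfint : ∀ M, IntegrableOn (f M) (Icc a b) volume :=
    fun M => (hfcont M).integrableOn_compact isCompact_Icc
  have hfnn : ∀ M x, 0 ≤ f M x := fun M x => by rw [hf]; positivity
  have hbound : ∀ M : ℕ, 1 ≤ M → ∫ x in Icc a b, f M x ≤ C / (M:ℝ)^2 := by
    intro M hM
    have hN4 : 1 ≤ M^4 := Nat.one_le_pow 4 M hM
    have h := l2_bound hab hderiv hcont hg hmono hgap k hk (M^4) hN4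
    have hsq : Real.sqrt ((M^4 : ℕ) : ℝ) = (M:ℝ)^2 := by
      push_cast
      rw [show ((M:ℝ))^4 = ((M:ℝ)^2)^2 by ring, Real.sqrt_sq (by positivity)]
    rw [hsq] at h
    exact h
  have hlint : ∀ M : ℕ, ∫⁻ x, ENNReal.ofReal (f M x) ∂μ
      = ENNReal.ofReal (∫ x, f M x ∂μ) :=
    fun M => (MeasureTheory.ofReal_integral_eq_lintegral_ofReal (hfint M)
      (Eventually.of_forall fun x => hfnn M x)).symm
  have hsum : ∑' M : ℕ, ∫⁻ x, ENNReal.ofReal (f M x) ∂μ ≠ ⊤ := by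
    have hle : ∀ M : ℕ, ∫⁻ x, ENNReal.ofReal (f M x) ∂μ
        ≤ ENNReal.ofReal (C / (M:ℝ)^2) := by
      intro M
      rw [hlint M]
      rcases Nat.eq_zero_or_pos M with h0 | h1
      · subst h0
        have hz : ∀ x : ℝ, f 0 x = 0 := by
          intro x
          rw [hf]
          norm_num [weylAvg'_zero]
        simp only [hz]
        simp
      · exact ENNReal.ofReal_le_ofReal (hbound M h1)
    refine ne_top_of_le_ne_top ?_ (ENNReal.tsum_le_tsum hle)
    have hsummable : Summable (fun M : ℕ => C / (M:ℝ)^2) := by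
      have h := Real.summable_one_div_nat_pow.2 (by norm_num : 1 < 2)
      have h2 := h.mul_left C
      refine h2.congr (fun M => ?_)
      ring
    rw [← ENNReal.ofReal_tsum_of_nonneg (fun M => by positivity) hsummable]
    exact ENNReal.ofReal_ne_top
  have hae : ∀ᵐ x ∂μ, ∑' M : ℕ, ENNReal.ofReal (f M x) ≠ ⊤ := by
    have hmeas2 : ∀ M : ℕ, AEMeasurable (fun x => ENNReal.ofReal (f M x)) μ :=
      fun M => (hfmeas M).ennreal_ofReal
    have htsum := MeasureTheory.lintegral_tsum hmeas2
    have hfin : ∫⁻ x, (∑' M, ENNReal.ofReal (f M x)) ∂μ ≠ ⊤ := by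
      rw [htsum]; exact hsum
    exact (ae_lt_top' (AEMeasurable.ennreal_tsum hmeas2) hfin).mono fun x hx => hx.ne
  filter_upwards [hae] with x hx
  have h1 : Tendsto (fun M => ENNReal.ofReal (f M x)) atTop (𝓝 0) :=
    ENNReal.tendsto_atTop_zero_of_tsum_ne_top hx
  have h2 : Tendsto (fun M => f M x) atTop (𝓝 0) := by
    have h3 := (ENNReal.tendsto_toReal (ENNReal.zero_ne_top)).comp h1
    simp only [ENNReal.toReal_zero] at h3
    exact Tendsto.congr (fun M => by
      simp only [Function.comp]
      exact ENNReal.toReal_ofReal (hfnn M x)) h3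
  rw [tendsto_zero_iff_norm_tendsto_zero]
  have h5 := (Real.continuous_sqrt.tendsto 0).comp h2
  simp only [Function.comp, Real.sqrt_zero] at h5
  refine Tendsto.congr (fun M => ?_) h5
  simp only [Function.comp]
  rw [hf]
  exact Real.sqrt_sq (norm_nonneg _)

end Koksma
end
end KoksmaAux

theorem stmt3 (a b : ℝ) (hab : a < b) (u u' : ℕ → ℝ → ℝ)
    (hderiv : ∀ n, ∀ x ∈ Set.Icc a b, HasDerivWithinAt (u n) (u' n x) (Set.Icc a b) x)
    (hcont : ∀ n, ContinuousOn (u' n) (Set.Icc a b))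
    (g : ℝ) (hg : 0 < g)
    (hmono : ∀ n m : ℕ, n ≠ m →
      MonotoneOn (fun x => |u' n x - u' m x|) (Set.Icc a b) ∨
      AntitoneOn (fun x => |u' n x - u' m x|) (Set.Icc a b))
    (hgap : ∀ n m : ℕ, n ≠ m → ∀ x ∈ Set.Icc a b, g ≤ |u' n x - u' m x|) :
    ∀ᵐ x ∂(volume : Measure ℝ), x ∈ Set.Icc a b → UDmod1 (fun n => u n x) := by
  have key : ∀ k : ℤ, ∀ᵐ x ∂((volume : Measure ℝ).restrict (Set.Icc a b)),
      k ≠ 0 → Tendsto (fun N => weylAvg (fun n => (k:ℝ) * u n x) N) atTop (nhds 0) := by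
    intro k
    by_cases hk : k = 0
    · exact MeasureTheory.ae_of_all _ (fun x h => absurd hk h)
    · filter_upwards [Koksma.ae_subseq hab hderiv hcont hg hmono hgap k hk] with x hx
      intro _
      exact Koksma.fill (fun n => (k:ℝ) * u n x) hx
  have hall := (MeasureTheory.ae_all_iff).2 key
  have hres := (MeasureTheory.ae_restrict_iff' measurableSet_Icc).1 hall
  filter_upwards [hres] with x hx hmem
  intro k hk
  exact hx hmem k hk
end

section
/- Let (a_n) be an injective sequence of integers, and for each N ∈ ℕ let S_N ⊆ ℕ be a finite set with ∑_N |S_N|^{−1} < ∞. Then for every continuous function f : ℝ/ℤ → ℝ, for Lebesgue almost every x ∈ [0,1], (1/|S_N|) ∑_{n ∈ S_N} f(a_n x mod 1) → ∫_0^1 f(t) dt as N → ∞. -/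
open Filter MeasureTheory Set
open scoped Topology

section Aux
open AddCircle Complex Submodule
open scoped ComplexConjugate ENNReal

private lemma my_haar_eq : (haarAddCircle : Measure (AddCircle (1:ℝ))) = volume := by
  rw [AddCircle.volume_eq_smul_haarAddCircle]; simp

private lemma my_cont_integrable' (g : C(AddCircle (1:ℝ), ℂ)) :
    Integrable g (haarAddCircle) :=
  g.continuous.integrable_of_hasCompactSupport (HasCompactSupport.of_compactSpace _)

private lemma my_integral_fourier' (j : ℤ) :
    ∫ y : AddCircle (1:ℝ), fourier j y ∂haarAddCircle = if j = 0 then 1 else 0 := by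
  split_ifs with h
  · subst h; simp [fourier_zero]
  · exact integral_eq_zero_of_add_right_eq_neg (μ := haarAddCircle)
      (fourier_add_half_inv_index h one_pos)

private lemma my_l2 (c : ℕ → ℤ) (hc : Function.Injective c) (S : Finset ℕ) :
    ∫ y : AddCircle (1:ℝ), ‖∑ n ∈ S, fourier (c n) y‖^2 ∂haarAddCircle = S.card := by
  have e1 : ∀ y : AddCircle (1:ℝ), ((‖∑ n ∈ S, fourier (c n) y‖^2 : ℝ) : ℂ)
      = ∑ n ∈ S, ∑ m ∈ S, fourier (c n - c m) y := by
    intro y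
    rw [← Complex.normSq_eq_norm_sq, ← Complex.mul_conj, map_sum,
      Finset.sum_mul_sum]
    refine Finset.sum_congr rfl fun n _ => Finset.sum_congr rfl fun m _ => ?_
    rw [← fourier_neg, ← fourier_add, ← sub_eq_add_neg]
  have key : ∫ y : AddCircle (1:ℝ), ((‖∑ n ∈ S, fourier (c n) y‖^2 : ℝ) : ℂ) ∂haarAddCircle
      = (S.card : ℂ) := by
    simp_rw [e1]
    rw [integral_finset_sum _ (fun n _ => integrable_finset_sum _
      (fun m _ => my_cont_integrable' (fourier (c n - c m))))]
    simp_rw [integral_finset_sum _ (fun m (_ : m ∈ S) =>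
      my_cont_integrable' (fourier (c _ - c m))), my_integral_fourier', sub_eq_zero, hc.eq_iff]
    rw [Finset.sum_congr rfl (fun n hn => ?_)]
    · rw [Finset.sum_const, nsmul_eq_mul, mul_one]
    · rw [Finset.sum_ite_eq _ n (fun _ => (1:ℂ)), if_pos hn]
  have h2 : ∫ y : AddCircle (1:ℝ), ((‖∑ n ∈ S, fourier (c n) y‖^2 : ℝ) : ℂ) ∂haarAddCircle
      = ((∫ y : AddCircle (1:ℝ), ‖∑ n ∈ S, fourier (c n) y‖^2 ∂haarAddCircle : ℝ) : ℂ) :=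
    integral_ofReal (𝕜 := ℂ)
  rw [h2] at key
  exact_mod_cast key

private lemma my_ae_tendsto (c : ℕ → ℤ) (hc : Function.Injective c)
    (S : ℕ → Finset ℕ) (hne : ∀ N, (S N).Nonempty)
    (hsum : Summable (fun N => ((S N).card : ℝ)⁻¹)) :
    ∀ᵐ y ∂(haarAddCircle : Measure (AddCircle (1:ℝ))),
      Tendsto (fun N => ((S N).card : ℂ)⁻¹ * ∑ n ∈ S N, fourier (c n) y) atTop (𝓝 0) := by
  set h : ℕ → AddCircle (1:ℝ) → ℂ :=
    fun N y => ((S N).card : ℂ)⁻¹ * ∑ n ∈ S N, fourier (c n) y with hh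
  have hcont : ∀ N, Continuous (h N) := by
    intro N
    exact continuous_const.mul (continuous_finset_sum _ fun n _ => (fourier (c n)).continuous)
  have hcard : ∀ N, (0:ℝ) < (S N).card := fun N => by
    exact_mod_cast (hne N).card_pos
  have hint : ∀ N, ∫ y, ‖h N y‖^2 ∂(haarAddCircle : Measure (AddCircle (1:ℝ)))
      = ((S N).card : ℝ)⁻¹ := by
    intro N
    have : ∀ y, ‖h N y‖^2
        = (((S N).card : ℝ)⁻¹)^2 * ‖∑ n ∈ S N, fourier (c n) y‖^2 := by
      intro y
      rw [hh]; simp [norm_mul, mul_pow]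
    simp_rw [this]
    rw [integral_const_mul, my_l2 c hc]
    field_simp
  have hInt : ∀ N, Integrable (fun y => ‖h N y‖^2)
      (haarAddCircle : Measure (AddCircle (1:ℝ))) := fun N =>
    (((hcont N).norm.pow 2)).integrable_of_hasCompactSupport
      (HasCompactSupport.of_compactSpace _)
  set G : ℕ → AddCircle (1:ℝ) → ℝ≥0∞ := fun N y => ENNReal.ofReal (‖h N y‖^2) with hG
  have hGmeas : ∀ N, Measurable (G N) := fun N =>
    ((hcont N).norm.pow 2).measurable.ennreal_ofReal
  have hGint : ∀ N, ∫⁻ y, G N y ∂(haarAddCircle : Measure (AddCircle (1:ℝ)))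
      = ENNReal.ofReal (((S N).card : ℝ)⁻¹) := by
    intro N
    rw [← ofReal_integral_eq_lintegral_ofReal (hInt N)
      (Eventually.of_forall fun y => by positivity), hint]
  have htsum : ∫⁻ y, ∑' N, G N y ∂(haarAddCircle : Measure (AddCircle (1:ℝ))) ≠ ∞ := by
    rw [lintegral_tsum fun N => (hGmeas N).aemeasurable]
    simp_rw [hGint]
    rw [← ENNReal.ofReal_tsum_of_nonneg (fun N => by positivity) hsum]
    exact ENNReal.ofReal_ne_top
  have hae : ∀ᵐ y ∂(haarAddCircle : Measure (AddCircle (1:ℝ))), ∑' N, G N y < ∞ :=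
    ae_lt_top (Measurable.ennreal_tsum hGmeas) htsum
  filter_upwards [hae] with y hy
  have h1 : Tendsto (fun N => G N y) atTop (𝓝 0) :=
    ENNReal.tendsto_atTop_zero_of_tsum_ne_top hy.ne
  have h2 : Tendsto (fun N => ‖h N y‖^2) atTop (𝓝 0) := by
    have h2' := (ENNReal.tendsto_toReal (by simp)).comp h1
    have he : (ENNReal.toReal ∘ fun N => G N y) = fun N => ‖h N y‖^2 := by
      funext N; simp only [hG, Function.comp_apply]; exact ENNReal.toReal_ofReal (sq_nonneg _)
    rw [he] at h2'
    simpa using h2'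
  have h3 : Tendsto (fun N => ‖h N y‖) atTop (𝓝 0) := by
    have h3' := (Real.continuous_sqrt.tendsto 0).comp h2
    have he : (Real.sqrt ∘ fun N => ‖h N y‖^2) = fun N => ‖h N y‖ := by
      funext N; exact Real.sqrt_sq (norm_nonneg _)
    rw [he] at h3'
    simpa using h3'
  exact tendsto_zero_iff_norm_tendsto_zero.2 h3

private lemma my_ae_fourier (a : ℕ → ℤ) (ha : Function.Injective a)
    (S : ℕ → Finset ℕ) (hne : ∀ N, (S N).Nonempty)
    (hsum : Summable (fun N => ((S N).card : ℝ)⁻¹)) :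
    ∀ᵐ y ∂(haarAddCircle : Measure (AddCircle (1:ℝ))), ∀ j : ℤ,
      Tendsto (fun N => ((S N).card : ℂ)⁻¹ * ∑ n ∈ S N, fourier j ((a n) • y)) atTop
        (𝓝 (∫ t, fourier j t ∂(haarAddCircle : Measure (AddCircle (1:ℝ))))) := by
  rw [ae_all_iff]
  intro j
  rcases eq_or_ne j 0 with rfl | hj
  · refine Eventually.of_forall fun y => ?_
    have : ∀ N, ((S N).card : ℂ)⁻¹ * ∑ n ∈ S N, fourier (0:ℤ) ((a n) • y) = 1 := by
      intro N
      have hc : ((S N).card : ℂ) ≠ 0 := by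
        exact_mod_cast Nat.cast_ne_zero.2 (hne N).card_pos.ne'
      simp only [fourier_zero, Finset.sum_const, nsmul_eq_mul, mul_one]
      exact inv_mul_cancel₀ hc
    simp_rw [this, my_integral_fourier']
    simp
  · have hc : Function.Injective (fun n => j * a n) := fun n m h => by
      exact ha (mul_left_cancel₀ hj h)
    filter_upwards [my_ae_tendsto _ hc S hne hsum] with y hy
    have he : ∀ N, ((S N).card : ℂ)⁻¹ * ∑ n ∈ S N, fourier (j * a n) y
        = ((S N).card : ℂ)⁻¹ * ∑ n ∈ S N, fourier j ((a n) • y) := by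
      intro N
      congr 1
      refine Finset.sum_congr rfl fun n _ => ?_
      rw [fourier_apply, fourier_apply, smul_smul]
    simp_rw [he] at hy
    rw [my_integral_fourier', if_neg hj]
    exact hy

private lemma my_extend (p : ℕ → AddCircle (1:ℝ)) (S : ℕ → Finset ℕ) (hne : ∀ N, (S N).Nonempty)
    (hy : ∀ j : ℤ, Tendsto (fun N => ((S N).card : ℂ)⁻¹ * ∑ n ∈ S N, fourier j (p n)) atTop
        (𝓝 (∫ t, fourier j t ∂(haarAddCircle : Measure (AddCircle (1:ℝ))))))
    (g : C(AddCircle (1:ℝ), ℂ)) :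
    Tendsto (fun N => ((S N).card : ℂ)⁻¹ * ∑ n ∈ S N, g (p n)) atTop
      (𝓝 (∫ t, g t ∂(haarAddCircle : Measure (AddCircle (1:ℝ))))) := by
  set A : ℕ → C(AddCircle (1:ℝ), ℂ) → ℂ :=
    fun N g => ((S N).card : ℂ)⁻¹ * ∑ n ∈ S N, g (p n) with hA
  set L : C(AddCircle (1:ℝ), ℂ) → ℂ :=
    fun g => ∫ t, g t ∂(haarAddCircle : Measure (AddCircle (1:ℝ))) with hL
  have hcard : ∀ N, ((S N).card : ℝ) ≠ 0 := fun N =>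
    Nat.cast_ne_zero.2 (hne N).card_pos.ne'
  have hAbound : ∀ N h, ‖A N h‖ ≤ ‖h‖ := by
    intro N h
    calc ‖A N h‖ = ((S N).card : ℝ)⁻¹ * ‖∑ n ∈ S N, h (p n)‖ := by
          rw [hA]; simp [norm_mul]
      _ ≤ ((S N).card : ℝ)⁻¹ * ∑ n ∈ S N, ‖h (p n)‖ := by
          gcongr
          exact norm_sum_le _ _
      _ ≤ ((S N).card : ℝ)⁻¹ * ∑ n ∈ S N, ‖h‖ := by
          gcongr with n hn
          exact h.norm_coe_le_norm _
      _ = ‖h‖ := by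
          rw [Finset.sum_const, nsmul_eq_mul, ← mul_assoc, inv_mul_cancel₀ (hcard N), one_mul]
  have hLbound : ∀ h : C(AddCircle (1:ℝ), ℂ), ‖L h‖ ≤ ‖h‖ := by
    intro h
    have := norm_integral_le_of_norm_le_const (μ := (haarAddCircle : Measure (AddCircle (1:ℝ))))
      (f := fun t => h t) (C := ‖h‖) (Eventually.of_forall fun t => h.norm_coe_le_norm t)
    simpa using this
  have hspan : ∀ P ∈ span ℂ (Set.range (@fourier 1)),
      Tendsto (fun N => A N P) atTop (𝓝 (L P)) := by
    intro P hP
    induction hP using Submodule.span_induction with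
    | mem x hx =>
        obtain ⟨j, rfl⟩ := hx
        exact hy j
    | zero =>
        have hz : ∀ N, A N 0 = 0 := fun N => by simp [hA]
        have hz' : L 0 = 0 := by simp [hL]
        simp_rw [hz, hz']
        exact tendsto_const_nhds
    | add x y hx hy hx' hy' =>
        have hadd : ∀ N, A N (x + y) = A N x + A N y := fun N => by
          simp [hA, Finset.sum_add_distrib, mul_add]
        have hadd' : L (x + y) = L x + L y := by
          simp only [hL, ContinuousMap.add_apply]
          exact integral_add (my_cont_integrable' x) (my_cont_integrable' y)
        simp_rw [hadd, hadd']
        exact hx'.add hy'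
    | smul r x hx hx' =>
        have hs : ∀ N, A N (r • x) = r * A N x := fun N => by
          simp only [hA, ContinuousMap.smul_apply, smul_eq_mul, ← Finset.mul_sum]; ring
        have hs' : L (r • x) = r * L x := by
          simp only [hL, ContinuousMap.smul_apply, smul_eq_mul]
          rw [integral_const_mul]
        simp_rw [hs, hs']
        exact hx'.const_mul r
  have hmem : g ∈ (span ℂ (Set.range (@fourier 1))).topologicalClosure := by
    rw [span_fourier_closure_eq_top]; trivial
  rw [Metric.tendsto_atTop]
  intro ε hε
  have hg3 : ∃ P ∈ span ℂ (Set.range (@fourier 1)), ‖g - P‖ < ε/3 := by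
    have : g ∈ closure ((span ℂ (Set.range (@fourier 1)) : Submodule ℂ _) : Set _) := hmem
    rw [Metric.mem_closure_iff] at this
    obtain ⟨P, hP, hPd⟩ := this (ε/3) (by linarith)
    exact ⟨P, hP, by rwa [← dist_eq_norm]⟩
  obtain ⟨P, hP, hPg⟩ := hg3
  obtain ⟨N₀, hN₀⟩ := (Metric.tendsto_atTop.1 (hspan P hP)) (ε/3) (by linarith)
  refine ⟨N₀, fun N hN => ?_⟩
  have d1 : dist (A N g) (A N P) ≤ ε/3 := by
    rw [dist_eq_norm]
    have : A N g - A N P = A N (g - P) := by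
      simp [hA, Finset.sum_sub_distrib, mul_sub]
    rw [this]
    exact le_trans (hAbound N _) hPg.le
  have d2 : dist (L P) (L g) ≤ ε/3 := by
    rw [dist_eq_norm]
    have : L P - L g = L (P - g) := by
      simp only [hL, ContinuousMap.sub_apply]
      rw [integral_sub (my_cont_integrable' P) (my_cont_integrable' g)]
    rw [this]
    refine le_trans (hLbound _) ?_
    rw [norm_sub_rev]
    exact hPg.le
  have htri : dist (A N g) (L g) ≤ dist (A N g) (A N P) + dist (A N P) (L P) + dist (L P) (L g) :=
    dist_triangle4 _ _ _ _
  have h3 := hN₀ N hN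
  linarith

end Aux

open AddCircle Complex in
theorem stmt4 (a : ℕ → ℤ) (ha : Function.Injective a)
    (S : ℕ → Finset ℕ) (hne : ∀ N, (S N).Nonempty)
    (hsum : Summable (fun N => ((S N).card : ℝ)⁻¹))
    (f : AddCircle (1 : ℝ) → ℝ) (hf : Continuous f) :
    ∀ᵐ x ∂(volume : Measure ℝ), x ∈ Set.Icc (0 : ℝ) 1 →
      Tendsto (fun N => ((S N).card : ℝ)⁻¹ * ∑ n ∈ S N, f (((a n : ℝ) * x : ℝ)))
        atTop (nhds (∫ t : AddCircle (1 : ℝ), f t)) := by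
  have hae := my_ae_fourier a ha S hne hsum
  have hmp := AddCircle.measurePreserving_mk 1 0
  have hmap : Measure.map ((↑) : ℝ → AddCircle (1:ℝ)) (volume.restrict (Ioc (0:ℝ) (0+1)))
      = (haarAddCircle : Measure (AddCircle (1:ℝ))) := by
    rw [hmp.map_eq, ← my_haar_eq]
  have h1 : ∀ᵐ x ∂(volume.restrict (Ioc (0:ℝ) (0+1))), ∀ j : ℤ,
      Tendsto (fun N => ((S N).card : ℂ)⁻¹ *
          ∑ n ∈ S N, fourier j ((a n) • ((x : ℝ) : AddCircle (1:ℝ)))) atTop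
        (𝓝 (∫ t, fourier j t ∂(haarAddCircle : Measure (AddCircle (1:ℝ))))) := by
    have h1' := ae_of_ae_map hmp.measurable.aemeasurable (hmap ▸ hae)
    rw [hmap] at h1'
    exact h1'
  rw [ae_restrict_iff' measurableSet_Ioc] at h1
  have h0 : ∀ᵐ x : ℝ ∂volume, x ≠ 0 := by
    rw [ae_iff]
    simp [not_not, Set.setOf_eq_eq_singleton, Real.volume_singleton (a := (0:ℝ))]
  filter_upwards [h1, h0] with x hx hx0 hIcc
  have hxI : x ∈ Ioc (0:ℝ) (0+1) :=
    ⟨lt_of_le_of_ne hIcc.1 (Ne.symm hx0), by simpa using hIcc.2⟩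
  set fC : C(AddCircle (1:ℝ), ℂ) := ⟨fun t => (f t : ℂ), Complex.continuous_ofReal.comp hf⟩
    with hfC
  have hg := my_extend (fun n => (a n) • ((x:ℝ) : AddCircle (1:ℝ))) S hne (hx hxI) fC
  -- rewrite points
  have hpt : ∀ n : ℕ, (a n) • ((x:ℝ) : AddCircle (1:ℝ)) = (((a n : ℝ) * x : ℝ) : AddCircle (1:ℝ)) := by
    intro n
    rw [← QuotientAddGroup.mk_zsmul]
    congr 1
    rw [zsmul_eq_mul]
  have hseq : ∀ N, ((S N).card : ℂ)⁻¹ * ∑ n ∈ S N, fC ((a n) • ((x:ℝ) : AddCircle (1:ℝ)))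
      = ((((S N).card : ℝ)⁻¹ * ∑ n ∈ S N, f (((a n : ℝ) * x : ℝ)) : ℝ) : ℂ) := by
    intro N
    simp_rw [hpt]
    push_cast
    rfl
  have hlim : ∫ t, fC t ∂(haarAddCircle : Measure (AddCircle (1:ℝ)))
      = ((∫ t : AddCircle (1:ℝ), f t : ℝ) : ℂ) := by
    rw [my_haar_eq]
    exact integral_ofReal (𝕜 := ℂ)
  rw [hlim] at hg
  simp_rw [hseq] at hg
  have hre := (Complex.continuous_re.tendsto _).comp hg
  simp only [Function.comp_def, Complex.ofReal_re] at hre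
  exact hre
end

section
/- Let a : ℕ → ℝ and suppose there exist ε, g > 0 such that |a(n) − a(m)| > g whenever m > n + n/(log n)^{1+ε}. Then for every ε' < ε and all sufficiently large N, (1/N²) ∑_{1 ≤ m < n ≤ N} min(|a(n) − a(m)|^{−1}, 1) ≤ 1/(log N)^{1+ε'}. In particular a is 1-scattered. -/
open Filter MeasureTheory Set
open scoped Topology

-- harmonic sum bound
lemma harm_le_log : ∀ K : ℕ, ∑ k ∈ Finset.Icc 2 K, (k:ℝ)⁻¹ ≤ Real.log K := by
  intro K
  induction K with
  | zero => simp
  | succ K ih =>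
    rcases Nat.lt_or_ge K 1 with hK | hK
    · interval_cases K <;> simp
    · rw [Finset.sum_Icc_succ_top (by omega : 2 ≤ K + 1)]
      have hK0 : (0:ℝ) < K := by exact_mod_cast hK
      have hK1 : (0:ℝ) < (K:ℝ) + 1 := by positivity
      have hlog : Real.log ((K:ℝ)/((K:ℝ)+1)) ≤ (K:ℝ)/((K:ℝ)+1) - 1 :=
        Real.log_le_sub_one_of_pos (by positivity)
      rw [Real.log_div hK0.ne' hK1.ne'] at hlog
      have : (K:ℝ)/((K:ℝ)+1) - 1 = -((K:ℝ)+1)⁻¹ := by field_simp; ring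
      rw [this] at hlog
      have : ((K+1:ℕ):ℝ) = (K:ℝ)+1 := by push_cast; ring
      rw [this]
      linarith

-- card of a set with pairwise gap condition
lemma card_le_of_gap (S : Finset ℕ) (b : ℕ)
    (hS : ∀ m ∈ S, ∀ m' ∈ S, m < m' → m' ≤ m + b) : S.card ≤ b + 1 := by
  rcases S.eq_empty_or_nonempty with rfl | hne
  · simp
  · have hsub : S ⊆ Finset.Icc (S.min' hne) (S.min' hne + b) := by
      intro m hm
      rw [Finset.mem_Icc]
      refine ⟨S.min'_le m hm, ?_⟩
      rcases eq_or_lt_of_le (S.min'_le m hm) with heq | hlt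
      · omega
      · exact hS _ (S.min'_mem hne) m hm hlt
    calc S.card ≤ (Finset.Icc (S.min' hne) (S.min' hne + b)).card := Finset.card_le_card hsub
    _ = b + 1 := by rw [Nat.card_Icc]; omega


lemma phi_bound (ε : ℝ) (hε : 0 < ε) (N : ℕ) (hN3 : 3 ≤ N)
    (hsq : (Real.log N)^((1:ℝ)+ε) * Real.sqrt N ≤ (2*Real.log 2)^((1:ℝ)+ε) * N) :
    ∀ m : ℕ, 2 ≤ m → m ≤ N →
      (m:ℝ)/(Real.log m)^((1:ℝ)+ε) ≤ 2^((1:ℝ)+ε)*(N:ℝ)/(Real.log N)^((1:ℝ)+ε) := by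
  intro m hm2 hmN
  set e : ℝ := (1:ℝ)+ε with he
  have hepos : (0:ℝ) < e := by positivity
  have hNpos : (0:ℝ) < N := by positivity
  have hN1 : (1:ℝ) < N := by exact_mod_cast (by omega : 1 < N)
  have hLN : (0:ℝ) < Real.log N := Real.log_pos hN1
  have hLNe : (0:ℝ) < (Real.log N)^e := Real.rpow_pos_of_pos hLN e
  have hlog2 : (0:ℝ) < Real.log 2 := Real.log_pos one_lt_two
  have hm2' : (2:ℝ) ≤ (m:ℝ) := by exact_mod_cast hm2
  have hlogm : Real.log 2 ≤ Real.log m := Real.log_le_log two_pos hm2'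
  have hlogmpos : (0:ℝ) < Real.log m := lt_of_lt_of_le hlog2 hlogm
  rcases le_or_gt (m:ℝ) (Real.sqrt N) with hcase | hcase
  · -- small m
    have h12 : (m:ℝ)/(Real.log m)^e ≤ Real.sqrt N/(Real.log 2)^e := by
      have := Real.rpow_le_rpow hlog2.le hlogm hepos.le
      gcongr
    refine h12.trans ?_
    rw [div_le_div_iff₀ (Real.rpow_pos_of_pos hlog2 e) hLNe]
    calc Real.sqrt N * (Real.log N)^e = (Real.log N)^e * Real.sqrt N := by ring
    _ ≤ (2*Real.log 2)^e * N := hsq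
    _ = 2^e * (Real.log 2)^e * N := by rw [Real.mul_rpow two_pos.le hlog2.le]
    _ = 2^e * N * (Real.log 2)^e := by ring
  · -- large m
    have hmN' : (m:ℝ) ≤ N := by exact_mod_cast hmN
    have hhalf : Real.log N / 2 ≤ Real.log m := by
      have := Real.log_le_log (Real.sqrt_pos.2 hNpos) hcase.le
      rwa [Real.log_sqrt hNpos.le] at this
    have hhalfpos : (0:ℝ) < Real.log N / 2 := by positivity
    have h2 : (m:ℝ)/(Real.log m)^e ≤ (N:ℝ)/(Real.log N / 2)^e := by
      have := Real.rpow_le_rpow hhalfpos.le hhalf hepos.le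
      gcongr
    refine h2.trans_eq ?_
    rw [Real.div_rpow hLN.le two_pos.le]
    rw [div_div_eq_mul_div, div_eq_div_iff (by positivity) hLNe.ne']
    ring


lemma hlognat : Tendsto (fun N : ℕ => Real.log N) atTop atTop :=
  Real.tendsto_log_atTop.comp tendsto_natCast_atTop_atTop

-- q1
lemma q1' (ε ε' : ℝ) (hlt : ε' < ε) :
    Tendsto (fun y : ℝ => y^((1:ℝ)+ε')/y^((1:ℝ)+ε)) atTop (nhds 0) := by
  have h0 := tendsto_rpow_neg_atTop (show (0:ℝ) < ε - ε' by linarith)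
  apply h0.congr'
  filter_upwards [eventually_gt_atTop (0:ℝ)] with y hy
  rw [show -(ε-ε') = ((1:ℝ)+ε') - ((1:ℝ)+ε) by ring, Real.rpow_sub hy]

-- generic: (log x)^c / x → 0
lemma qlogpow (c : ℝ) : Tendsto (fun x : ℝ => (Real.log x)^c / x) atTop (nhds 0) := by
  have h := (isLittleO_log_rpow_rpow_atTop c (one_pos)).tendsto_div_nhds_zero
  apply h.congr'
  filter_upwards [eventually_gt_atTop (0:ℝ)] with y hy
  rw [Real.rpow_one]

-- q3'
lemma q3' (ε ε' : ℝ) (hlt : ε' < ε) :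
    Tendsto (fun y : ℝ => Real.log y * (y^((1:ℝ)+ε')/y^((1:ℝ)+ε))) atTop (nhds 0) := by
  have h := (isLittleO_log_rpow_rpow_atTop 1 (show (0:ℝ) < ε - ε' by linarith)).tendsto_div_nhds_zero
  apply h.congr'
  filter_upwards [eventually_gt_atTop (0:ℝ)] with y hy
  rw [Real.rpow_one, show ((1:ℝ)+ε') = ((1:ℝ)+ε) + -(ε - ε') by ring, Real.rpow_add hy,
    Real.rpow_neg hy.le]
  field_simp

lemma ev_sq (ε : ℝ) (hε : 0 < ε) : ∀ᶠ N : ℕ in atTop,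
    (Real.log N)^((1:ℝ)+ε) * Real.sqrt N ≤ (2*Real.log 2)^((1:ℝ)+ε) * N := by
  have hl2 : (0:ℝ) < 2*Real.log 2 := by positivity
  have hc : (0:ℝ) < (2*Real.log 2)^((1:ℝ)+ε) := Real.rpow_pos_of_pos hl2 _
  have h := (isLittleO_log_rpow_rpow_atTop ((1:ℝ)+ε)
    (show (0:ℝ) < (1:ℝ)/2 by norm_num)).tendsto_div_nhds_zero
  have h2 := (h.comp tendsto_natCast_atTop_atTop).eventually_le_const hc
  filter_upwards [h2, eventually_ge_atTop 1] with N hN hN1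
  have hNpos : (0:ℝ) < N := by exact_mod_cast hN1
  have hs : ((N:ℝ))^((1:ℝ)/2) = Real.sqrt N := by rw [Real.sqrt_eq_rpow]
  simp only [Function.comp] at hN
  rw [hs] at hN
  have hsq : (0:ℝ) < Real.sqrt N := Real.sqrt_pos.2 hNpos
  have h3 : (Real.log N)^((1:ℝ)+ε) ≤ (2*Real.log 2)^((1:ℝ)+ε) * Real.sqrt N :=
    (div_le_iff₀ hsq).mp hN
  calc (Real.log N)^((1:ℝ)+ε) * Real.sqrt N
      ≤ ((2*Real.log 2)^((1:ℝ)+ε) * Real.sqrt N) * Real.sqrt N :=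
        mul_le_mul_of_nonneg_right h3 hsq.le
  _ = (2*Real.log 2)^((1:ℝ)+ε) * (Real.sqrt N * Real.sqrt N) := by ring
  _ = (2*Real.log 2)^((1:ℝ)+ε) * N := by rw [Real.mul_self_sqrt hNpos.le]

lemma psi_tendsto (ε g ε' : ℝ) (hε' : 0 < ε') (hlt : ε' < ε) (hg : 0 < g) :
    Tendsto (fun N : ℕ =>
      ((2^((1:ℝ)+ε)/(Real.log N)^((1:ℝ)+ε) + 2/(N:ℝ)) *
        (1 + (4*(3+ε)/g)*Real.log (Real.log N)) +
       (2/g)*(2^((1:ℝ)+ε)/(Real.log N)^((1:ℝ)+ε))) * (Real.log N)^((1:ℝ)+ε'))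
      atTop (nhds 0) := by
  have h1 : Tendsto (fun N : ℕ =>
      (Real.log N)^((1:ℝ)+ε')/(Real.log N)^((1:ℝ)+ε)) atTop (nhds 0) :=
    (q1' ε ε' hlt).comp hlognat
  have h2 : Tendsto (fun N : ℕ => (Real.log N)^((1:ℝ)+ε')/(N:ℝ)) atTop (nhds 0) :=
    (qlogpow ((1:ℝ)+ε')).comp tendsto_natCast_atTop_atTop
  have h3 : Tendsto (fun N : ℕ =>
      Real.log (Real.log N) * ((Real.log N)^((1:ℝ)+ε')/(Real.log N)^((1:ℝ)+ε)))
      atTop (nhds 0) := (q3' ε ε' hlt).comp hlognat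
  have h4 : Tendsto (fun N : ℕ =>
      Real.log (Real.log N) * ((Real.log N)^((1:ℝ)+ε')/(N:ℝ))) atTop (nhds 0) := by
    apply squeeze_zero' (g := fun N : ℕ => (Real.log N)^((2:ℝ)+ε')/(N:ℝ))
    · filter_upwards [hlognat.eventually_ge_atTop 1] with N hL1
      have := Real.log_nonneg hL1
      positivity
    · filter_upwards [hlognat.eventually_ge_atTop 1, eventually_ge_atTop 1] with N hL1 hN1
      have hLpos : (0:ℝ) < Real.log N := by linarith
      have hNpos : (0:ℝ) ≤ (N:ℝ) := by positivity
      have hll : Real.log (Real.log N) ≤ Real.log N := by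
        have := Real.log_le_sub_one_of_pos hLpos
        linarith
      have h5 : (Real.log N)^((1:ℝ)+((1:ℝ)+ε'))
          = (Real.log N)^(1:ℝ) * (Real.log N)^((1:ℝ)+ε') := Real.rpow_add hLpos 1 _
      have key : Real.log (Real.log N) * (Real.log N)^((1:ℝ)+ε')
          ≤ (Real.log N)^((2:ℝ)+ε') := by
        rw [show (2:ℝ)+ε' = 1+((1:ℝ)+ε') by ring, h5, Real.rpow_one]
        exact mul_le_mul_of_nonneg_right hll (Real.rpow_nonneg hLpos.le _)
      calc Real.log (Real.log N) * ((Real.log N)^((1:ℝ)+ε')/(N:ℝ))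
          = (Real.log (Real.log N) * (Real.log N)^((1:ℝ)+ε'))/(N:ℝ) := by ring
      _ ≤ (Real.log N)^((2:ℝ)+ε')/(N:ℝ) := by gcongr
    · exact (qlogpow ((2:ℝ)+ε')).comp tendsto_natCast_atTop_atTop
  have T := (((h1.const_mul ((2:ℝ)^((1:ℝ)+ε)+(2/g)*2^((1:ℝ)+ε))).add
      (h2.const_mul 2)).add
      (h3.const_mul ((4*(3+ε)/g)*2^((1:ℝ)+ε)))).add
      (h4.const_mul ((4*(3+ε)/g)*2))
  norm_num at T
  exact T.congr (fun N => by ring)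

set_option maxHeartbeats 2000000 in
lemma main_bound (a : ℕ → ℝ) (ε g : ℝ) (hε : 0 < ε) (hg : 0 < g)
    (h : ∀ n m : ℕ, 1 < n → (n : ℝ) + (n : ℝ) / (Real.log n) ^ ((1 : ℝ) + ε) < (m : ℝ) →
      g < |a n - a m|)
    (N : ℕ) (hN3 : 3 ≤ N) (hL2 : 2 ≤ Real.log N)
    (hφ : ∀ m : ℕ, 2 ≤ m → m ≤ N →
      (m:ℝ)/(Real.log m)^((1:ℝ)+ε) ≤ 2^((1:ℝ)+ε)*(N:ℝ)/(Real.log N)^((1:ℝ)+ε)) :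
    scatterSum a 1 N ≤
      (2^((1:ℝ)+ε)/(Real.log N)^((1:ℝ)+ε) + 2/N) *
        (1 + (4*(3+ε)/g)*Real.log (Real.log N)) +
      (2/g)*(2^((1:ℝ)+ε)/(Real.log N)^((1:ℝ)+ε)) := by
  classical
  set e : ℝ := (1:ℝ)+ε with he
  set L : ℝ := Real.log N with hL
  set B : ℝ := 2^e*(N:ℝ)/L^e with hB
  set b : ℕ := ⌈B⌉₊ with hb
  set K : ℕ := ⌈L^((2:ℝ)+ε)⌉₊ with hK
  have hLpos : (0:ℝ) < L := by linarith
  have hNpos : (0:ℝ) < N := by positivity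
  have hN0 : (N:ℝ) ≠ 0 := hNpos.ne'
  have hLe : (0:ℝ) < L^e := Real.rpow_pos_of_pos hLpos e
  have hB0 : 0 ≤ B := by positivity
  have hbB : (b:ℝ) ≤ B + 1 := (Nat.ceil_lt_add_one hB0).le
  have hBb : B ≤ (b:ℝ) := Nat.le_ceil B
  have hL2e : (0:ℝ) < L^((2:ℝ)+ε) := Real.rpow_pos_of_pos hLpos _
  have hK1 : 1 ≤ K := Nat.one_le_iff_ne_zero.2 (by
    simp only [hK, ne_eq, Nat.ceil_eq_zero, not_le]; exact hL2e)
  have hKceil : L^((2:ℝ)+ε) ≤ (K:ℝ) := Nat.le_ceil _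
  have hLge1 : (1:ℝ) ≤ L := by linarith
  have hKle : (K:ℝ) ≤ L^((3:ℝ)+ε) := by
    have h1 : (K:ℝ) < L^((2:ℝ)+ε) + 1 := Nat.ceil_lt_add_one hL2e.le
    have h2 : L^((3:ℝ)+ε) = L^((2:ℝ)+ε) * L := by
      rw [← Real.rpow_add_one hLpos.ne' ((2:ℝ)+ε)]; ring_nf
    have h3 : (1:ℝ) ≤ L^((2:ℝ)+ε) := Real.one_le_rpow hLge1 (by positivity)
    nlinarith
  have hlogK : Real.log K ≤ (3+ε)*Real.log L := by
    calc Real.log K ≤ Real.log (L^((3:ℝ)+ε)) := by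
          apply Real.log_le_log (by exact_mod_cast hK1) hKle
    _ = ((3:ℝ)+ε) * Real.log L := Real.log_rpow hLpos _
  have hlogK0 : (0:ℝ) ≤ Real.log K := Real.log_natCast_nonneg K
  have hlogL0 : (0:ℝ) ≤ Real.log L := Real.log_nonneg hLge1
  -- notation for the distance-based quantities
  set φ : ℕ → ℝ := fun m => (m:ℝ)/(Real.log m)^e with hφdef
  -- gap lemma
  have hgap : ∀ m n : ℕ, 2 ≤ m → (m:ℝ) + φ m < (n:ℝ) → g < |a n - a m| := by
    intro m n h2 hf
    have := h m n (by exact_mod_cast h2) hf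
    rwa [abs_sub_comm] at this
  -- cluster lemma
  have hclus : ∀ m m' : ℕ, 2 ≤ m → m ≤ N → m < m' → |a m - a m'| ≤ g → m' ≤ m + b := by
    intro m m' h2 hmN hlt habs
    by_contra hc
    push_neg at hc
    have hfar : (m:ℝ) + φ m < (m':ℝ) := by
      have h1 : φ m ≤ B := hφ m h2 hmN
      have h2' : ((m + b : ℕ):ℝ) < (m':ℝ) := by exact_mod_cast hc
      push_cast at h2'
      linarith [hBb]
    rw [abs_sub_comm] at habs
    exact absurd (hgap m m' h2 hfar) (not_lt.2 habs)
  -- per-n bound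
  set R : ℝ := (B+2) + (2/g)*(2*(B+2)*Real.log K + B) with hR
  have hperN : ∀ n ∈ Finset.Icc 1 N, ∑ m ∈ Finset.Ico 1 n,
      (if a n = a m then 1 else min (|a n - a m| ^ (-(1:ℝ))) 1) ≤ R := by
    intro n hn
    rw [Finset.mem_Icc] at hn
    set T := Finset.Ico 1 n with hT
    set f : ℕ → ℝ := fun m => if a n = a m then 1 else min (|a n - a m| ^ (-(1:ℝ))) 1 with hf
    have hf1 : ∀ m, f m ≤ 1 := by
      intro m; simp only [hf]
      split
      · exact le_refl 1
      · exact min_le_right _ _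
    have hf0 : ∀ m, 0 ≤ f m := by
      intro m; simp only [hf]
      split
      · norm_num
      · exact le_min (Real.rpow_nonneg (abs_nonneg _) _) zero_le_one
    set P : ℕ → Prop := fun m => (m:ℝ) + φ m < (n:ℝ) ∧ 2 ≤ m with hP
    have hsplit : ∑ m ∈ T, f m
        = ∑ m ∈ T.filter P, f m + ∑ m ∈ T.filter (fun m => ¬ P m), f m :=
      (Finset.sum_filter_add_sum_filter_not T P f).symm
    -- close part
    have hclose : ∑ m ∈ T.filter (fun m => ¬ P m), f m ≤ (b:ℝ) + 1 := by
      have hsub : T.filter (fun m => ¬ P m) ⊆ Finset.Ico (n - b) n ∪ {1} := by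
        intro m hm
        rw [Finset.mem_filter, hT, Finset.mem_Ico] at hm
        obtain ⟨⟨hm1, hmn⟩, hnp⟩ := hm
        rcases Nat.lt_or_ge m 2 with hm2 | hm2
        · have : m = 1 := by omega
          simp [this]
        · have hnf : ¬ ((m:ℝ) + φ m < (n:ℝ)) := fun hc => hnp ⟨hc, hm2⟩
          push_neg at hnf
          have hφm : φ m ≤ B := hφ m hm2 (by omega)
          have : (n:ℝ) ≤ (m:ℝ) + (b:ℝ) := by linarith [hBb]
          have hnm : n ≤ m + b := by exact_mod_cast this
          simp only [Finset.mem_union, Finset.mem_Ico]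
          left; omega
      calc ∑ m ∈ T.filter (fun m => ¬ P m), f m
          ≤ ∑ m ∈ T.filter (fun m => ¬ P m), 1 := Finset.sum_le_sum (fun m _ => hf1 m)
        _ = ((T.filter (fun m => ¬ P m)).card : ℝ) := by simp
        _ ≤ ((Finset.Ico (n - b) n ∪ {1}).card : ℝ) := by
            exact_mod_cast Finset.card_le_card hsub
        _ ≤ (b:ℝ) + 1 := by
            have h1 : (Finset.Ico (n - b) n ∪ {1}).card ≤ (Finset.Ico (n - b) n).card + 1 := by
              simpa using Finset.card_union_le (Finset.Ico (n - b) n) {1}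
            have h2 : (Finset.Ico (n - b) n).card ≤ b := by
              rw [Nat.card_Ico]; omega
            exact_mod_cast (by omega : (Finset.Ico (n - b) n ∪ {1}).card ≤ b + 1)
    -- far part
    have hfarbd : ∑ m ∈ T.filter P, f m ≤ (2/g) * (2*((b:ℝ)+1)*Real.log K + B) := by
      set S := T.filter P with hSdef
      have hmemS : ∀ m ∈ S, 2 ≤ m ∧ m < n ∧ g < |a n - a m| := by
        intro m hm
        rw [hSdef, Finset.mem_filter, hT, Finset.mem_Ico] at hm
        exact ⟨hm.2.2, hm.1.2, hgap m n hm.2.2 hm.2.1⟩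
      set d : ℕ → ℝ := fun m => |a n - a m| with hd
      set κ : ℕ → ℕ := fun m => ⌊d m * 2 / g⌋₊ with hκ
      have hdpos : ∀ m ∈ S, 0 < d m := fun m hm => lt_trans hg (hmemS m hm).2.2
      have hκ2 : ∀ m ∈ S, 2 ≤ κ m := by
        intro m hm
        apply Nat.le_floor
        rw [le_div_iff₀ hg]
        push_cast
        nlinarith [(hmemS m hm).2.2]
      have hterm : ∀ m ∈ S, f m ≤ (2/g) * ((κ m : ℝ))⁻¹ := by
        intro m hm
        have hgd := (hmemS m hm).2.2
        have hd0 : 0 < d m := hdpos m hm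
        have hne : a n ≠ a m := by
          intro hc
          rw [hd] at hd0; simp only [hc] at hd0; simp at hd0
        have hκpos : (0:ℝ) < (κ m : ℝ) := by
          exact_mod_cast lt_of_lt_of_le two_pos (hκ2 m hm)
        have hκle : ((κ m : ℕ):ℝ) ≤ d m * 2 / g := Nat.floor_le (by positivity)
        have key : ((κ m:ℕ):ℝ) * g ≤ d m * 2 := (le_div_iff₀ hg).mp hκle
        have h1 : f m ≤ (d m)⁻¹ := by
          simp only [hf, if_neg hne]
          rw [show |a n - a m| = d m from rfl]
          calc min (d m ^ (-(1:ℝ))) 1 ≤ d m ^ (-(1:ℝ)) := min_le_left _ _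
          _ = (d m)⁻¹ := Real.rpow_neg_one _
        refine h1.trans ?_
        have heq : (2/g) * ((κ m:ℝ))⁻¹ = (g * (κ m:ℝ) / 2)⁻¹ := by
          field_simp
        rw [heq]
        apply inv_anti₀ (by positivity)
        linarith
      have step1 : ∑ m ∈ S, f m ≤ (2/g) * ∑ m ∈ S, ((κ m:ℝ))⁻¹ := by
        rw [Finset.mul_sum]
        exact Finset.sum_le_sum hterm
      have hsplitκ : ∑ m ∈ S, ((κ m:ℝ))⁻¹
          = ∑ m ∈ S.filter (fun m => κ m ≤ K), ((κ m:ℝ))⁻¹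
            + ∑ m ∈ S.filter (fun m => ¬ κ m ≤ K), ((κ m:ℝ))⁻¹ :=
        (Finset.sum_filter_add_sum_filter_not S _ _).symm
      have h2e : (1:ℝ) ≤ 2^e := Real.one_le_rpow one_le_two (by positivity)
      have hbig : ∑ m ∈ S.filter (fun m => ¬ κ m ≤ K), ((κ m:ℝ))⁻¹ ≤ B := by
        have hcardN : ((S.filter (fun m => ¬ κ m ≤ K)).card : ℝ) ≤ (N:ℝ) := by
          have : (S.filter (fun m => ¬ κ m ≤ K)).card ≤ N := by
            calc (S.filter (fun m => ¬ κ m ≤ K)).card ≤ S.card := Finset.card_filter_le _ _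
            _ ≤ T.card := by rw [hSdef]; exact Finset.card_filter_le _ _
            _ ≤ N := by rw [hT, Nat.card_Ico]; omega
          exact_mod_cast this
        have hle : ∀ m ∈ S.filter (fun m => ¬ κ m ≤ K),
            ((κ m:ℝ))⁻¹ ≤ (L^((2:ℝ)+ε))⁻¹ := by
          intro m hm
          rw [Finset.mem_filter] at hm
          have hK1' : K + 1 ≤ κ m := by omega
          have h1 : L^((2:ℝ)+ε) ≤ (κ m : ℝ) := by
            calc L^((2:ℝ)+ε) ≤ (K:ℝ) := hKceil
            _ ≤ (κ m : ℝ) := by exact_mod_cast (by omega : K ≤ κ m)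
          exact inv_anti₀ hL2e h1
        calc ∑ m ∈ S.filter (fun m => ¬ κ m ≤ K), ((κ m:ℝ))⁻¹
            ≤ (S.filter (fun m => ¬ κ m ≤ K)).card • (L^((2:ℝ)+ε))⁻¹ :=
              Finset.sum_le_card_nsmul _ _ _ hle
        _ = ((S.filter (fun m => ¬ κ m ≤ K)).card : ℝ) * (L^((2:ℝ)+ε))⁻¹ := nsmul_eq_mul _ _
        _ ≤ (N:ℝ) * (L^((2:ℝ)+ε))⁻¹ := by gcongr
        _ ≤ (N:ℝ) * (L^e)⁻¹ := by
            have hpow : L^e ≤ L^((2:ℝ)+ε) :=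
              Real.rpow_le_rpow_of_exponent_le hLge1 (by rw [he]; linarith)
            exact mul_le_mul_of_nonneg_left (inv_anti₀ hLe hpow) (by positivity)
        _ ≤ B := by
            rw [hB, ← div_eq_mul_inv]
            gcongr
            nlinarith
      have hsmall : ∑ m ∈ S.filter (fun m => κ m ≤ K), ((κ m:ℝ))⁻¹
          ≤ 2*((b:ℝ)+1)*Real.log K := by
        set S1 := S.filter (fun m => κ m ≤ K) with hS1
        have hmaps : ∀ m ∈ S1, κ m ∈ Finset.Icc 2 K := by
          intro m hm
          rw [hS1, Finset.mem_filter] at hm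
          exact Finset.mem_Icc.2 ⟨hκ2 m hm.1, hm.2⟩
        rw [← Finset.sum_fiberwise_of_maps_to hmaps fun m => ((κ m:ℝ))⁻¹]
        have hinner : ∀ j ∈ Finset.Icc 2 K,
            ∑ m ∈ S1.filter (fun m => κ m = j), ((κ m:ℝ))⁻¹ ≤ (2*((b:ℝ)+1)) * (j:ℝ)⁻¹ := by
          intro j hj
          rw [Finset.mem_Icc] at hj
          set F := S1.filter (fun m => κ m = j) with hF
          have hFmem : ∀ m ∈ F, 2 ≤ m ∧ m ≤ N ∧ (j:ℝ) * g / 2 ≤ d m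
              ∧ d m < ((j:ℝ)+1) * g / 2 := by
            intro m hm
            rw [hF, Finset.mem_filter, hS1, Finset.mem_filter] at hm
            obtain ⟨⟨hmS, _⟩, hκm⟩ := hm
            obtain ⟨h2m, hmn, _⟩ := hmemS m hmS
            have hfl := (Nat.floor_eq_iff (by positivity : (0:ℝ) ≤ d m * 2 / g)).mp hκm
            refine ⟨h2m, by omega, ?_, ?_⟩
            · have h1 := (le_div_iff₀ hg).mp hfl.1
              linarith
            · have h2 := (div_lt_iff₀ hg).mp hfl.2
              push_cast at h2 ⊢
              linarith
          have hval : ∀ m ∈ F, ∀ m' ∈ F, (a n < a m ↔ a n < a m') → |a m - a m'| ≤ g := by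
            intro m hm m' hm' hsign
            obtain ⟨_, _, hlo, hhi⟩ := hFmem m hm
            obtain ⟨_, _, hlo', hhi'⟩ := hFmem m' hm'
            have hdd : |d m - d m'| ≤ g := by
              rw [abs_le]
              constructor <;> nlinarith
            by_cases hc : a n < a m
            · have hc' : a n < a m' := hsign.mp hc
              have e1 : d m = a m - a n := by
                show |a n - a m| = _
                rw [abs_of_neg (by linarith : a n - a m < 0)]; ring
              have e2 : d m' = a m' - a n := by
                show |a n - a m'| = _
                rw [abs_of_neg (by linarith : a n - a m' < 0)]; ring
              calc |a m - a m'| = |d m - d m'| := by rw [e1, e2]; ring_nf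
              _ ≤ g := hdd
            · have hc' : ¬ a n < a m' := fun hx => hc (hsign.mpr hx)
              push_neg at hc hc'
              have e1 : d m = a n - a m := by
                show |a n - a m| = _
                exact abs_of_nonneg (by linarith)
              have e2 : d m' = a n - a m' := by
                show |a n - a m'| = _
                exact abs_of_nonneg (by linarith)
              calc |a m - a m'| = |d m' - d m| := by rw [e1, e2]; ring_nf
              _ = |d m - d m'| := abs_sub_comm _ _
              _ ≤ g := hdd
          have hcard1 : (F.filter (fun m => a n < a m)).card ≤ b + 1 := by
            apply card_le_of_gap
            intro m hm m' hm' hlt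
            rw [Finset.mem_filter] at hm hm'
            exact hclus m m' (hFmem m hm.1).1 (hFmem m hm.1).2.1 hlt
              (hval m hm.1 m' hm'.1 (iff_of_true hm.2 hm'.2))
          have hcard2 : (F.filter (fun m => ¬ a n < a m)).card ≤ b + 1 := by
            apply card_le_of_gap
            intro m hm m' hm' hlt
            rw [Finset.mem_filter] at hm hm'
            exact hclus m m' (hFmem m hm.1).1 (hFmem m hm.1).2.1 hlt
              (hval m hm.1 m' hm'.1 (iff_of_false hm.2 hm'.2))
          have hsplitF := Finset.card_filter_add_card_filter_not
            (s := F) (p := fun m => a n < a m)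
          have hcardF : (F.card : ℝ) ≤ 2*((b:ℝ)+1) := by
            have : F.card ≤ 2*(b+1) := by omega
            push_cast
            exact_mod_cast this
          have hconst : ∀ m ∈ F, ((κ m:ℝ))⁻¹ = (j:ℝ)⁻¹ := by
            intro m hm
            rw [(Finset.mem_filter.mp hm).2]
          rw [Finset.sum_congr rfl hconst, Finset.sum_const, nsmul_eq_mul]
          exact mul_le_mul_of_nonneg_right hcardF (by positivity)
        calc ∑ j ∈ Finset.Icc 2 K, ∑ m ∈ S1.filter (fun m => κ m = j), ((κ m:ℝ))⁻¹
            ≤ ∑ j ∈ Finset.Icc 2 K, (2*((b:ℝ)+1)) * (j:ℝ)⁻¹ := Finset.sum_le_sum hinner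
        _ = 2*((b:ℝ)+1) * ∑ j ∈ Finset.Icc 2 K, (j:ℝ)⁻¹ := by rw [Finset.mul_sum]
        _ ≤ 2*((b:ℝ)+1) * Real.log K :=
            mul_le_mul_of_nonneg_left (harm_le_log K) (by positivity)
      calc ∑ m ∈ S, f m ≤ (2/g) * ∑ m ∈ S, ((κ m:ℝ))⁻¹ := step1
      _ = (2/g) * (∑ m ∈ S.filter (fun m => κ m ≤ K), ((κ m:ℝ))⁻¹
            + ∑ m ∈ S.filter (fun m => ¬ κ m ≤ K), ((κ m:ℝ))⁻¹) := by rw [hsplitκ]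
      _ ≤ (2/g) * (2*((b:ℝ)+1)*Real.log K + B) :=
          mul_le_mul_of_nonneg_left (add_le_add hsmall hbig) (by positivity)
    -- combine per-n
    rw [hsplit]
    have hGnn : (0:ℝ) ≤ 2/g := by positivity
    have hb1 : (b:ℝ) + 1 ≤ B + 2 := by linarith
    have haux : (2/g) * (2*((b:ℝ)+1)*Real.log K + B)
        ≤ (2/g) * (2*(B+2)*Real.log K + B) := by
      apply mul_le_mul_of_nonneg_left _ hGnn
      nlinarith
    rw [hR]
    linarith
  -- assemble
  have hsum : ∑ n ∈ Finset.Icc 1 N, ∑ m ∈ Finset.Ico 1 n,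
      (if a n = a m then 1 else min (|a n - a m| ^ (-(1:ℝ))) 1) ≤ (N:ℝ) * R := by
    calc ∑ n ∈ Finset.Icc 1 N, ∑ m ∈ Finset.Ico 1 n,
        (if a n = a m then 1 else min (|a n - a m| ^ (-(1:ℝ))) 1)
        ≤ (Finset.Icc 1 N).card • R := Finset.sum_le_card_nsmul _ _ _ hperN
    _ = ((Finset.Icc 1 N).card : ℝ) * R := nsmul_eq_mul _ _
    _ = (N:ℝ) * R := by rw [Nat.card_Icc]; norm_num
  have hscat : scatterSum a 1 N ≤ R / N := by
    rw [scatterSum]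
    calc ((N:ℝ)^2)⁻¹ * ∑ n ∈ Finset.Icc 1 N, ∑ m ∈ Finset.Ico 1 n,
        (if a n = a m then 1 else min (|a n - a m| ^ (-(1:ℝ))) 1)
        ≤ ((N:ℝ)^2)⁻¹ * ((N:ℝ) * R) := by
          apply mul_le_mul_of_nonneg_left hsum (by positivity)
    _ = R / N := by field_simp
  refine hscat.trans ?_
  have hRR : R ≤ (B+2) + (2/g)*(2*(B+2)*((3+ε)*Real.log L) + B) := by
    rw [hR]
    have : 2*(B+2)*Real.log K ≤ 2*(B+2)*((3+ε)*Real.log L) := by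
      apply mul_le_mul_of_nonneg_left hlogK (by positivity)
    have hGnn : (0:ℝ) ≤ 2/g := by positivity
    nlinarith
  calc R / N ≤ ((B+2) + (2/g)*(2*(B+2)*((3+ε)*Real.log L) + B)) / N := by gcongr
  _ = (2^e/L^e + 2/(N:ℝ)) * (1 + (4*(3+ε)/g)*Real.log L) + (2/g)*(2^e/L^e) := by
      rw [hB]
      field_simp
      ring


theorem stmt7 (a : ℕ → ℝ) (ε g : ℝ) (hε : 0 < ε) (hg : 0 < g)
    (h : ∀ n m : ℕ, 1 < n → (n : ℝ) + (n : ℝ) / (Real.log n) ^ ((1 : ℝ) + ε) < (m : ℝ) →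
      g < |a n - a m|) :
    (∀ ε' : ℝ, 0 < ε' → ε' < ε →
      ∀ᶠ N : ℕ in atTop, scatterSum a 1 N ≤ ((Real.log N) ^ ((1 : ℝ) + ε'))⁻¹) ∧
    IsDeltaScattered a 1 := by
  have main : ∀ ε' : ℝ, 0 < ε' → ε' < ε →
      ∀ᶠ N : ℕ in atTop, scatterSum a 1 N ≤ ((Real.log N) ^ ((1 : ℝ) + ε'))⁻¹ := by
    intro ε' hε'0 hε'ε
    filter_upwards [eventually_ge_atTop 3, hlognat.eventually_ge_atTop 2, ev_sq ε hε,
      (psi_tendsto ε g ε' hε'0 hε'ε hg).eventually_le_const one_pos,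
      hlognat.eventually_gt_atTop 0] with N h3 hL2 hsq hψ hLpos
    have hφ := phi_bound ε hε N h3 hsq
    have hmain := main_bound a ε g hε hg h N h3 hL2 hφ
    refine hmain.trans ?_
    have hX : (0:ℝ) < (Real.log N)^((1:ℝ)+ε') := Real.rpow_pos_of_pos hLpos _
    rw [show ((Real.log N)^((1:ℝ)+ε'))⁻¹ = 1/((Real.log N)^((1:ℝ)+ε')) by rw [one_div],
      le_div_iff₀ hX]
    exact hψ
  exact ⟨main, ε/2, half_pos hε, main (ε/2) (half_pos hε) (by linarith)⟩
end

section
/- For every ε > 0 the sequence a(n) = (log n)^{2+ε} satisfies Weyl's growth condition: there exist ε', g > 0 such that |a(m) − a(n)| > g whenever m > n + n/(log n)^{1+ε'}. -/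
open Filter Set
open scoped Topology

theorem stmt8 (ε : ℝ) (hε : 0 < ε) :
    ∃ ε' > (0 : ℝ), ∃ g > (0 : ℝ), ∀ n m : ℕ, 1 < n →
      (n : ℝ) + (n : ℝ) / (Real.log n) ^ ((1 : ℝ) + ε') < (m : ℝ) →
      g < |(Real.log m) ^ ((2 : ℝ) + ε) - (Real.log n) ^ ((2 : ℝ) + ε)| := by
  have log2pos : (0:ℝ) < Real.log 2 := Real.log_pos (by norm_num)
  have log24 : Real.log 2 < Real.log 4 := Real.log_lt_log (by norm_num) (by norm_num)
  have hp1 : (1:ℝ) ≤ 2 + ε := by linarith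
  have hdiffpos : 0 < Real.log 4 ^ ((2:ℝ)+ε) - Real.log 2 ^ ((2:ℝ)+ε) := by
    have := Real.rpow_lt_rpow log2pos.le log24 (by linarith : (0:ℝ) < 2 + ε)
    linarith
  refine ⟨ε, hε, min 1 (Real.log 4 ^ ((2:ℝ)+ε) - Real.log 2 ^ ((2:ℝ)+ε)),
    lt_min one_pos hdiffpos, ?_⟩
  intro n m hn hm
  rcases eq_or_lt_of_le (Nat.succ_le_of_lt hn) with h2 | h3
  · -- n = 2
    have hn2 : (n:ℝ) = 2 := by rw [← h2]; norm_num
    rw [hn2] at hm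
    have hple : Real.log 2 ^ ((1:ℝ)+ε) ≤ 1 :=
      Real.rpow_le_one log2pos.le (by linarith [Real.log_two_lt_d9]) (by linarith)
    have hppos : 0 < Real.log 2 ^ ((1:ℝ)+ε) := Real.rpow_pos_of_pos log2pos _
    have h2le : (2:ℝ) ≤ 2 / Real.log 2 ^ ((1:ℝ)+ε) := by
      rw [le_div_iff₀ hppos]; linarith
    have hm4 : (4:ℝ) < m := by linarith
    have hlm : Real.log 4 < Real.log m := Real.log_lt_log (by norm_num) hm4
    have hkey : Real.log 4 ^ ((2:ℝ)+ε) < Real.log m ^ ((2:ℝ)+ε) :=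
      Real.rpow_lt_rpow (Real.log_nonneg (by norm_num)) hlm (by linarith)
    have h2m : Real.log 2 ^ ((2:ℝ)+ε) < Real.log m ^ ((2:ℝ)+ε) := by
      have := Real.rpow_lt_rpow log2pos.le (log24.trans hlm) (by linarith : (0:ℝ) < 2+ε)
      linarith
    rw [hn2, abs_of_pos (by linarith)]
    calc min 1 (Real.log 4 ^ ((2:ℝ)+ε) - Real.log 2 ^ ((2:ℝ)+ε))
        ≤ Real.log 4 ^ ((2:ℝ)+ε) - Real.log 2 ^ ((2:ℝ)+ε) := min_le_right _ _
      _ < Real.log m ^ ((2:ℝ)+ε) - Real.log 2 ^ ((2:ℝ)+ε) := by linarith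
  · -- n ≥ 3
    set L := Real.log n with hLdef
    have hn3 : (3:ℝ) ≤ n := by exact_mod_cast h3
    have hnpos : (0:ℝ) < n := by linarith
    have hL1 : 1 < L := by
      rw [hLdef, Real.lt_log_iff_exp_lt hnpos]
      calc Real.exp 1 < 2.7182818286 := Real.exp_one_lt_d9
        _ < 3 := by norm_num
        _ ≤ n := hn3
    have hLpos : 0 < L := by linarith
    set P := L ^ ((1:ℝ)+ε) with hPdef
    have hP1 : 1 < P := Real.one_lt_rpow_iff_of_pos hLpos |>.2 (Or.inl ⟨hL1, by linarith⟩)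
    have hPpos : 0 < P := by linarith
    set t := P⁻¹ with htdef
    have htpos : 0 < t := inv_pos.2 hPpos
    have ht1 : t ≤ 1 := by
      rw [htdef, inv_le_one_iff₀]; right; linarith
    -- m > n * (1 + t)
    have hmnt : (n:ℝ) * (1 + t) < m := by
      have : (n:ℝ) / P = n * t := by rw [htdef, div_eq_mul_inv]
      calc (n:ℝ) * (1 + t) = n + n / P := by rw [this]; ring
        _ < m := hm
    have hmpos : (0:ℝ) < m := lt_trans (by positivity) hmnt
    have hlogm : L + Real.log (1 + t) < Real.log m := by
      have := Real.log_lt_log (by positivity) hmnt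
      rwa [Real.log_mul (by positivity) (by positivity)] at this
    set M := Real.log m with hMdef
    have hlog1t : t / 2 ≤ Real.log (1 + t) := by
      have h1 : Real.log (1+t) ≥ 1 - (1+t)⁻¹ :=
        Real.one_sub_inv_le_log_of_pos (by linarith)
      have h2 : 1 - (1+t)⁻¹ = t / (1+t) := by field_simp; ring
      have h3 : t / (1+t) ≥ t / 2 := by
        apply div_le_div_of_nonneg_left htpos.le (by linarith) (by linarith)
      linarith [h2 ▸ h1]
    have hML : t / 2 < M - L := by linarith
    have hMLpos : 0 < M - L := lt_trans (by positivity) hML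
    -- Bernoulli
    set s := (M - L) / L with hsdef
    have hspos : 0 < s := div_pos hMLpos hLpos
    have hbern : 1 + (2+ε) * s ≤ (1 + s) ^ ((2:ℝ)+ε) :=
      one_add_mul_self_le_rpow_one_add (by linarith) hp1
    have hMeq : M = L * (1 + s) := by
      rw [hsdef]; field_simp; ring
    have hMp : L ^ ((2:ℝ)+ε) * (1 + (2+ε) * s) ≤ M ^ ((2:ℝ)+ε) := by
      rw [hMeq, Real.mul_rpow hLpos.le (by linarith)]
      exact mul_le_mul_of_nonneg_left hbern (Real.rpow_nonneg hLpos.le _)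
    have hLp : L ^ ((2:ℝ)+ε) * s = P * (M - L) := by
      rw [hsdef, hPdef]
      rw [show (1:ℝ)+ε = (2+ε) - 1 by ring, Real.rpow_sub_one hLpos.ne']
      field_simp
    have hPt : P * (M - L) > P * (t/2) := by
      exact mul_lt_mul_of_pos_left hML hPpos
    have hPt2 : P * (t/2) = 1/2 := by
      rw [htdef]; field_simp
    -- conclude
    have hkey : M ^ ((2:ℝ)+ε) - L ^ ((2:ℝ)+ε) > 1 := by
      have h1 : M ^ ((2:ℝ)+ε) ≥ L ^ ((2:ℝ)+ε) + (2+ε) * (L ^ ((2:ℝ)+ε) * s) := by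
        nlinarith [Real.rpow_pos_of_pos hLpos ((2:ℝ)+ε)]
      have h2 : (2+ε) * (L ^ ((2:ℝ)+ε) * s) > (2+ε) * (1/2) := by
        rw [hLp]
        apply mul_lt_mul_of_pos_left _ (by linarith : (0:ℝ) < 2+ε)
        rw [← hPt2]; exact hPt
      nlinarith
    rw [abs_of_pos (by linarith)]
    calc min 1 (Real.log 4 ^ ((2:ℝ)+ε) - Real.log 2 ^ ((2:ℝ)+ε)) ≤ 1 := min_le_left _ _
      _ < M ^ ((2:ℝ)+ε) - L ^ ((2:ℝ)+ε) := hkey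
end

section
/- Let f : ℝ → ℝ be a non-constant real analytic function. Then the pushforward of Lebesgue measure under f is absolutely continuous with respect to Lebesgue measure; equivalently, for every Borel set A ⊆ ℝ of Lebesgue measure zero, the preimage f^{−1}(A) has Lebesgue measure zero. -/
open MeasureTheory

/-- Local key lemma: if `f` is differentiable with nonvanishing derivative and injective on a
measurable set `s`, then the part of `f ⁻¹' A` inside `s` is null whenever `A` is null. -/
lemma stmt14_local (f : ℝ → ℝ) (hfm : Measurable f) {s A : Set ℝ} (hs : MeasurableSet s)
    (hd : ∀ x ∈ s, HasDerivWithinAt f (deriv f x) s x) (hinj : Set.InjOn f s)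
    (hne : ∀ x ∈ s, deriv f x ≠ 0) (hA : MeasurableSet A) (hA0 : volume A = 0) :
    volume (s ∩ f ⁻¹' A) = 0 := by
  have key := lintegral_image_eq_lintegral_abs_det_fderiv_mul volume hs
    (fun x hx => (hd x hx).hasFDerivWithinAt) hinj (A.indicator 1)
  simp only [ContinuousLinearMap.det_toSpanSingleton] at key
  have hL : (∫⁻ y in f '' s, A.indicator 1 y) = 0 := by
    rw [lintegral_indicator_one hA, Measure.restrict_apply hA]
    exact measure_mono_null Set.inter_subset_left hA0
  rw [hL] at key
  have hFmeas : Measurable fun x => ENNReal.ofReal |deriv f x| * A.indicator 1 (f x) := by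
    have h1 : Measurable (deriv f) := measurable_deriv f
    exact (h1.abs.ennreal_ofReal).mul ((measurable_one.indicator hA).comp hfm)
  have hae := (setLIntegral_eq_zero_iff hs hFmeas).1 key.symm
  refine measure_mono_null ?_ (ae_iff.1 hae)
  rintro x ⟨hxs, hxA⟩
  simp only [Set.mem_setOf_eq, Classical.not_imp]
  refine ⟨hxs, ?_⟩
  have hfA : f x ∈ A := hxA
  rw [Set.indicator_of_mem hfA, Pi.one_apply, mul_one, ENNReal.ofReal_eq_zero]
  exact not_le.2 (abs_pos.2 (hne x hxs))

theorem stmt14 (f : ℝ → ℝ) (hf : ∀ x : ℝ, AnalyticAt ℝ f x)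
    (hnc : ∃ x y : ℝ, f x ≠ f y) :
    ∀ A : Set ℝ, MeasurableSet A → volume A = 0 → volume (f ⁻¹' A) = 0 := by
  intro A hA hA0
  have hfd : Differentiable ℝ f := fun x => (hf x).differentiableAt
  have hfm : Measurable f := hfd.continuous.measurable
  set g : ℝ → ℝ := deriv f with hg_def
  have hg : ∀ x : ℝ, AnalyticAt ℝ g x := by
    have : AnalyticOnNhd ℝ f Set.univ := fun x _ => hf x
    intro x
    exact this.deriv x (Set.mem_univ x)
  -- g is not identically zero
  have hg0 : ∃ z : ℝ, g z ≠ 0 := by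
    by_contra h
    push_neg at h
    obtain ⟨x, y, hxy⟩ := hnc
    exact hxy (is_const_of_deriv_eq_zero hfd h x y)
  -- zeros of g are isolated
  have hiso : ∀ x : ℝ, ∀ᶠ y in nhdsWithin x {x}ᶜ, g y ≠ 0 := by
    intro x
    rcases (hg x).eventually_eq_zero_or_eventually_ne_zero with h | h
    · exfalso
      obtain ⟨z, hz⟩ := hg0
      have : Set.EqOn g 0 Set.univ := by
        refine AnalyticOnNhd.eqOn_zero_of_preconnected_of_eventuallyEq_zero
          (fun y _ => hg y) isPreconnected_univ (Set.mem_univ x) ?_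
        exact h
      exact hz (this (Set.mem_univ z))
    · exact h
  -- the zero set Z of g is countable, hence null
  set Z : Set ℝ := {x | g x = 0} with hZ_def
  have hZc : Z.Countable := by
    have hu : ∀ x : ℝ, ∃ u : Set ℝ, u ∈ nhds x ∧ Z ∩ u ⊆ {x} := by
      intro x
      have h := eventually_nhdsWithin_iff.1 (hiso x)
      refine ⟨{y | y ∈ ({x}ᶜ : Set ℝ) → g y ≠ 0}, h, ?_⟩
      rintro y ⟨hyZ, hyu⟩
      by_contra hyx
      exact hyu hyx hyZ
    choose u hu1 hu2 using hu
    obtain ⟨t, hts, htc, hcov⟩ := TopologicalSpace.countable_cover_nhdsWithin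
      (f := u) (s := Z) (fun x _ => nhdsWithin_le_nhds (hu1 x))
    refine Set.Countable.mono ?_ htc
    intro z hz
    obtain ⟨x, hxt, hzu⟩ := Set.mem_iUnion₂.1 (hcov hz)
    have : z ∈ ({x} : Set ℝ) := hu2 x ⟨hz, hzu⟩
    rw [Set.mem_singleton_iff] at this
    rwa [this]
  have hZ0 : volume Z = 0 := hZc.measure_zero _
  -- the part of the preimage off Z is locally null
  have hS0 : volume (f ⁻¹' A \ Z) = 0 := by
    set S : Set ℝ := f ⁻¹' A \ Z with hS_def
    refine measure_null_of_locally_null S ?_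
    intro x hx
    have hgx : g x ≠ 0 := hx.2
    -- find an interval around x on which g has constant sign
    have hsign : ∃ δ : ℝ, 0 < δ ∧
        ((∀ y ∈ Set.Ioo (x - δ) (x + δ), 0 < g y) ∨
         (∀ y ∈ Set.Ioo (x - δ) (x + δ), g y < 0)) := by
      rcases lt_or_gt_of_ne hgx with hneg | hpos
      · have hev : ∀ᶠ y in nhds x, g y < 0 :=
          (hg x).continuousAt.eventually (eventually_lt_nhds hneg)
        obtain ⟨δ, hδ, hδ'⟩ := Metric.eventually_nhds_iff.1 hev
        refine ⟨δ, hδ, Or.inr fun y hy => hδ' ?_⟩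
        rw [Real.dist_eq, abs_lt]
        constructor <;> simp at hy ⊢ <;> linarith [hy.1, hy.2]
      · have hev : ∀ᶠ y in nhds x, 0 < g y :=
          (hg x).continuousAt.eventually (eventually_gt_nhds hpos)
        obtain ⟨δ, hδ, hδ'⟩ := Metric.eventually_nhds_iff.1 hev
        refine ⟨δ, hδ, Or.inl fun y hy => hδ' ?_⟩
        rw [Real.dist_eq, abs_lt]
        constructor <;> simp at hy ⊢ <;> linarith [hy.1, hy.2]
    obtain ⟨δ, hδ, hsign⟩ := hsign
    set I : Set ℝ := Set.Ioo (x - δ) (x + δ) with hI_def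
    have hxI : x ∈ I := by
      constructor <;> simp <;> linarith
    have hIne : ∀ y ∈ I, deriv f y ≠ 0 := by
      rcases hsign with h | h
      · exact fun y hy => ne_of_gt (h y hy)
      · exact fun y hy => ne_of_lt (h y hy)
    have hinj : Set.InjOn f I := by
      rcases hsign with h | h
      · exact (strictMonoOn_of_deriv_pos (convex_Ioo _ _) hfd.continuous.continuousOn
          (fun y hy => h y (by rwa [interior_Ioo] at hy))).injOn
      · exact (strictAntiOn_of_deriv_neg (convex_Ioo _ _) hfd.continuous.continuousOn
          (fun y hy => h y (by rwa [interior_Ioo] at hy))).injOn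
    have hloc := stmt14_local f hfm measurableSet_Ioo
      (fun y _ => (hfd y).hasDerivAt.hasDerivWithinAt) hinj hIne hA hA0
    refine ⟨S ∩ I, ?_, ?_⟩
    · exact inter_mem_nhdsWithin S (Ioo_mem_nhds hxI.1 hxI.2)
    · refine measure_mono_null ?_ hloc
      rintro y ⟨hyS, hyI⟩
      exact ⟨hyI, hyS.1⟩
  -- combine
  have hsub : f ⁻¹' A ⊆ Z ∪ (f ⁻¹' A \ Z) := by
    intro y hy
    by_cases h : y ∈ Z
    · exact Or.inl h
    · exact Or.inr ⟨hy, h⟩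
  refine measure_mono_null hsub ?_
  refine le_antisymm ?_ zero_le
  calc volume (Z ∪ (f ⁻¹' A \ Z)) ≤ volume Z + volume (f ⁻¹' A \ Z) := measure_union_le _ _
    _ = 0 := by rw [hZ0, hS0, add_zero]
end
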